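/- arXiv:2509.14176 — 7 statements merged into one kernel-verified Lean document; each statement's English description precedes it below -/
import Mathlib

section
/- Let z_1,...,z_d be nonzero elements of a field and let 1 ≤ m ≤ d. For any integer n with 0 ≤ n ≤ m: e_n(1/z_1,...,1/z_d) · ∏_{i=1}^m z_i = ∑_{i=0}^{n} e_{m-n+i}(z_1,...,z_m) · e_i(1/z_{m+1},...,1/z_d). -/
/-- Elementary symmetric polynomial `e_k(t 0, ..., t (r-1))`. -/
def esymP {R : Type*} [CommRing R] {r : ℕ} (t : Fin r → R) (k : ℕ) : R :=
  ∑ s ∈ Finset.univ.powersetCard k, ∏ i ∈ s, t i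

open Finset in
lemma esymP_refl_aux {F : Type*} [Field F] {ι : Type*} [DecidableEq ι] (u : Finset ι)
    (f : ι → F) (hf : ∀ i ∈ u, f i ≠ 0) (j : ℕ) (hj : j ≤ u.card) :
    (∑ s ∈ u.powersetCard j, ∏ i ∈ s, (f i)⁻¹) * ∏ i ∈ u, f i
      = ∑ s ∈ u.powersetCard (u.card - j), ∏ i ∈ s, f i := by
  rw [Finset.sum_mul]
  refine Finset.sum_nbij' (fun s => u \ s) (fun s => u \ s) ?_ ?_ ?_ ?_ ?_
  · intro s hs
    rw [mem_powersetCard] at hs ⊢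
    exact ⟨sdiff_subset, by rw [card_sdiff_of_subset hs.1, hs.2]⟩
  · intro s hs
    rw [mem_powersetCard] at hs ⊢
    refine ⟨sdiff_subset, ?_⟩
    rw [card_sdiff_of_subset hs.1, hs.2]
    omega
  · intro s hs
    rw [mem_powersetCard] at hs
    exact Finset.sdiff_sdiff_eq_self hs.1
  · intro s hs
    rw [mem_powersetCard] at hs
    exact Finset.sdiff_sdiff_eq_self hs.1
  · intro s hs
    rw [mem_powersetCard] at hs
    have hprod : ∏ i ∈ u, f i = (∏ i ∈ u \ s, f i) * ∏ i ∈ s, f i :=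
      (Finset.prod_sdiff hs.1).symm
    have hne : (∏ i ∈ s, f i) ≠ 0 :=
      Finset.prod_ne_zero_iff.2 fun i hi => hf i (hs.1 hi)
    rw [hprod, Finset.prod_inv_distrib]
    field_simp

open Finset in
lemma esymP_split_aux {R : Type*} [CommRing R] {ι : Type*} [DecidableEq ι] (u v : Finset ι)
    (huv : Disjoint u v) (f : ι → R) (n : ℕ) :
    ∑ s ∈ (u ∪ v).powersetCard n, ∏ i ∈ s, f i
      = ∑ j ∈ Finset.range (n + 1),
          (∑ s ∈ u.powersetCard j, ∏ i ∈ s, f i) *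
            (∑ s ∈ v.powersetCard (n - j), ∏ i ∈ s, f i) := by
  have key : ∀ j, (∑ s ∈ u.powersetCard j, ∏ i ∈ s, f i) *
      (∑ s ∈ v.powersetCard (n - j), ∏ i ∈ s, f i)
      = ∑ p ∈ (u.powersetCard j) ×ˢ (v.powersetCard (n - j)), ∏ i ∈ p.1 ∪ p.2, f i := by
    intro j
    rw [Finset.sum_mul_sum, Finset.sum_product]
    refine Finset.sum_congr rfl fun s1 hs1 => Finset.sum_congr rfl fun s2 hs2 => ?_
    rw [mem_powersetCard] at hs1 hs2
    exact (Finset.prod_union (huv.mono hs1.1 hs2.1)).symm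
  have main : ∑ s ∈ (u ∪ v).powersetCard n, ∏ i ∈ s, f i
      = ∑ p ∈ ((Finset.range (n + 1)).sigma
          fun j => (u.powersetCard j) ×ˢ (v.powersetCard (n - j))),
            ∏ i ∈ p.2.1 ∪ p.2.2, f i := by
    refine Finset.sum_nbij'
        (fun s => (⟨(s ∩ u).card, (s ∩ u, s ∩ v)⟩ : (_ : ℕ) × Finset ι × Finset ι))
        (fun p => p.2.1 ∪ p.2.2) ?_ ?_ ?_ ?_ ?_
    · intro s hs
      rw [mem_powersetCard] at hs
      have hsplit : (s ∩ u) ∪ (s ∩ v) = s := by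
        rw [← Finset.inter_union_distrib_left]
        exact Finset.inter_eq_left.2 hs.1
      have hdis : Disjoint (s ∩ u) (s ∩ v) :=
        huv.mono inter_subset_right inter_subset_right
      have hcard : (s ∩ u).card + (s ∩ v).card = n := by
        rw [← Finset.card_union_of_disjoint hdis, hsplit, hs.2]
      exact Finset.mem_sigma.2 ⟨Finset.mem_range.2 (show (s ∩ u).card < n + 1 by omega),
        Finset.mem_product.2
        ⟨Finset.mem_powersetCard.2 ⟨inter_subset_right, rfl⟩,
          Finset.mem_powersetCard.2 ⟨inter_subset_right,
            show (s ∩ v).card = n - (s ∩ u).card by omega⟩⟩⟩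
    · intro p hp
      simp only [Finset.mem_sigma, Finset.mem_range, Finset.mem_product, mem_powersetCard] at hp ⊢
      obtain ⟨hj, ⟨h1u, h1c⟩, ⟨h2v, h2c⟩⟩ := hp
      refine ⟨Finset.union_subset_union h1u h2v, ?_⟩
      rw [Finset.card_union_of_disjoint (huv.mono h1u h2v), h1c, h2c]
      omega
    · intro s hs
      rw [mem_powersetCard] at hs
      show (s ∩ u) ∪ (s ∩ v) = s
      rw [← Finset.inter_union_distrib_left]
      exact Finset.inter_eq_left.2 hs.1
    · intro p hp
      simp only [Finset.mem_sigma, Finset.mem_range, Finset.mem_product, mem_powersetCard] at hp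
      obtain ⟨hj, ⟨h1u, h1c⟩, ⟨h2v, h2c⟩⟩ := hp
      have e1 : (p.2.1 ∪ p.2.2) ∩ u = p.2.1 := by
        ext x
        simp only [Finset.mem_inter, Finset.mem_union]
        constructor
        · rintro ⟨hx | hx, hxu⟩
          · exact hx
          · exact absurd hxu (Finset.disjoint_right.1 huv (h2v hx))
        · intro hx; exact ⟨Or.inl hx, h1u hx⟩
      have e2 : (p.2.1 ∪ p.2.2) ∩ v = p.2.2 := by
        ext x
        simp only [Finset.mem_inter, Finset.mem_union]
        constructor
        · rintro ⟨hx | hx, hxv⟩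
          · exact absurd hxv (Finset.disjoint_left.1 huv (h1u hx))
          · exact hx
        · intro hx; exact ⟨Or.inr hx, h2v hx⟩
      obtain ⟨j, p1, p2⟩ := p
      simp only at e1 e2 h1c ⊢
      refine Sigma.ext ?_ ?_
      · simpa [e1] using h1c
      · simp [e1, e2]
    · intro s hs
      rw [mem_powersetCard] at hs
      have hsplit : (s ∩ u) ∪ (s ∩ v) = s := by
        rw [← Finset.inter_union_distrib_left]
        exact Finset.inter_eq_left.2 hs.1
      show ∏ i ∈ s, f i = ∏ i ∈ (s ∩ u) ∪ (s ∩ v), f i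
      rw [hsplit]
  rw [main, Finset.sum_sigma]
  exact Finset.sum_congr rfl fun j _ => (key j).symm

open Finset in
theorem esymm_inv_prod_small {F : Type*} [Field F] (d m n : ℕ) (hm : 1 ≤ m) (hmd : m ≤ d)
    (hn : n ≤ m) (z : Fin d → F) (hz : ∀ i, z i ≠ 0) :
    esymP (fun i => (z i)⁻¹) n * ∏ i : Fin m, z (Fin.castLE hmd i)
      = ∑ i ∈ Finset.range (n + 1),
          esymP (fun j : Fin m => z (Fin.castLE hmd j)) (m - n + i) *
            esymP (fun j : Fin (d - m) => (z ⟨m + j.1, by omega⟩)⁻¹) i := by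
  classical
  set emb1 : Fin m ↪ Fin d := Fin.castLEEmb hmd with hemb1
  have hemb2inj : Function.Injective (fun j : Fin (d - m) => (⟨m + j.1, by omega⟩ : Fin d)) := by
    intro a b hab
    have := congrArg Fin.val hab
    simp only at this
    exact Fin.ext (by omega)
  set emb2 : Fin (d - m) ↪ Fin d := ⟨fun j => ⟨m + j.1, by omega⟩, hemb2inj⟩ with hemb2
  set A : Finset (Fin d) := Finset.univ.map emb1 with hA
  set B : Finset (Fin d) := Finset.univ.map emb2 with hB
  have hAmem : ∀ i : Fin d, i ∈ A ↔ i.1 < m := by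
    intro i
    simp only [hA, Finset.mem_map, Finset.mem_univ, true_and]
    constructor
    · rintro ⟨j, rfl⟩; exact j.2
    · intro h; exact ⟨⟨i.1, h⟩, rfl⟩
  have hBmem : ∀ i : Fin d, i ∈ B ↔ m ≤ i.1 := by
    intro i
    simp only [hB, hemb2, Finset.mem_map, Finset.mem_univ, true_and, Function.Embedding.coeFn_mk]
    constructor
    · rintro ⟨j, rfl⟩; exact Nat.le_add_right _ _
    · intro h
      refine ⟨⟨i.1 - m, by omega⟩, Fin.ext ?_⟩
      show m + (i.1 - m) = i.1
      omega
  have hdisj : Disjoint A B := by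
    rw [Finset.disjoint_left]
    intro i hiA hiB
    rw [hAmem] at hiA; rw [hBmem] at hiB; omega
  have hunion : A ∪ B = Finset.univ := by
    ext i
    simp only [Finset.mem_union, Finset.mem_univ, iff_true, hAmem, hBmem]
    omega
  have hAsum : ∀ (g : Fin d → F) (k : ℕ),
      ∑ s ∈ A.powersetCard k, ∏ i ∈ s, g i
        = ∑ s ∈ (Finset.univ : Finset (Fin m)).powersetCard k, ∏ j ∈ s, g (emb1 j) := by
    intro g k
    rw [hA, Finset.powersetCard_map, Finset.sum_map]
    refine Finset.sum_congr rfl fun s _ => ?_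
    exact Finset.prod_map s emb1 g
  have hBsum : ∀ (g : Fin d → F) (k : ℕ),
      ∑ s ∈ B.powersetCard k, ∏ i ∈ s, g i
        = ∑ s ∈ (Finset.univ : Finset (Fin (d - m))).powersetCard k, ∏ j ∈ s, g (emb2 j) := by
    intro g k
    rw [hB, Finset.powersetCard_map, Finset.sum_map]
    refine Finset.sum_congr rfl fun s _ => ?_
    exact Finset.prod_map s emb2 g
  have hAcard : A.card = m := by rw [hA, Finset.card_map, Finset.card_univ, Fintype.card_fin]
  have hprodA : ∏ i ∈ A, z i = ∏ i : Fin m, z (Fin.castLE hmd i) := by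
    rw [hA, Finset.prod_map]; rfl
  have lhs_eq : esymP (fun i : Fin d => (z i)⁻¹) n
      = ∑ s ∈ (A ∪ B).powersetCard n, ∏ i ∈ s, (z i)⁻¹ := by
    rw [hunion]; rfl
  rw [show esymP (fun i : Fin d => (z i)⁻¹) n * ∏ i : Fin m, z (Fin.castLE hmd i)
      = (∑ s ∈ (A ∪ B).powersetCard n, ∏ i ∈ s, (z i)⁻¹) * ∏ i ∈ A, z i by
    rw [← lhs_eq, hprodA]]
  rw [esymP_split_aux A B hdisj _ n, Finset.sum_mul]
  have step : ∀ j ∈ Finset.range (n + 1),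
      (∑ s ∈ A.powersetCard j, ∏ i ∈ s, (z i)⁻¹) *
          (∑ s ∈ B.powersetCard (n - j), ∏ i ∈ s, (z i)⁻¹) * ∏ i ∈ A, z i
        = (∑ s ∈ A.powersetCard (m - j), ∏ i ∈ s, z i) *
            (∑ s ∈ B.powersetCard (n - j), ∏ i ∈ s, (z i)⁻¹) := by
    intro j hjr
    rw [Finset.mem_range] at hjr
    rw [mul_right_comm, esymP_refl_aux A z (fun i _ => hz i) j (by omega), hAcard]
  rw [Finset.sum_congr rfl step]
  rw [← Finset.sum_range_reflect]
  refine Finset.sum_congr rfl fun i hi => ?_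
  rw [Finset.mem_range] at hi
  have h1 : m - (n + 1 - 1 - i) = m - n + i := by omega
  have h2 : n - (n + 1 - 1 - i) = i := by omega
  rw [h1, h2]
  congr 1
  · rw [hAsum]; rfl
  · rw [hBsum]; rfl
end

section
/- Let d ≥ 2 and define the (d-2)×(d-1) integer matrix W by W_{i,j} = d - 2 - 2i + j. Let σ: [d-1] → [d-2] be a surjection, and let u, v be the two distinct elements of [d-1] with σ(u) = σ(v). Then ∑_{i ∈ [d-1], i ≠ u} W_{σ(i), i} = C(d-1, 2) + 1 - u, where C(d-1,2) is the binomial coefficient. -/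
lemma sum_range_id_choose (n : ℕ) : ∑ i ∈ Finset.range n, i = n.choose 2 := by
  induction n with
  | zero => simp
  | succ n ih => rw [Finset.sum_range_succ, ih, Nat.choose]; simp [Nat.choose_one_right]; omega

lemma two_mul_choose_two (n : ℕ) : 2 * n.choose 2 = n * (n - 1) := by
  induction n with
  | zero => simp
  | succ n ih => rw [Nat.choose, Nat.mul_add, ih, Nat.choose_one_right]; cases n <;> simp <;> ring

/-- Lemma `l sum u`: for the `(d-2) × (d-1)` matrix `W` with (1-based) entries
`W i j = d - 2 - 2*i + j`, and a surjection `σ : [d-1] → [d-2]` whose unique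
two-element fiber is `{u, v}`, the sum of `W (σ i) i` over `i ≠ u` equals
`C(d-1, 2) + 1 - u`.  Here `Fin` indices are 0-based, so the (1-based) entry
`W (σ i) i` is `d - 2 - 2*(σ i + 1) + (i + 1) = d - 3 - 2*(σ i) + i`, and the
(1-based) right-hand side `C(d-1,2) + 1 - u` becomes `C(d-1,2) - u.val`. -/
theorem sum_W_surjection (d : ℕ) (hd : 2 ≤ d)
    (σ : Fin (d - 1) → Fin (d - 2)) (hσ : Function.Surjective σ)
    (u v : Fin (d - 1)) (huv : u ≠ v) (hfib : σ u = σ v) :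
    ∑ i ∈ Finset.univ.erase u,
        ((d : ℤ) - 3 - 2 * ((σ i : ℕ) : ℤ) + ((i : ℕ) : ℤ))
      = ((d - 1).choose 2 : ℤ) - ((u : ℕ) : ℤ) := by
  have hd3 : 3 ≤ d := by
    have h1 : 1 < Fintype.card (Fin (d - 1)) :=
      Fintype.one_lt_card_iff_nontrivial.2 ⟨u, v, huv⟩
    simp at h1; omega
  set s := (Finset.univ : Finset (Fin (d-1))).erase u with hs
  have hcard : s.card = d - 2 := by
    rw [hs, Finset.card_erase_of_mem (Finset.mem_univ u), Finset.card_univ]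
    simp; omega
  have hsurj : ∀ b : Fin (d - 2), ∃ a ∈ s, σ a = b := by
    intro b
    obtain ⟨a, ha⟩ := hσ b
    by_cases h : a = u
    · exact ⟨v, Finset.mem_erase.2 ⟨Ne.symm huv, Finset.mem_univ v⟩, by rw [← hfib, ← h, ha]⟩
    · exact ⟨a, Finset.mem_erase.2 ⟨h, Finset.mem_univ a⟩, ha⟩
  have himg : s.image σ = Finset.univ := by
    apply Finset.eq_univ_of_forall
    intro b
    obtain ⟨a, has, hab⟩ := hsurj b
    exact Finset.mem_image.2 ⟨a, has, hab⟩
  have hinj : ∀ x ∈ s, ∀ y ∈ s, σ x = σ y → x = y := by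
    have hci : (s.image σ).card = s.card := by
      rw [himg, Finset.card_univ]; simp [hcard]
    exact fun x hx y hy => Finset.injOn_of_card_image_eq hci hx hy
  have hsumσ : ∑ i ∈ s, ((σ i : ℕ) : ℤ) = ((d - 2).choose 2 : ℤ) := by
    rw [← Finset.sum_image (f := fun b : Fin (d-2) => ((b : ℕ) : ℤ)) hinj, himg]
    rw [Fin.sum_univ_eq_sum_range (fun i => (i : ℤ))]
    rw [← Nat.cast_sum, sum_range_id_choose]
  have hsumi : ∑ i ∈ s, ((i : ℕ) : ℤ) = ((d - 1).choose 2 : ℤ) - ((u : ℕ) : ℤ) := by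
    have h := Finset.add_sum_erase Finset.univ (fun i : Fin (d-1) => ((i : ℕ) : ℤ))
      (Finset.mem_univ u)
    have huniv : ∑ i : Fin (d-1), ((i : ℕ) : ℤ) = ((d - 1).choose 2 : ℤ) := by
      rw [Fin.sum_univ_eq_sum_range (fun i => (i : ℤ)), ← Nat.cast_sum, sum_range_id_choose]
    rw [← hs, huniv] at h
    linarith
  have key : ∑ i ∈ s, ((d : ℤ) - 3 - 2 * ((σ i : ℕ) : ℤ) + ((i : ℕ) : ℤ))
      = s.card * ((d : ℤ) - 3) - 2 * (∑ i ∈ s, ((σ i : ℕ) : ℤ)) + ∑ i ∈ s, ((i : ℕ) : ℤ) := by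
    rw [Finset.sum_add_distrib, Finset.sum_sub_distrib, Finset.sum_const, Finset.mul_sum]
    push_cast; ring
  rw [key, hsumσ, hsumi, hcard]
  have h2 : (2 : ℤ) * ((d - 2).choose 2 : ℤ) = (d - 2 : ℕ) * ((d : ℤ) - 3) := by
    have := two_mul_choose_two (d - 2)
    have : ((2 * (d-2).choose 2 : ℕ) : ℤ) = (((d-2) * (d-2-1) : ℕ) : ℤ) := by rw [this]
    push_cast [Nat.cast_sub (by omega : 2 ≤ d), Nat.cast_sub (by omega : 1 ≤ d - 2)] at this ⊢
    linarith
  linarith [h2]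
end

section
/- For integers r ≥ 1 and a tuple ν = (ν(1),...,ν(r)) of nonnegative integers, and an indeterminate (or integer) d: ∑_{k≥0} (d)_k ∑_{s ∈ S(ν,k)} 1/(∏_{∅≠U⊆[r]} s(U)!) = ∏_{i=1}^{r} C(d, ν(i)), where (d)_k = d(d-1)···(d-k+1) is the falling factorial and S(ν,k) is the set of tuples s = (s(U)) of nonnegative integers indexed by nonempty subsets U of [r] such that ν(i) = ∑_{U ∋ i} s(U) for each i and k = ∑_{∅≠U⊆[r]} s(U). -/
open Finset

/-- Falling factorial `(x)_k = x (x-1) ⋯ (x-k+1)` in `ℚ`. -/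
def fallQ (x : ℚ) (k : ℕ) : ℚ := ∏ j ∈ Finset.range k, (x - j)

abbrev NE (r : ℕ) := {U : Finset (Fin r) // U.Nonempty}

/-- Finset of admissible `s` for `(ν, k)`. -/
def AS {r : ℕ} (ν : Fin r → ℕ) (k : ℕ) : Finset (NE r → ℕ) :=
  (Fintype.piFinset (fun _ => Finset.range (k+1))).filter
    (fun s => (∀ i, ν i = ∑ U : NE r, if i ∈ U.1 then s U else 0) ∧ (∑ U : NE r, s U) = k)

lemma mem_AS {r : ℕ} {ν : Fin r → ℕ} {k : ℕ} {s : NE r → ℕ} :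
    s ∈ AS ν k ↔ (∀ i, ν i = ∑ U : NE r, if i ∈ U.1 then s U else 0) ∧ (∑ U : NE r, s U) = k := by
  constructor
  · intro h; exact (Finset.mem_filter.mp h).2
  · intro h
    refine Finset.mem_filter.mpr ⟨?_, h⟩
    refine Fintype.mem_piFinset.mpr (fun U => ?_)
    rw [Finset.mem_range, Nat.lt_succ_iff, ← h.2]
    exact Finset.single_le_sum (fun _ _ => Nat.zero_le _) (Finset.mem_univ U)

lemma AS_empty {r : ℕ} {ν : Fin r → ℕ} {k : ℕ} (h : ∑ i, ν i < k) : AS ν k = ∅ := by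
  rw [Finset.eq_empty_iff_forall_notMem]
  intro s hs
  rw [mem_AS] at hs
  have h1 : ∑ i, ν i = ∑ U : NE r, U.1.card * s U := by
    calc ∑ i, ν i = ∑ i, ∑ U : NE r, if i ∈ U.1 then s U else 0 := by
          exact Finset.sum_congr rfl (fun i _ => hs.1 i)
      _ = ∑ U : NE r, ∑ i, if i ∈ U.1 then s U else 0 := Finset.sum_comm
      _ = ∑ U : NE r, U.1.card * s U := by
          refine Finset.sum_congr rfl (fun U _ => ?_)
          rw [Finset.sum_ite_mem, Finset.univ_inter, Finset.sum_const, smul_eq_mul]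
  have h2 : k ≤ ∑ i, ν i := by
    rw [h1, ← hs.2]
    refine Finset.sum_le_sum (fun U _ => ?_)
    have := U.2.card_pos
    exact Nat.le_mul_of_pos_left _ this
  omega

/-- inner sum -/
def SQ {r : ℕ} (ν : Fin r → ℕ) (k : ℕ) : ℚ :=
  ∑ s ∈ AS ν k, (1 : ℚ) / ∏ U : NE r, ((s U).factorial : ℚ)

def Lfin {r : ℕ} (ν : Fin r → ℕ) (d : ℚ) : ℚ :=
  ∑ k ∈ Finset.range (∑ i, ν i + 1), fallQ d k * SQ ν k

def Rfin {r : ℕ} (ν : Fin r → ℕ) (d : ℚ) : ℚ :=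
  ∏ i, fallQ d (ν i) / ((ν i).factorial : ℚ)

lemma SQ_eq_zero {r : ℕ} {ν : Fin r → ℕ} {k : ℕ} (h : ∑ i, ν i < k) : SQ ν k = 0 := by
  rw [SQ, AS_empty h, Finset.sum_empty]

lemma Lfin_eq {r : ℕ} (ν : Fin r → ℕ) (d : ℚ) {M : ℕ} (h : ∑ i, ν i < M) :
    Lfin ν d = ∑ k ∈ Finset.range M, fallQ d k * SQ ν k := by
  rw [Lfin]
  refine Finset.sum_subset ?_ ?_
  · exact Finset.range_subset_range.mpr h
  · intro k _ hk
    rw [Finset.mem_range, Nat.lt_succ_iff, not_le] at hk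
    rw [SQ_eq_zero hk, mul_zero]

@[simp] lemma fallQ_zero (x : ℚ) : fallQ x 0 = 1 := by simp [fallQ]

lemma fallQ_succ (x : ℚ) (k : ℕ) : fallQ x (k+1) = fallQ x k * (x - k) := by
  rw [fallQ, Finset.prod_range_succ]; rfl

lemma fallQ_succ' (x : ℚ) (k : ℕ) : fallQ x (k+1) = x * fallQ (x-1) k := by
  rw [fallQ, Finset.prod_range_succ']
  simp only [Nat.cast_zero, sub_zero, mul_comm]
  congr 1
  refine Finset.prod_congr rfl (fun j _ => ?_)
  push_cast; ring

lemma fallQ_diff (d : ℚ) (k : ℕ) :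
    fallQ d (k+1) - fallQ (d-1) (k+1) = (k+1) * fallQ (d-1) k := by
  rw [fallQ_succ' d k, fallQ_succ (d-1) k]; ring

lemma fallQ_zero_left (k : ℕ) : fallQ 0 (k+1) = 0 := by
  rw [fallQ_succ']; ring

lemma pascal (d : ℚ) (n : ℕ) :
    fallQ d n / (n.factorial : ℚ) =
      fallQ (d-1) n / (n.factorial : ℚ) +
      (if 1 ≤ n then fallQ (d-1) (n-1) / ((n-1).factorial : ℚ) else 0) := by
  cases n with
  | zero => simp
  | succ m =>
    simp only [Nat.le_add_left 1 m, if_pos, Nat.add_sub_cancel]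
    have h1 : ((m.factorial : ℚ)) ≠ 0 := Nat.cast_ne_zero.mpr m.factorial_ne_zero
    have h2 : (((m+1).factorial : ℚ)) ≠ 0 := Nat.cast_ne_zero.mpr (m+1).factorial_ne_zero
    rw [fallQ_succ' d m, fallQ_succ (d-1) m, Nat.factorial_succ]
    push_cast
    field_simp
    ring

lemma sum_ite_erase_update {r : ℕ} (s : NE r → ℕ) (U : NE r) (a : ℕ) (i : Fin r) :
    (∑ V ∈ Finset.univ.erase U, if i ∈ V.1 then Function.update s U a V else 0)
      = ∑ V ∈ Finset.univ.erase U, if i ∈ V.1 then s V else 0 :=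
  Finset.sum_congr rfl fun V hV => by
    rw [Function.update_of_ne (Finset.ne_of_mem_erase hV)]

lemma sum_erase_update {r : ℕ} (s : NE r → ℕ) (U : NE r) (a : ℕ) :
    (∑ V ∈ Finset.univ.erase U, Function.update s U a V)
      = ∑ V ∈ Finset.univ.erase U, s V :=
  Finset.sum_congr rfl fun V hV => by
    rw [Function.update_of_ne (Finset.ne_of_mem_erase hV)]

lemma prod_fact_erase_update {r : ℕ} (s : NE r → ℕ) (U : NE r) (a : ℕ) :
    (∏ V ∈ Finset.univ.erase U, ((Function.update s U a V).factorial : ℚ))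
      = ∏ V ∈ Finset.univ.erase U, ((s V).factorial : ℚ) :=
  Finset.prod_congr rfl fun V hV => by
    rw [Function.update_of_ne (Finset.ne_of_mem_erase hV)]

/-- The key combinatorial identity. -/
lemma key {r : ℕ} (ν : Fin r → ℕ) (k : ℕ) :
    (k+1 : ℚ) * SQ ν (k+1) =
      ∑ U : NE r, (if ∀ i ∈ U.1, 1 ≤ ν i
        then SQ (fun i => ν i - if i ∈ U.1 then 1 else 0) k else 0) := by
  rw [SQ, Finset.mul_sum]
  have step1 : ∀ s ∈ AS ν (k+1), (k+1:ℚ) * ((1:ℚ) / ∏ U : NE r, ((s U).factorial : ℚ))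
      = ∑ U : NE r, (s U : ℚ) * ((1:ℚ) / ∏ V : NE r, ((s V).factorial : ℚ)) := by
    intro s hs
    rw [← Finset.sum_mul]
    congr 1
    rw [← Nat.cast_sum, (mem_AS.mp hs).2]
    push_cast
    ring
  rw [Finset.sum_congr rfl step1, Finset.sum_comm]
  refine Finset.sum_congr rfl (fun U _ => ?_)
  by_cases hc : ∀ i ∈ U.1, 1 ≤ ν i
  · rw [if_pos hc, SQ]
    rw [← Finset.sum_filter_of_ne (p := fun s => s U ≠ 0)
      (fun s _ h => by intro h0; rw [h0] at h; simp at h)]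
    refine Finset.sum_nbij' (fun s => Function.update s U (s U - 1))
      (fun t => Function.update t U (t U + 1)) ?_ ?_ ?_ ?_ ?_
    · -- forward membership
      intro s hs
      obtain ⟨hsA, hsU⟩ := Finset.mem_filter.mp hs
      have hA := mem_AS.mp hsA
      have h1 : 1 ≤ s U := Nat.pos_of_ne_zero hsU
      rw [mem_AS]
      constructor
      · intro i
        have hcon := hA.1 i
        rw [← Finset.add_sum_erase _ _ (Finset.mem_univ U)] at hcon ⊢
        rw [sum_ite_erase_update s U (s U - 1) i, Function.update_self]
        by_cases hi : i ∈ U.1 <;> simp only [hi, if_true, if_false] at hcon ⊢ <;> omega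
      · have hsum := hA.2
        rw [← Finset.add_sum_erase _ _ (Finset.mem_univ U)] at hsum ⊢
        rw [sum_erase_update s U (s U - 1), Function.update_self]
        omega
    · -- backward membership
      intro t ht
      have hA := mem_AS.mp ht
      refine Finset.mem_filter.mpr ⟨mem_AS.mpr ⟨?_, ?_⟩, by simp⟩
      · intro i
        have hcon := hA.1 i
        rw [← Finset.add_sum_erase _ _ (Finset.mem_univ U)] at hcon ⊢
        rw [sum_ite_erase_update t U (t U + 1) i, Function.update_self]
        by_cases hi : i ∈ U.1
        · have := hc i hi
          simp only [hi, if_true] at hcon ⊢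
          omega
        · simp only [hi, if_false] at hcon ⊢
          omega
      · have hsum := hA.2
        rw [← Finset.add_sum_erase _ _ (Finset.mem_univ U)] at hsum ⊢
        rw [sum_erase_update t U (t U + 1), Function.update_self]
        omega
    · -- left inverse
      intro s hs
      have h1 : 1 ≤ s U := Nat.pos_of_ne_zero (Finset.mem_filter.mp hs).2
      simp only [Function.update_idem, Function.update_self]
      rw [show s U - 1 + 1 = s U from by omega]
      exact Function.update_eq_self U s
    · -- right inverse
      intro t _
      simp only [Function.update_idem, Function.update_self, Nat.add_sub_cancel]
      exact Function.update_eq_self U t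
    · -- values agree
      intro s hs
      obtain ⟨_, hsU⟩ := Finset.mem_filter.mp hs
      have h1 : 1 ≤ s U := Nat.pos_of_ne_zero hsU
      rw [← Finset.mul_prod_erase _ (fun V => ((s V).factorial : ℚ)) (Finset.mem_univ U),
          ← Finset.mul_prod_erase _
            (fun V => ((Function.update s U (s U - 1) V).factorial : ℚ)) (Finset.mem_univ U)]
      rw [prod_fact_erase_update s U (s U - 1), Function.update_self]
      have hfact : (s U : ℚ) * (((s U - 1).factorial : ℚ)) = ((s U).factorial : ℚ) := by
        exact_mod_cast congrArg (Nat.cast : ℕ → ℚ) (Nat.mul_factorial_pred hsU)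
      have hP : (∏ V ∈ Finset.univ.erase U, ((s V).factorial : ℚ)) ≠ 0 :=
        Finset.prod_ne_zero_iff.mpr (fun V _ => Nat.cast_ne_zero.mpr (s V).factorial_ne_zero)
      have h3 : (((s U - 1).factorial : ℚ)) ≠ 0 := Nat.cast_ne_zero.mpr (s U - 1).factorial_ne_zero
      have hsU0 : (s U : ℚ) ≠ 0 := Nat.cast_ne_zero.mpr hsU
      rw [← hfact]
      field_simp
  · rw [if_neg hc]
    push_neg at hc
    obtain ⟨i, hiU, hi⟩ := hc
    refine Finset.sum_eq_zero (fun s hs => ?_)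
    have hcon := (mem_AS.mp hs).1 i
    have hν0 : ν i = 0 := by omega
    rw [hν0] at hcon
    have hzero := (Finset.sum_eq_zero_iff.mp hcon.symm) U (Finset.mem_univ U)
    rw [if_pos hiU] at hzero
    rw [hzero]
    simp

lemma sum_dec_lt {r : ℕ} {ν : Fin r → ℕ} {U : NE r} (hc : ∀ i ∈ U.1, 1 ≤ ν i) :
    ∑ i, (ν i - if i ∈ U.1 then 1 else 0) < ∑ i, ν i := by
  obtain ⟨i₀, hi₀⟩ := U.2
  refine Finset.sum_lt_sum (fun i _ => Nat.sub_le _ _) ⟨i₀, Finset.mem_univ i₀, ?_⟩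
  have := hc i₀ hi₀
  simp only [hi₀, if_true]
  omega

lemma Lrec {r : ℕ} (ν : Fin r → ℕ) (d : ℚ) :
    Lfin ν d = Lfin ν (d-1) + ∑ U : NE r, (if ∀ i ∈ U.1, 1 ≤ ν i
      then Lfin (fun i => ν i - if i ∈ U.1 then 1 else 0) (d-1) else 0) := by
  have hdiff : Lfin ν d - Lfin ν (d-1)
      = ∑ k ∈ Finset.range (∑ i, ν i), fallQ (d-1) k * ((k+1:ℚ) * SQ ν (k+1)) := by
    rw [Lfin, Lfin, ← Finset.sum_sub_distrib]
    have h1 : ∀ k, fallQ d k * SQ ν k - fallQ (d-1) k * SQ ν k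
        = (fallQ d k - fallQ (d-1) k) * SQ ν k := fun k => by ring
    simp only [h1]
    rw [Finset.sum_range_succ']
    simp only [fallQ_zero, sub_self, zero_mul, add_zero]
    refine Finset.sum_congr rfl (fun k _ => ?_)
    rw [fallQ_diff]
    ring
  have hkey : ∀ k, fallQ (d-1) k * ((k+1:ℚ) * SQ ν (k+1))
      = ∑ U : NE r, (if ∀ i ∈ U.1, 1 ≤ ν i
          then fallQ (d-1) k * SQ (fun i => ν i - if i ∈ U.1 then 1 else 0) k else 0) := by
    intro k
    rw [key ν k, Finset.mul_sum]
    refine Finset.sum_congr rfl (fun U _ => ?_)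
    by_cases hcU : ∀ i ∈ U.1, 1 ≤ ν i <;> simp [hcU]
  have hsum : Lfin ν d - Lfin ν (d-1) = ∑ U : NE r, (if ∀ i ∈ U.1, 1 ≤ ν i
      then Lfin (fun i => ν i - if i ∈ U.1 then 1 else 0) (d-1) else 0) := by
    rw [hdiff, Finset.sum_congr rfl (fun k _ => hkey k), Finset.sum_comm]
    refine Finset.sum_congr rfl (fun U _ => ?_)
    by_cases hcU : ∀ i ∈ U.1, 1 ≤ ν i
    · simp only [Finset.sum_ite_irrel, Finset.sum_const, smul_zero]
      rw [if_pos hcU, if_pos hcU, Lfin_eq _ _ (sum_dec_lt hcU)]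
    · simp [hcU]
  linarith

lemma Rrec {r : ℕ} (ν : Fin r → ℕ) (d : ℚ) :
    Rfin ν d = Rfin ν (d-1) + ∑ U : NE r, (if ∀ i ∈ U.1, 1 ≤ ν i
      then Rfin (fun i => ν i - if i ∈ U.1 then 1 else 0) (d-1) else 0) := by
  have hpas : Rfin ν d = ∏ i,
      ((if 1 ≤ ν i then fallQ (d-1) (ν i - 1) / ((ν i - 1).factorial : ℚ) else 0)
        + fallQ (d-1) (ν i) / ((ν i).factorial : ℚ)) := by
    refine Finset.prod_congr rfl (fun i _ => ?_)
    rw [pascal d (ν i)]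
    ring
  rw [hpas, Finset.prod_add]
  rw [← Finset.add_sum_erase _ _ (Finset.empty_mem_powerset Finset.univ)]
  congr 1
  · simp [Rfin]
  · rw [Finset.sum_subtype (p := fun T : Finset (Fin r) => T.Nonempty)
      (Finset.univ.powerset.erase ∅) (fun T => by
        simp [Finset.nonempty_iff_ne_empty])]
    refine Finset.sum_congr rfl (fun U _ => ?_)
    by_cases hcU : ∀ i ∈ U.1, 1 ≤ ν i
    · rw [if_pos hcU, Rfin, ← Finset.prod_mul_prod_compl U.1, Finset.compl_eq_univ_sdiff]
      congr 1
      · refine Finset.prod_congr rfl (fun i hi => ?_)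
        simp only [hi, if_true, hcU i hi]
      · refine Finset.prod_congr rfl (fun i hi => ?_)
        have : i ∉ U.1 := (Finset.mem_sdiff.mp hi).2
        simp only [this, if_false, Nat.sub_zero]
    · rw [if_neg hcU]
      push_neg at hcU
      obtain ⟨i, hiU, hi⟩ := hcU
      rw [Finset.prod_eq_zero hiU (by simp [Nat.lt_one_iff.mp hi])]
      ring

lemma LR_zero {r : ℕ} (ν : Fin r → ℕ) : Lfin ν 0 = Rfin ν 0 := by
  have hL : Lfin ν 0 = SQ ν 0 := by
    rw [Lfin]
    rw [Finset.sum_eq_single_of_mem 0 (Finset.mem_range.mpr (Nat.succ_pos _))]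
    · simp
    · intro k _ hk
      obtain ⟨m, rfl⟩ := Nat.exists_eq_succ_of_ne_zero hk
      rw [fallQ_zero_left, zero_mul]
  by_cases hν : ∀ i, ν i = 0
  · have hAS : AS ν 0 = {fun _ => 0} := by
      ext s
      rw [mem_AS, Finset.mem_singleton]
      constructor
      · intro ⟨_, h2⟩
        funext U
        exact (Finset.sum_eq_zero_iff.mp h2) U (Finset.mem_univ U)
      · rintro rfl
        refine ⟨fun i => by simp [hν i], by simp⟩
    rw [hL, SQ, hAS]
    simp [Rfin, hν]
  · push_neg at hν
    obtain ⟨i₀, hi₀⟩ := hν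
    have hAS : AS ν 0 = ∅ := by
      rw [Finset.eq_empty_iff_forall_notMem]
      intro s hs
      rw [mem_AS] at hs
      have hz : ∀ U : NE r, s U = 0 := fun U =>
        (Finset.sum_eq_zero_iff.mp hs.2) U (Finset.mem_univ U)
      have := hs.1 i₀
      simp [hz] at this
      exact hi₀ this
    rw [hL, SQ, hAS, Finset.sum_empty, Rfin]
    obtain ⟨m, hm⟩ := Nat.exists_eq_succ_of_ne_zero hi₀
    rw [Finset.prod_eq_zero (Finset.mem_univ i₀) (by rw [hm, fallQ_zero_left, zero_div])]

noncomputable def fallP (k : ℕ) : Polynomial ℚ := ∏ j ∈ Finset.range k, (Polynomial.X - Polynomial.C (j:ℚ))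

lemma eval_fallP (d : ℚ) (k : ℕ) : (fallP k).eval d = fallQ d k := by
  simp [fallP, fallQ, Polynomial.eval_prod]

theorem mainLR {r : ℕ} : ∀ (n : ℕ) (ν : Fin r → ℕ), ∑ i, ν i = n → ∀ d : ℚ, Lfin ν d = Rfin ν d := by
  intro n
  induction n using Nat.strong_induction_on with
  | _ n IH =>
    intro ν hν d
    set P : Polynomial ℚ := (∑ k ∈ Finset.range (n+1), Polynomial.C (SQ ν k) * fallP k)
        - ∏ i, Polynomial.C (((ν i).factorial : ℚ)⁻¹) * fallP (ν i) with hP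
    have hevalL : ∀ x : ℚ, P.eval x = Lfin ν x - Rfin ν x := by
      intro x
      rw [hP]
      rw [Polynomial.eval_sub, Polynomial.eval_finset_sum, Polynomial.eval_prod]
      congr 1
      · rw [Lfin, hν]
        refine Finset.sum_congr rfl (fun k _ => ?_)
        rw [Polynomial.eval_mul, Polynomial.eval_C, eval_fallP]
        ring
      · rw [Rfin]
        refine Finset.prod_congr rfl (fun i _ => ?_)
        rw [Polynomial.eval_mul, Polynomial.eval_C, eval_fallP]
        ring
    have hstep : ∀ x : ℚ, P.eval x = P.eval (x - 1) := by
      intro x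
      rw [hevalL, hevalL, Lrec ν x, Rrec ν x]
      have hz : (∑ U : NE r, (if ∀ i ∈ U.1, 1 ≤ ν i
            then Lfin (fun i => ν i - if i ∈ U.1 then 1 else 0) (x-1) else 0))
          = ∑ U : NE r, (if ∀ i ∈ U.1, 1 ≤ ν i
            then Rfin (fun i => ν i - if i ∈ U.1 then 1 else 0) (x-1) else 0) := by
        refine Finset.sum_congr rfl (fun U _ => ?_)
        by_cases hcU : ∀ i ∈ U.1, 1 ≤ ν i
        · rw [if_pos hcU, if_pos hcU]
          exact IH (∑ i, (ν i - if i ∈ U.1 then 1 else 0)) (hν ▸ sum_dec_lt hcU) _ rfl (x-1)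
        · rw [if_neg hcU, if_neg hcU]
      rw [hz]
      ring
    have h0 : P.eval 0 = 0 := by rw [hevalL, LR_zero, sub_self]
    have hneg : ∀ m : ℕ, P.eval (-(m:ℚ)) = 0 := by
      intro m
      induction m with
      | zero => simpa using h0
      | succ m ihm =>
        have h := hstep (-(m:ℚ))
        rw [ihm] at h
        rw [show (-((m+1 : ℕ):ℚ)) = -(m:ℚ) - 1 by push_cast; ring, ← h]
    have hP0 : P = 0 := by
      refine Polynomial.eq_zero_of_infinite_isRoot P ?_
      refine Set.infinite_of_injective_forall_mem (f := fun m : ℕ => -(m:ℚ)) ?_ ?_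
      · intro a b hab
        simp only [neg_inj, Nat.cast_inj] at hab
        exact hab
      · intro m
        exact hneg m
    have := hevalL d
    rw [hP0] at this
    simp at this
    linarith

/-- Theorem `t su`: for `ν : Fin r → ℕ` and any `d`,
`∑_{k ≥ 0} (d)_k ∑_{s ∈ S(ν,k)} 1/∏_U s(U)! = ∏_i C(d, ν i)`, where the inner sum
is over tuples `s` of nonnegative integers indexed by nonempty subsets `U ⊆ [r]`
with `ν i = ∑_{U ∋ i} s(U)` for each `i` and `k = ∑_U s(U)`, and
`C(d, n) = (d)_n / n!` is the generalized binomial coefficient. -/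
theorem sum_falling_factorial_subsets (r : ℕ) (hr : 1 ≤ r) (ν : Fin r → ℕ) (d : ℚ) :
    ∑' k : ℕ, fallQ d k *
      ∑' s : {s : {U : Finset (Fin r) // U.Nonempty} → ℕ //
          (∀ i : Fin r, ν i = ∑ U : {U : Finset (Fin r) // U.Nonempty},
              if i ∈ U.1 then s U else 0) ∧
          (∑ U : {U : Finset (Fin r) // U.Nonempty}, s U) = k},
        (1 : ℚ) / ∏ U : {U : Finset (Fin r) // U.Nonempty}, ((s.1 U).factorial : ℚ)
      = ∏ i : Fin r, fallQ d (ν i) / ((ν i).factorial : ℚ) := by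
  have hinner : ∀ k : ℕ,
      (∑' s : {s : {U : Finset (Fin r) // U.Nonempty} → ℕ //
          (∀ i : Fin r, ν i = ∑ U : {U : Finset (Fin r) // U.Nonempty},
              if i ∈ U.1 then s U else 0) ∧
          (∑ U : {U : Finset (Fin r) // U.Nonempty}, s U) = k},
        (1 : ℚ) / ∏ U : {U : Finset (Fin r) // U.Nonempty}, ((s.1 U).factorial : ℚ))
      = SQ ν k := by
    intro k
    set Pset : Set ((NE r) → ℕ) := {s | (∀ i : Fin r, ν i = ∑ U : NE r,
        if i ∈ U.1 then s U else 0) ∧ (∑ U : NE r, s U) = k} with hPset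
    have h1 : (∑' s : {s : {U : Finset (Fin r) // U.Nonempty} → ℕ //
          (∀ i : Fin r, ν i = ∑ U : {U : Finset (Fin r) // U.Nonempty},
              if i ∈ U.1 then s U else 0) ∧
          (∑ U : {U : Finset (Fin r) // U.Nonempty}, s U) = k},
        (1 : ℚ) / ∏ U : {U : Finset (Fin r) // U.Nonempty}, ((s.1 U).factorial : ℚ))
        = ∑' s : (NE r) → ℕ, Pset.indicator
            (fun s => (1 : ℚ) / ∏ U : NE r, ((s U).factorial : ℚ)) s :=
      tsum_subtype Pset (fun s => (1 : ℚ) / ∏ U : NE r, ((s U).factorial : ℚ))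
    rw [h1]
    have h2 : (∑' s : (NE r) → ℕ, Pset.indicator
          (fun s => (1 : ℚ) / ∏ U : NE r, ((s U).factorial : ℚ)) s)
        = ∑ s ∈ AS ν k, Pset.indicator
          (fun s => (1 : ℚ) / ∏ U : NE r, ((s U).factorial : ℚ)) s :=
      tsum_eq_sum (fun s hs => Set.indicator_of_notMem (s := Pset) (a := s)
        (fun hmem => hs (mem_AS.mpr hmem)) _)
    rw [h2, SQ]
    exact Finset.sum_congr rfl (fun s hs =>
      Set.indicator_of_mem (s := Pset) (a := s) (mem_AS.mp hs) _)
  have houter : ∀ k, k ∉ Finset.range (∑ i, ν i + 1) → fallQ d k * SQ ν k = 0 := by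
    intro k hk
    rw [Finset.mem_range, Nat.lt_succ_iff, not_le] at hk
    rw [SQ_eq_zero hk, mul_zero]
  calc ∑' k : ℕ, fallQ d k *
        ∑' s : {s : {U : Finset (Fin r) // U.Nonempty} → ℕ //
            (∀ i : Fin r, ν i = ∑ U : {U : Finset (Fin r) // U.Nonempty},
                if i ∈ U.1 then s U else 0) ∧
            (∑ U : {U : Finset (Fin r) // U.Nonempty}, s U) = k},
          (1 : ℚ) / ∏ U : {U : Finset (Fin r) // U.Nonempty}, ((s.1 U).factorial : ℚ)
      = ∑' k : ℕ, fallQ d k * SQ ν k := tsum_congr (fun k => by rw [hinner k])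
    _ = ∑ k ∈ Finset.range (∑ i, ν i + 1), fallQ d k * SQ ν k := tsum_eq_sum houter
    _ = Lfin ν d := rfl
    _ = Rfin ν d := mainLR (∑ i, ν i) ν rfl d
    _ = ∏ i : Fin r, fallQ d (ν i) / ((ν i).factorial : ℚ) := rfl
end

section
/- For an integer r ≥ 0, indeterminates y, x_1,...,x_r: ∏_{i=1}^{r} (y + x_i - i + 1) = ∑_{i=0}^{r} (y)_i ∑_{U ∈ P(r, r-i)} x(U), where P(r,k) is the set of k-element subsets of {1,...,r}, and for U = {U(1) < U(2) < ... < U(k)} (listed in increasing order), x(U) = ∏_{j=1}^{k} (x_{U(j)} - j + 1). -/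
/-- Falling factorial `(x)_k = x (x-1) ⋯ (x-k+1)` in a commutative ring. -/
def fallR {R : Type*} [CommRing R] (x : R) (k : ℕ) : R :=
  ∏ j ∈ Finset.range k, (x - (j : R))

/-- For a subset `U = {u_1 < u_2 < ... < u_k}` of `Fin r`,
`x(U) = ∏_{j=1}^{k} (x_{u_j} - j + 1)`; with 0-based `enum` index `p.1`,
the `j`-th (1-based) factor is `x p.2 - p.1`. -/
def xU {R : Type*} [CommRing R] {r : ℕ} (x : Fin r → R) (U : Finset (Fin r)) : R :=
  ((U.sort (· ≤ ·)).zipIdx.map fun p => x p.1 - (p.2 : R)).prod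

open Finset

lemma xU_empty {R : Type*} [CommRing R] {r : ℕ} (x : Fin r → R) : xU x (∅ : Finset (Fin r)) = 1 := by
  simp [xU]

lemma last_not_mem_map {r : ℕ} (U : Finset (Fin r)) :
    Fin.last r ∉ U.map Fin.castSuccEmb := by
  simp only [mem_map, Fin.castSuccEmb_apply]
  rintro ⟨i, -, h⟩
  exact (Fin.castSucc_lt_last i).ne h

lemma sort_map_castSucc {r : ℕ} (U : Finset (Fin r)) :
    ((U.map Fin.castSuccEmb).sort (· ≤ ·)) = (U.sort (· ≤ ·)).map Fin.castSucc := by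
  refine (fun h1 h2 h3 => List.Perm.eq_of_pairwise' (r := (· ≤ ·)) h2 h3 h1) ?_ ?_ ?_
  · rw [← Multiset.coe_eq_coe, Finset.sort_eq, Finset.map_val,
      ← Finset.sort_eq U (· ≤ ·), Multiset.map_coe]
    rfl
  · exact Finset.pairwise_sort _ _
  · exact List.Pairwise.map _ (fun a b (h : a ≤ b) => Fin.castSucc_le_castSucc_iff.mpr h)
      (Finset.pairwise_sort _ _)

lemma sort_insert_last {r : ℕ} (U : Finset (Fin r)) :
    ((insert (Fin.last r) (U.map Fin.castSuccEmb)).sort (· ≤ ·))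
      = ((U.map Fin.castSuccEmb).sort (· ≤ ·)) ++ [Fin.last r] := by
  refine (fun h1 h2 h3 => List.Perm.eq_of_pairwise' (r := (· ≤ ·)) h2 h3 h1) ?_ ?_ ?_
  · have h1 : ((insert (Fin.last r) (U.map Fin.castSuccEmb)).sort (· ≤ ·)).Perm
        (Fin.last r :: (U.map Fin.castSuccEmb).sort (· ≤ ·)) := by
      rw [← Multiset.coe_eq_coe, Finset.sort_eq, Finset.insert_val_of_notMem (last_not_mem_map U),
        ← Multiset.cons_coe, Finset.sort_eq]
    exact h1.trans (List.perm_append_singleton _ _).symm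
  · exact Finset.pairwise_sort _ _
  · rw [List.pairwise_append]
    refine ⟨Finset.pairwise_sort _ _, List.pairwise_singleton _ _, ?_⟩
    intro a _ b hb
    rw [List.mem_singleton] at hb
    subst hb
    exact Fin.le_last a

lemma xU_map_castSucc {R : Type*} [CommRing R] {r : ℕ} (x : Fin (r + 1) → R)
    (U : Finset (Fin r)) :
    xU x (U.map Fin.castSuccEmb) = xU (x ∘ Fin.castSucc) U := by
  simp only [xU]
  rw [sort_map_castSucc, List.zipIdx_map, List.map_map]
  rfl

lemma xU_insert_last {R : Type*} [CommRing R] {r : ℕ} (x : Fin (r + 1) → R)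
    (U : Finset (Fin r)) :
    xU x (insert (Fin.last r) (U.map Fin.castSuccEmb))
      = xU (x ∘ Fin.castSucc) U * (x (Fin.last r) - (U.card : R)) := by
  have hm := xU_map_castSucc x U
  have hlen : ((U.map Fin.castSuccEmb).sort (· ≤ ·)).length = U.card := by
    rw [Finset.length_sort, Finset.card_map]
  simp only [xU] at hm ⊢
  rw [sort_insert_last, List.zipIdx_append, List.map_append, List.prod_append, hlen, hm]
  simp

lemma sum_xU_zero {R : Type*} [CommRing R] {r : ℕ} (x : Fin r → R) :
    (∑ U ∈ (Finset.univ : Finset (Fin r)).powersetCard 0, xU x U) = 1 := by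
  simp [Finset.powersetCard_zero, xU_empty]

lemma sum_xU_succ {R : Type*} [CommRing R] {r : ℕ} (x : Fin (r + 1) → R) (k : ℕ) :
    (∑ U ∈ (Finset.univ : Finset (Fin (r + 1))).powersetCard (k + 1), xU x U)
      = (∑ U ∈ (Finset.univ : Finset (Fin r)).powersetCard (k + 1), xU (x ∘ Fin.castSucc) U)
        + (∑ U ∈ (Finset.univ : Finset (Fin r)).powersetCard k, xU (x ∘ Fin.castSucc) U)
            * (x (Fin.last r) - (k : R)) := by
  classical
  have huniv : (Finset.univ : Finset (Fin (r + 1)))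
      = insert (Fin.last r) ((Finset.univ : Finset (Fin r)).map Fin.castSuccEmb) := by
    rw [Fin.univ_castSuccEmb, Finset.cons_eq_insert]
  have hlast : Fin.last r ∉ (Finset.univ : Finset (Fin r)).map Fin.castSuccEmb :=
    last_not_mem_map _
  rw [huniv, Finset.powersetCard_succ_insert hlast]
  have hdisj : Disjoint
      (((Finset.univ : Finset (Fin r)).map Fin.castSuccEmb).powersetCard (k + 1))
      ((((Finset.univ : Finset (Fin r)).map Fin.castSuccEmb).powersetCard k).image
        (insert (Fin.last r))) := by
    rw [Finset.disjoint_left]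
    intro A hA hA'
    rw [Finset.mem_powersetCard] at hA
    rw [Finset.mem_image] at hA'
    obtain ⟨B, -, rfl⟩ := hA'
    exact hlast (hA.1 (Finset.mem_insert_self _ _))
  rw [Finset.sum_union hdisj]
  congr 1
  · rw [Finset.powersetCard_map, Finset.sum_map]
    refine Finset.sum_congr rfl fun U _ => ?_
    rw [RelEmbedding.coe_toEmbedding, Finset.mapEmbedding_apply, xU_map_castSucc]
  · rw [Finset.sum_image, Finset.powersetCard_map, Finset.sum_map, Finset.sum_mul]
    · refine Finset.sum_congr rfl fun U hU => ?_
      rw [RelEmbedding.coe_toEmbedding, Finset.mapEmbedding_apply, xU_insert_last]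
      rw [Finset.mem_powersetCard] at hU
      rw [hU.2]
    · intro A hA B hB h
      rw [Finset.mem_coe, Finset.mem_powersetCard] at hA hB
      have hA' : Fin.last r ∉ A := fun hc => hlast (hA.1 hc)
      have hB' : Fin.last r ∉ B := fun hc => hlast (hB.1 hc)
      rw [← Finset.erase_insert hA', ← Finset.erase_insert hB', h]

lemma key_algebra {R : Type*} [CommRing R] (y a : R) (r : ℕ) (F T S : ℕ → R)
    (hFsucc : ∀ i, F (i + 1) = F i * (y - (i : R)))
    (hT0 : T 0 = 1) (hTtop : T (r + 1) = 0)
    (hS0 : S 0 = 1) (hSsucc : ∀ k, S (k + 1) = T (k + 1) + T k * (a - (k : R))) :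
    (∑ i ∈ Finset.range (r + 1), F i * T (r - i)) * (y + a - (r : R))
      = ∑ i ∈ Finset.range (r + 1 + 1), F i * S (r + 1 - i) := by
  have hC : ∑ j ∈ Finset.range (r + 2), F j * T (r + 1 - j)
      = ∑ i ∈ Finset.range (r + 1), F (i + 1) * T (r - i) := by
    rw [Finset.sum_range_succ' (fun j => F j * T (r + 1 - j)) (r + 1)]
    simp only [Nat.succ_sub_succ_eq_sub, Nat.sub_zero, hTtop, mul_zero, add_zero]
  have hC' : ∑ j ∈ Finset.range (r + 2), F j * T (r + 1 - j)
      = (∑ j ∈ Finset.range (r + 1), F j * T ((r - j) + 1)) + F (r + 1) := by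
    rw [Finset.sum_range_succ]
    simp only [Nat.sub_self, hT0, mul_one]
    congr 1
    refine Finset.sum_congr rfl fun j hj => ?_
    rw [Finset.mem_range] at hj
    congr 2
    omega
  have step1 : (∑ i ∈ Finset.range (r + 1), F i * T (r - i)) * (y + a - (r : R))
      = (∑ i ∈ Finset.range (r + 1), F (i + 1) * T (r - i))
        + ∑ i ∈ Finset.range (r + 1), F i * (T (r - i) * (a - ((r - i : ℕ) : R))) := by
    rw [Finset.sum_mul, ← Finset.sum_add_distrib]
    refine Finset.sum_congr rfl fun i hi => ?_
    rw [Finset.mem_range] at hi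
    have hi' : i ≤ r := by omega
    rw [hFsucc i, Nat.cast_sub hi']
    ring
  rw [step1, ← hC, hC']
  rw [Finset.sum_range_succ (fun i => F i * S (r + 1 - i)) (r + 1)]
  simp only [Nat.sub_self, hS0, mul_one]
  have : ∑ i ∈ Finset.range (r + 1), F i * S (r + 1 - i)
      = ∑ i ∈ Finset.range (r + 1),
          (F i * T ((r - i) + 1) + F i * (T (r - i) * (a - ((r - i : ℕ) : R)))) := by
    refine Finset.sum_congr rfl fun i hi => ?_
    rw [Finset.mem_range] at hi
    have : r + 1 - i = (r - i) + 1 := by omega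
    rw [this, hSsucc]
    ring
  rw [this, Finset.sum_add_distrib]
  ring

/-- Lemma `l s exp 2`:
`∏_{i=1}^{r} (y + x_i - i + 1) = ∑_{i=0}^{r} (y)_i ∑_{U ∈ P(r, r-i)} x(U)`. -/
theorem prod_y_add_x_eq_sum_falling {R : Type*} [CommRing R] (r : ℕ)
    (y : R) (x : Fin r → R) :
    ∏ i : Fin r, (y + x i - ((i : ℕ) : R))
      = ∑ i ∈ Finset.range (r + 1), fallR y i *
          ∑ U ∈ Finset.univ.powersetCard (r - i), xU x U := by
  induction r with
  | zero =>
      simp [fallR, xU_empty]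
  | succ r ih =>
      rw [Fin.prod_univ_castSucc]
      simp only [Fin.coe_castSucc, Fin.val_last]
      have ih' := ih (x ∘ Fin.castSucc)
      simp only [Function.comp_apply] at ih'
      rw [ih']
      exact key_algebra y (x (Fin.last r)) r (fallR y)
        (fun k => ∑ U ∈ (Finset.univ : Finset (Fin r)).powersetCard k, xU (x ∘ Fin.castSucc) U)
        (fun k => ∑ U ∈ (Finset.univ : Finset (Fin (r + 1))).powersetCard k, xU x U)
        (fun i => by simp only [fallR, Finset.prod_range_succ])
        (sum_xU_zero _)
        (by beta_reduce; rw [Finset.powersetCard_eq_empty.mpr (by simp), Finset.sum_empty])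
        (sum_xU_zero _)
        (fun k => sum_xU_succ x k)
end

section
/- For a nonnegative integer m, indeterminates d, s_1,...,s_m: ∏_{i=1}^{m} (d - i + 1 + ∑_{j=1}^{i} s_j) = ∑_{i=0}^{m} (d)_i ∑_{λ ∈ L(m,i)} c_m(λ) ∏_{j=1}^{m} (s_j)_{mult_j(λ)}, where L(m,i) is the set of multisets λ of m-i integers (with multiplicity) of the form λ = (λ(i+1),...,λ(m)) satisfying 1 ≤ λ(k-1) ≤ λ(k) ≤ k for all k, mult_j(λ) is the multiplicity of j in λ, and c_m(λ) = ∏_{i=1}^{m} C(m - i + 1 - ∑_{j=i+1}^{m} mult_j(λ), mult_i(λ)). -/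
/-- The multiplicity of the value `j` in the multiset encoded by the
(weakly increasing) value function `v`. -/
def multV {m n : ℕ} (v : Fin n → Fin (m + 1)) (j : ℕ) : ℕ :=
  (Finset.univ.filter fun k => (v k : ℕ) = j).card

/-- `c_m(λ) = ∏_{i=1}^{m} C(m - i + 1 - ∑_{j=i+1}^{m} mult_j(λ), mult_i(λ))` (1-based `i`). -/
def cV {m n : ℕ} (v : Fin n → Fin (m + 1)) : ℕ :=
  ∏ idx ∈ Finset.range m,
    Nat.choose (m - idx - ∑ jj ∈ Finset.Icc (idx + 2) m, multV v jj) (multV v (idx + 1))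

/-- The set `L(m,i)` of multisets `λ = (λ(i+1), …, λ(m))` with
`1 ≤ λ(k-1) ≤ λ(k) ≤ k`, encoded as weakly increasing value functions
`v : Fin (m - i) → Fin (m+1)` with `1 ≤ v k ≤ i + 1 + k`. -/
def LSet (m i : ℕ) : Finset (Fin (m - i) → Fin (m + 1)) :=
  Finset.univ.filter fun v =>
    (∀ k l : Fin (m - i), k ≤ l → v k ≤ v l) ∧
    ∀ k : Fin (m - i), 1 ≤ (v k : ℕ) ∧ (v k : ℕ) ≤ i + 1 + (k : ℕ)

open Finset

/-! ### Falling factorial lemmas -/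

section Fall
variable {R : Type*} [CommRing R]

lemma fallR_zero (x : R) : fallR x 0 = 1 := by simp [fallR]

lemma fallR_succ (x : R) (k : ℕ) : fallR x (k+1) = fallR x k * (x - (k:R)) := by
  simp [fallR, Finset.prod_range_succ]

lemma fallR_succ' (x : R) (k : ℕ) : fallR x (k+1) = x * fallR (x - 1) k := by
  rw [fallR, Finset.prod_range_succ']
  simp only [Nat.cast_zero, sub_zero, fallR]
  rw [mul_comm]
  congr 1
  apply Finset.prod_congr rfl
  intro j _
  push_cast
  ring

lemma fallR_eq_smeval (x : R) (k : ℕ) : fallR x k = (descPochhammer ℤ k).smeval x := by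
  induction k with
  | zero => simp [fallR, descPochhammer_zero, Polynomial.smeval_one]
  | succ k ih =>
    rw [fallR_succ, ih, descPochhammer_succ_right, Polynomial.smeval_mul]
    congr 1
    simp [Polynomial.smeval_sub, Polynomial.smeval_X, Polynomial.smeval_natCast]

lemma fallR_add (x y : R) (n N : ℕ) (hN : n < N) :
    fallR (x + y) n
      = ∑ a ∈ range N, (n.choose a : R) * fallR x a * fallR y (n - a) := by
  rw [fallR_eq_smeval, Ring.descPochhammer_smeval_add n (Commute.all x y),
    Finset.Nat.sum_antidiagonal_eq_sum_range_succ_mk]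
  rw [Finset.sum_subset (Finset.range_subset_range.2 hN)]
  · apply Finset.sum_congr rfl
    intro a _
    rw [fallR_eq_smeval x, fallR_eq_smeval y]
    ring
  · intro a _ ha
    have : n < a := by simp at ha; omega
    simp [Nat.choose_eq_zero_of_lt this]

end Fall

/-! ### Sum helpers -/

section helpers
variable {M : Type*} [AddCommMonoid M]

lemma sum_filter_lt_val {m : ℕ} (g : ℕ → M) (t : ℕ) :
    ∑ j ∈ univ.filter (fun j : Fin m => t < (j:ℕ)), g (j:ℕ)
      = ∑ b ∈ Ico (t+1) m, g b := by
  rw [Finset.sum_filter, Fin.sum_univ_eq_sum_range (fun b => if t < b then g b else 0),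
    ← Finset.sum_filter]
  congr 1
  ext b
  simp [Finset.mem_Ico]
  omega

lemma sum_filter_le_val {m : ℕ} (g : ℕ → M) (t : ℕ) :
    ∑ j ∈ univ.filter (fun j : Fin m => t ≤ (j:ℕ)), g (j:ℕ)
      = ∑ b ∈ Ico t m, g b := by
  rw [Finset.sum_filter, Fin.sum_univ_eq_sum_range (fun b => if t ≤ b then g b else 0),
    ← Finset.sum_filter]
  congr 1
  ext b
  simp [Finset.mem_Ico]
  omega

lemma sum_lt_val_lt {m : ℕ} (g : ℕ → M) (n : ℕ) (hn : n ≤ m) :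
    ∑ j ∈ univ.filter (fun j : Fin m => (j:ℕ) < n), g (j:ℕ)
      = ∑ b ∈ range n, g b := by
  rw [Finset.sum_filter, Fin.sum_univ_eq_sum_range (fun b => if b < n then g b else 0),
    ← Finset.sum_filter]
  congr 1
  ext b
  simp [Finset.mem_range]
  omega

lemma sum_Icc_shift (g : ℕ → M) (a c : ℕ) :
    ∑ jj ∈ Icc (a+1) c, g jj = ∑ b ∈ Ico a c, g (b+1) := by
  rw [← Finset.Ico_add_one_right_eq_Icc, ← Finset.map_add_right_Ico a c 1, Finset.sum_map]
  rfl

lemma card_filter_val_Ico {n a b : ℕ} (hb : b ≤ n) :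
    (univ.filter fun k : Fin n => a ≤ (k:ℕ) ∧ (k:ℕ) < b).card = b - a := by
  rw [← Nat.card_Ico a b]
  refine Finset.card_nbij (fun k => (k:ℕ)) ?_ ?_ ?_
  · intro k hk; simp at hk ⊢; omega
  · intro k _ l _ h; exact Fin.ext h
  · intro x hx
    simp only [Finset.coe_Ico, Set.mem_Ico] at hx
    refine ⟨⟨x, by omega⟩, ?_, rfl⟩
    simp only [Finset.coe_filter, Set.mem_setOf_eq, Finset.mem_univ, true_and, Finset.mem_coe,
      Finset.mem_filter]
    exact ⟨hx.1, hx.2⟩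

lemma sum_piFinset_succ {M : Type*} [AddCommMonoid M] (n N : ℕ)
    (f : (Fin (n+1) → ℕ) → M) :
    ∑ μ ∈ Fintype.piFinset (fun _ : Fin (n+1) => range N), f μ
      = ∑ a ∈ range N, ∑ ν ∈ Fintype.piFinset (fun _ : Fin n => range N),
          f (Fin.cons a ν) := by
  classical
  have h := Finset.filter_piFinset_eq_map_consEquiv
    (fun _ : Fin (n+1) => range N) (fun _ => True)
  simp only [Finset.filter_true] at h
  rw [h, Finset.sum_map, Finset.sum_product]
  rfl

end helpers

/-! ### The coefficient on multiplicity vectors -/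

def cMu (m : ℕ) (μ : Fin m → ℕ) : ℕ :=
  ∏ t : Fin m,
    Nat.choose (m - (t:ℕ) - ∑ j ∈ univ.filter (fun j : Fin m => t < j), μ j) (μ t)

lemma cMu_eq_zero {m : ℕ} {μ : Fin m → ℕ}
    (h : ∃ t : Fin m, m - (t:ℕ) < ∑ j ∈ univ.filter (fun j : Fin m => t ≤ j), μ j) :
    cMu m μ = 0 := by
  classical
  set g : ℕ → ℕ := fun b => if hb : b < m then μ ⟨b, hb⟩ else 0 with hgdef
  have hg : ∀ j : Fin m, g (j:ℕ) = μ j := by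
    intro j; simp [hgdef, j.isLt]
  have hsumle : ∀ t : Fin m,
      ∑ j ∈ univ.filter (fun j : Fin m => t ≤ j), μ j = ∑ b ∈ Ico (t:ℕ) m, g b := by
    intro t
    rw [← sum_filter_le_val g (t:ℕ)]
    apply Finset.sum_congr
    · apply Finset.filter_congr; intro j _; rw [Fin.le_def]
    · intro j _; exact (hg j).symm
  have hsumlt : ∀ t : Fin m,
      ∑ j ∈ univ.filter (fun j : Fin m => t < j), μ j = ∑ b ∈ Ico ((t:ℕ)+1) m, g b := by
    intro t
    rw [← sum_filter_lt_val g (t:ℕ)]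
    apply Finset.sum_congr
    · apply Finset.filter_congr; intro j _; rw [Fin.lt_def]
    · intro j _; exact (hg j).symm
  set V := (range m).filter (fun n => m - n < ∑ b ∈ Ico n m, g b) with hV
  have hVne : V.Nonempty := by
    obtain ⟨t, ht⟩ := h
    rw [hsumle t] at ht
    exact ⟨(t:ℕ), by simp [hV, t.isLt, ht]⟩
  set n0 := V.max' hVne with hn0def
  have hn0mem : n0 ∈ V := V.max'_mem hVne
  have hn0m : n0 < m := (Finset.mem_filter.1 hn0mem).1 |> Finset.mem_range.1
  have hviol : m - n0 < ∑ b ∈ Ico n0 m, g b := (Finset.mem_filter.1 hn0mem).2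
  have hnext : ∑ b ∈ Ico (n0+1) m, g b ≤ m - n0 - 1 := by
    by_cases hc : n0 + 1 < m
    · by_contra hcon
      push_neg at hcon
      have : n0 + 1 ∈ V := by
        simp only [hV, Finset.mem_filter, Finset.mem_range]
        exact ⟨hc, by omega⟩
      have := Finset.le_max' V _ this
      omega
    · have : Ico (n0+1) m = ∅ := by
        rw [Finset.Ico_eq_empty_iff]; omega
      rw [this]
      simp
  have hsplit : ∑ b ∈ Ico n0 m, g b = g n0 + ∑ b ∈ Ico (n0+1) m, g b :=
    Finset.sum_eq_sum_Ico_succ_bot hn0m g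
  unfold cMu
  apply Finset.prod_eq_zero (Finset.mem_univ (⟨n0, hn0m⟩ : Fin m))
  rw [hsumlt ⟨n0, hn0m⟩]
  apply Nat.choose_eq_zero_of_lt
  have := hg ⟨n0, hn0m⟩
  simp only [Fin.val_mk] at this ⊢
  rw [← this]
  omega

lemma cMu_succ_cons {m : ℕ} (a : ℕ) (μ : Fin m → ℕ) :
    cMu (m+1) (Fin.cons a μ) = Nat.choose (m + 1 - ∑ t, μ t) a * cMu m μ := by
  unfold cMu
  rw [Fin.prod_univ_succ]
  have h0 : ∑ j ∈ univ.filter (fun j : Fin (m+1) => (0 : Fin (m+1)) < j), Fin.cons a μ j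
      = ∑ t, μ t := by
    rw [Finset.sum_filter, Fin.sum_univ_succ]
    simp [Fin.succ_pos]
  congr 1
  · rw [h0]
    simp
  · apply Finset.prod_congr rfl
    intro t _
    have h1 : m + 1 - (t.succ : Fin (m+1)).val = m - (t:ℕ) := by
      rw [Fin.val_succ]; omega
    have h2 : ∑ j ∈ univ.filter (fun j : Fin (m+1) => t.succ < j), Fin.cons a μ j
        = ∑ j ∈ univ.filter (fun j : Fin m => t < j), μ j := by
      rw [Finset.sum_filter, Finset.sum_filter, Fin.sum_univ_succ]
      have hne : ¬ (t.succ < (0 : Fin (m+1))) := by simp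
      rw [if_neg hne, zero_add]
      apply Finset.sum_congr rfl
      intro j _
      rw [Fin.cons_succ]
      simp [Fin.succ_lt_succ_iff]
    rw [h1, h2, Fin.cons_succ]

/-! ### The core identity -/

lemma core_identity {R : Type*} [CommRing R] (m N : ℕ) (hN : m < N) (d : R) (s : Fin m → R) :
    ∏ i : Fin m, (d - ((i : ℕ) : R) + ∑ j ∈ Finset.univ.filter (fun j => j ≤ i), s j)
      = ∑ μ ∈ Fintype.piFinset (fun _ : Fin m => range N),
          fallR d (m - ∑ t, μ t) * (cMu m μ : R) * ∏ t, fallR (s t) (μ t) := by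
  induction m generalizing d with
  | zero =>
    have h1 : Fintype.piFinset (fun _ : Fin 0 => range N) = {(fun _ => 0 : Fin 0 → ℕ)} := by
      apply Finset.eq_singleton_iff_unique_mem.mpr
      constructor
      · exact Fintype.mem_piFinset.mpr (fun i => i.elim0)
      · intro f _
        funext i
        exact i.elim0
    rw [h1, Finset.sum_singleton]
    simp [cMu, fallR]
  | succ m ih =>
    have hmN : m < N := by omega
    have hL : ∏ i : Fin (m+1), (d - ((i:ℕ):R) + ∑ j ∈ univ.filter (fun j => j ≤ i), s j)
        = (d + s 0) *
          ∏ i : Fin m, ((d + s 0 - 1) - ((i:ℕ):R)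
            + ∑ j ∈ univ.filter (fun j => j ≤ i), s j.succ) := by
      rw [Fin.prod_univ_succ]
      congr 1
      · have h0 : univ.filter (fun j : Fin (m+1) => j ≤ 0) = {0} := by
          ext j; simp [Fin.le_zero_iff]
        rw [h0, Finset.sum_singleton]
        simp
      · apply Finset.prod_congr rfl
        intro i _
        have hs : ∑ j ∈ univ.filter (fun j : Fin (m+1) => j ≤ i.succ), s j
            = s 0 + ∑ j ∈ univ.filter (fun j : Fin m => j ≤ i), s j.succ := by
          rw [Finset.sum_filter, Fin.sum_univ_succ, if_pos (Fin.zero_le _)]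
          congr 1
          rw [Finset.sum_filter]
          apply Finset.sum_congr rfl
          intro j _
          simp [Fin.succ_le_succ_iff]
        rw [hs, Fin.val_succ]
        push_cast
        ring
    rw [hL, ih hmN (d + s 0 - 1) (fun j => s j.succ), sum_piFinset_succ, Finset.sum_comm,
      Finset.mul_sum]
    apply Finset.sum_congr rfl
    intro ν hν
    have hterm : ∀ a : ℕ,
        fallR d (m + 1 - ∑ t : Fin (m+1), (Fin.cons a ν : Fin (m+1) → ℕ) t) *
            (cMu (m+1) (Fin.cons a ν) : R) *
            ∏ t : Fin (m+1), fallR (s t) ((Fin.cons a ν : Fin (m+1) → ℕ) t)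
          = ((m + 1 - ∑ t, ν t).choose a : R) * fallR (s 0) a *
              fallR d ((m + 1 - ∑ t, ν t) - a) *
              ((cMu m ν : R) * ∏ t : Fin m, fallR (s t.succ) (ν t)) := by
      intro a
      rw [Fin.sum_cons, Fin.prod_univ_succ, cMu_succ_cons]
      simp only [Fin.cons_zero, Fin.cons_succ]
      have hsub : m + 1 - (a + ∑ t, ν t) = (m + 1 - ∑ t, ν t) - a := by omega
      rw [hsub]
      push_cast
      ring
    rw [Finset.sum_congr rfl (fun a _ => hterm a)]
    by_cases hc : ∑ t, ν t ≤ m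
    · have hK : m + 1 - ∑ t, ν t = (m - ∑ t, ν t) + 1 := by omega
      have hKN : m + 1 - ∑ t, ν t < N := by omega
      rw [show (d + s 0) * (fallR (d + s 0 - 1) (m - ∑ t, ν t) * (cMu m ν : R) *
            ∏ t : Fin m, fallR (s t.succ) (ν t))
          = fallR (d + s 0) ((m - ∑ t, ν t) + 1) *
            ((cMu m ν : R) * ∏ t : Fin m, fallR (s t.succ) (ν t)) from by
        rw [fallR_succ']; ring]
      rw [← hK, add_comm d (s 0), fallR_add (s 0) d _ N hKN, Finset.sum_mul]
    · have hm : 0 < m := by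
        rcases Nat.eq_zero_or_pos m with h | h
        · subst h; simp at hc
        · exact h
      have h0 : cMu m ν = 0 := by
        apply cMu_eq_zero
        refine ⟨⟨0, hm⟩, ?_⟩
        have hfe : univ.filter (fun j : Fin m => (⟨0, hm⟩ : Fin m) ≤ j) = univ := by
          ext j; simp [Fin.le_def]
        rw [hfe]
        simpa using (by omega : m - 0 < ∑ t, ν t)
      simp [h0]

/-! ### Prefix sums and the canonical monotone representative -/

section Bridge
variable {m : ℕ}

def prefixP (μ : Fin m → ℕ) (n : ℕ) : ℕ :=
  ∑ j ∈ univ.filter (fun j : Fin m => (j:ℕ) < n), μ j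

def suffQ (μ : Fin m → ℕ) (n : ℕ) : ℕ :=
  ∑ j ∈ univ.filter (fun j : Fin m => n ≤ (j:ℕ)), μ j

lemma prefixP_m (μ : Fin m → ℕ) : prefixP μ m = ∑ t, μ t := by
  unfold prefixP
  rw [Finset.filter_true_of_mem]
  intro j _
  exact j.isLt

lemma prefixP_mono (μ : Fin m → ℕ) {n n' : ℕ} (h : n ≤ n') : prefixP μ n ≤ prefixP μ n' := by
  apply Finset.sum_le_sum_of_subset
  intro j hj
  simp only [Finset.mem_filter] at hj ⊢
  exact ⟨hj.1, lt_of_lt_of_le hj.2 h⟩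

lemma prefixP_le_sum (μ : Fin m → ℕ) (n : ℕ) : prefixP μ n ≤ ∑ t, μ t := by
  rw [← prefixP_m μ]
  rcases le_or_gt n m with h | h
  · exact prefixP_mono μ h
  · apply le_of_eq
    unfold prefixP
    apply Finset.sum_congr _ (fun _ _ => rfl)
    apply Finset.filter_congr
    intro j _
    have := j.isLt
    constructor <;> intro <;> omega

lemma prefixP_succ (μ : Fin m → ℕ) {t : ℕ} (ht : t < m) :
    prefixP μ (t+1) = prefixP μ t + μ ⟨t, ht⟩ := by
  unfold prefixP
  have h : univ.filter (fun j : Fin m => (j:ℕ) < t+1)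
      = insert (⟨t, ht⟩ : Fin m) (univ.filter (fun j : Fin m => (j:ℕ) < t)) := by
    ext j
    simp only [Finset.mem_filter, Finset.mem_univ, true_and, Finset.mem_insert, Fin.ext_iff]
    omega
  rw [h, Finset.sum_insert (by simp)]
  ring

lemma prefixP_add_suffQ (μ : Fin m → ℕ) (n : ℕ) :
    prefixP μ n + suffQ μ n = ∑ t, μ t := by
  unfold prefixP suffQ
  rw [← Finset.sum_filter_add_sum_filter_not univ (fun j : Fin m => (j:ℕ) < n) μ]
  congr 1
  apply Finset.sum_congr _ (fun _ _ => rfl)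
  apply Finset.filter_congr
  intro j _
  exact not_lt.symm

/-- The `OK` predicate: all suffix sums are within the necessary bound. -/
def OKp (μ : Fin m → ℕ) : Prop :=
  ∀ t : Fin m, ∑ j ∈ univ.filter (fun j : Fin m => t ≤ j), μ j ≤ m - (t:ℕ)

instance (μ : Fin m → ℕ) : Decidable (OKp μ) := by unfold OKp; infer_instance

lemma suffQ_eq_filter (μ : Fin m → ℕ) (t : Fin m) :
    ∑ j ∈ univ.filter (fun j : Fin m => t ≤ j), μ j = suffQ μ (t:ℕ) := by
  apply Finset.sum_congr _ (fun _ _ => rfl)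
  apply Finset.filter_congr
  intro j _
  exact Fin.le_def

lemma suffQ_le_of_OK {μ : Fin m → ℕ} (hOK : OKp μ) {n : ℕ} (hn : n < m) :
    suffQ μ n ≤ m - n := by
  have := hOK ⟨n, hn⟩
  rwa [suffQ_eq_filter] at this

lemma OKp_of_not {μ : Fin m → ℕ} (h : ¬ OKp μ) :
    ∃ t : Fin m, m - (t:ℕ) < ∑ j ∈ univ.filter (fun j : Fin m => t ≤ j), μ j := by
  unfold OKp at h
  push_neg at h
  exact h

lemma tOf_exists (μ : Fin m → ℕ) (k : ℕ) : ∃ n, n = m ∨ k < prefixP μ n := ⟨m, Or.inl rfl⟩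

def tOf (μ : Fin m → ℕ) (k : ℕ) : ℕ := Nat.find (tOf_exists μ k)

lemma tOf_le (μ : Fin m → ℕ) (k : ℕ) : tOf μ k ≤ m := Nat.find_le (Or.inl rfl)

lemma lt_prefixP_tOf {μ : Fin m → ℕ} {k : ℕ} (hk : k < ∑ t, μ t) :
    k < prefixP μ (tOf μ k) := by
  rcases Nat.find_spec (tOf_exists μ k) with h | h
  · rw [show tOf μ k = m from h, prefixP_m]; exact hk
  · exact h

lemma prefixP_le_of_lt_tOf {μ : Fin m → ℕ} {k n : ℕ} (hn : n < tOf μ k) :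
    prefixP μ n ≤ k := by
  have := Nat.find_min (tOf_exists μ k) hn
  push_neg at this
  exact this.2

lemma tOf_mono (μ : Fin m → ℕ) {k l : ℕ} (h : k ≤ l) : tOf μ k ≤ tOf μ l := by
  apply Nat.find_mono
  intro n hn
  exact hn.imp id (fun hh => lt_of_le_of_lt h hh)

lemma one_le_tOf {μ : Fin m → ℕ} (hm : 0 < m) (k : ℕ) : 1 ≤ tOf μ k := by
  by_contra h
  push_neg at h
  have h0 : tOf μ k = 0 := by omega
  have hsp : tOf μ k = m ∨ k < prefixP μ (tOf μ k) := Nat.find_spec (tOf_exists μ k)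
  have hP0 : prefixP μ 0 = 0 := by simp [prefixP]
  rw [h0] at hsp
  rcases hsp with h2 | h2 <;> omega

def vOf (i : ℕ) (μ : Fin m → ℕ) : Fin (m - i) → Fin (m + 1) :=
  fun k => ⟨tOf μ (k:ℕ), Nat.lt_succ_of_le (tOf_le μ (k:ℕ))⟩

lemma vOf_mem {i : ℕ} {μ : Fin m → ℕ} (hi : i ≤ m) (hsum : ∑ t, μ t = m - i)
    (hOK : OKp μ) : vOf i μ ∈ LSet m i := by
  rw [LSet, Finset.mem_filter]
  refine ⟨Finset.mem_univ _, ?_, ?_⟩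
  · intro k l hkl
    exact tOf_mono μ (Fin.le_def.mp hkl)
  · intro k
    have hk : (k:ℕ) < ∑ t, μ t := by rw [hsum]; exact k.isLt
    have hm : 0 < m := by omega
    have h1 : 1 ≤ tOf μ (k:ℕ) := one_le_tOf hm (k:ℕ)
    refine ⟨h1, ?_⟩
    show tOf μ (k:ℕ) ≤ i + 1 + (k:ℕ)
    set n := tOf μ (k:ℕ) - 1 with hn
    have hnlt : n < tOf μ (k:ℕ) := by omega
    have hP : prefixP μ n ≤ (k:ℕ) := prefixP_le_of_lt_tOf hnlt
    have hnm : n < m := by have := tOf_le μ (k:ℕ); omega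
    have hPQ : prefixP μ n + suffQ μ n = m - i := by rw [prefixP_add_suffQ, hsum]
    have hQ : suffQ μ n ≤ m - n := suffQ_le_of_OK hOK hnm
    omega

lemma multV_vOf {i : ℕ} {μ : Fin m → ℕ} (hi : i ≤ m) (hsum : ∑ t, μ t = m - i)
    (t : Fin m) : multV (vOf i μ) ((t:ℕ)+1) = μ t := by
  unfold multV
  have hchar : ∀ k : Fin (m - i),
      (tOf μ (k:ℕ) = (t:ℕ)+1) ↔ (prefixP μ (t:ℕ) ≤ (k:ℕ) ∧ (k:ℕ) < prefixP μ ((t:ℕ)+1)) := by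
    intro k
    have hk : (k:ℕ) < ∑ t, μ t := by rw [hsum]; exact k.isLt
    constructor
    · intro h
      constructor
      · exact prefixP_le_of_lt_tOf (by omega)
      · have := lt_prefixP_tOf hk
        rwa [h] at this
    · rintro ⟨h1, h2⟩
      have hle : tOf μ (k:ℕ) ≤ (t:ℕ)+1 := Nat.find_le (Or.inr h2)
      have hge : (t:ℕ)+1 ≤ tOf μ (k:ℕ) := by
        by_contra hcon
        push_neg at hcon
        have hsp : tOf μ (k:ℕ) = m ∨ (k:ℕ) < prefixP μ (tOf μ (k:ℕ)) :=
          Nat.find_spec (tOf_exists μ (k:ℕ))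
        rcases hsp with h3 | h3
        · have := t.isLt
          have := tOf_le μ (k:ℕ)
          omega
        · have : prefixP μ (tOf μ (k:ℕ)) ≤ prefixP μ (t:ℕ) := prefixP_mono μ (by omega)
          omega
      omega
  have hfe : (univ.filter fun k : Fin (m-i) => ((vOf i μ k : Fin (m+1)) : ℕ) = (t:ℕ)+1)
      = univ.filter (fun k : Fin (m-i) =>
          prefixP μ (t:ℕ) ≤ (k:ℕ) ∧ (k:ℕ) < prefixP μ ((t:ℕ)+1)) := by
    apply Finset.filter_congr
    intro k _
    rw [show ((vOf i μ k : Fin (m+1)) : ℕ) = tOf μ (k:ℕ) from rfl]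
    exact hchar k
  rw [hfe, card_filter_val_Ico (le_trans (prefixP_le_sum μ _) (le_of_eq hsum)),
    prefixP_succ μ t.isLt]
  simp

end Bridge

section Rev
variable {m i : ℕ} {v : Fin (m-i) → Fin (m+1)}

lemma LSet_mem_iff {v : Fin (m-i) → Fin (m+1)} :
    v ∈ LSet m i ↔ (∀ k l : Fin (m - i), k ≤ l → v k ≤ v l) ∧
      ∀ k : Fin (m - i), 1 ≤ (v k : ℕ) ∧ (v k : ℕ) ≤ i + 1 + (k : ℕ) := by
  rw [LSet, Finset.mem_filter]
  simp

def toMu (v : Fin (m-i) → Fin (m+1)) : Fin m → ℕ := fun t => multV v ((t:ℕ)+1)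

lemma val_le_m (hi : i ≤ m)
    (hbd : ∀ k : Fin (m - i), 1 ≤ (v k : ℕ) ∧ (v k : ℕ) ≤ i + 1 + (k : ℕ))
    (k : Fin (m-i)) : (v k : ℕ) ≤ m := by
  have h1 := (hbd k).2
  have h2 := k.isLt
  omega

lemma prefixP_toMu (hi : i ≤ m)
    (hbd : ∀ k : Fin (m - i), 1 ≤ (v k : ℕ) ∧ (v k : ℕ) ≤ i + 1 + (k : ℕ))
    {n : ℕ} (hn : n ≤ m) :
    prefixP (toMu v) n = (univ.filter fun k : Fin (m-i) => (v k : ℕ) ≤ n).card := by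
  unfold prefixP toMu
  rw [show ∑ j ∈ univ.filter (fun j : Fin m => (j:ℕ) < n), multV v ((j:ℕ)+1)
      = ∑ b ∈ range n, multV v (b+1) from sum_lt_val_lt (fun b => multV v (b+1)) n hn]
  have hmap : ∀ k ∈ (univ.filter fun k : Fin (m-i) => (v k : ℕ) ≤ n),
      (v k : ℕ) - 1 ∈ range n := by
    intro k hk
    simp only [Finset.mem_filter, Finset.mem_univ, true_and] at hk
    rw [Finset.mem_range]
    have h1 := (hbd k).1
    omega
  rw [Finset.card_eq_sum_card_fiberwise hmap]
  apply Finset.sum_congr rfl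
  intro b hb
  rw [Finset.mem_range] at hb
  unfold multV
  congr 1
  rw [Finset.filter_filter]
  apply Finset.filter_congr
  intro k _
  have h1 := (hbd k).1
  constructor <;> intro <;> omega

lemma sum_toMu (hi : i ≤ m)
    (hbd : ∀ k : Fin (m - i), 1 ≤ (v k : ℕ) ∧ (v k : ℕ) ≤ i + 1 + (k : ℕ)) :
    ∑ t, toMu v t = m - i := by
  rw [← prefixP_m (toMu v), prefixP_toMu hi hbd (le_refl m),
    Finset.filter_true_of_mem (fun k _ => val_le_m hi hbd k)]
  simp

lemma OK_toMu (hi : i ≤ m)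
    (hmono : ∀ k l : Fin (m - i), k ≤ l → v k ≤ v l)
    (hbd : ∀ k : Fin (m - i), 1 ≤ (v k : ℕ) ∧ (v k : ℕ) ≤ i + 1 + (k : ℕ)) :
    OKp (toMu v) := by
  intro t
  rw [suffQ_eq_filter]
  have hPQ := prefixP_add_suffQ (toMu v) (t:ℕ)
  rw [sum_toMu hi hbd] at hPQ
  have hP := prefixP_toMu hi hbd (le_of_lt t.isLt)
  set S := univ.filter (fun k : Fin (m-i) => (t:ℕ) < (v k:ℕ)) with hS
  have hcompl : (univ.filter fun k : Fin (m-i) => (v k:ℕ) ≤ (t:ℕ)).card + S.card = m - i := by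
    have h := Finset.card_filter_add_card_filter_not
      (s := (univ : Finset (Fin (m-i)))) (p := fun k => (v k:ℕ) ≤ (t:ℕ))
    have h2 : univ.filter (fun k : Fin (m-i) => ¬ ((v k:ℕ) ≤ (t:ℕ))) = S := by
      rw [hS]
      apply Finset.filter_congr
      intro k _
      exact not_le
    rw [h2] at h
    rw [h]
    simp
  rcases Finset.eq_empty_or_nonempty S with hSe | hSne
  · have hc0 : S.card = 0 := by rw [hSe]; simp
    omega
  · set k0 := S.min' hSne with hk0
    have hk0S : k0 ∈ S := S.min'_mem hSne
    have hk0v : (t:ℕ) < (v k0 : ℕ) := by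
      rw [hS] at hk0S
      simpa using hk0S
    have hk0b := (hbd k0).2
    have hsub : S ⊆ Finset.Ici k0 := by
      intro k hk
      rw [Finset.mem_Ici]
      exact S.min'_le k hk
    have hcard : S.card ≤ (m - i) - (k0:ℕ) := by
      calc S.card ≤ (Finset.Ici k0).card := Finset.card_le_card hsub
        _ = (m - i) - (k0:ℕ) := Fin.card_Ici k0
    have hk0lt := k0.isLt
    have htlt := t.isLt
    omega

lemma vOf_toMu (hi : i ≤ m) (hv : v ∈ LSet m i) : vOf i (toMu v) = v := by
  obtain ⟨hmono, hbd⟩ := LSet_mem_iff.mp hv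
  funext k
  apply Fin.ext
  show tOf (toMu v) (k:ℕ) = (v k : ℕ)
  have hvk_le_m : (v k:ℕ) ≤ m := val_le_m hi hbd k
  have hle : tOf (toMu v) (k:ℕ) ≤ (v k:ℕ) := by
    apply Nat.find_le
    right
    rw [prefixP_toMu hi hbd hvk_le_m]
    have hsub : Finset.Iic k ⊆ univ.filter (fun k' : Fin (m-i) => (v k':ℕ) ≤ (v k:ℕ)) := by
      intro l hl
      simp only [Finset.mem_Iic] at hl
      simp only [Finset.mem_filter, Finset.mem_univ, true_and]
      exact Fin.le_def.mp (hmono l k hl)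
    have hcs := Finset.card_le_card hsub
    rw [Fin.card_Iic] at hcs
    omega
  have hge : (v k:ℕ) ≤ tOf (toMu v) (k:ℕ) := by
    by_contra hcon
    push_neg at hcon
    have hsp : tOf (toMu v) (k:ℕ) = m ∨ (k:ℕ) < prefixP (toMu v) (tOf (toMu v) (k:ℕ)) :=
      Nat.find_spec (tOf_exists _ _)
    rcases hsp with h3 | h3
    · omega
    · rw [prefixP_toMu hi hbd (tOf_le _ _)] at h3
      set D := univ.filter (fun k' : Fin (m-i) => (v k':ℕ) ≤ tOf (toMu v) (k:ℕ)) with hD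
      have hsubD : D ⊆ Finset.Iio k := by
        intro l hl
        rw [Finset.mem_Iio]
        by_contra hcl
        push_neg at hcl
        have hml := hmono k l hcl
        rw [hD, Finset.mem_filter] at hl
        rw [Fin.le_def] at hml
        omega
      have hcs := Finset.card_le_card hsubD
      rw [Fin.card_Iio] at hcs
      omega
  omega

lemma cV_eq_cMu : cV v = cMu m (toMu v) := by
  have hstep : ∀ t : Fin m,
      Nat.choose (m - (t:ℕ) - ∑ j ∈ univ.filter (fun j : Fin m => t < j), toMu v j)
          (toMu v t)
        = (fun idx => Nat.choose (m - idx - ∑ jj ∈ Icc (idx+2) m, multV v jj)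
            (multV v (idx+1))) (t:ℕ) := by
    intro t
    have h1 : ∑ j ∈ univ.filter (fun j : Fin m => t < j), toMu v j
        = ∑ jj ∈ Icc ((t:ℕ)+2) m, multV v jj := by
      rw [show ∑ j ∈ univ.filter (fun j : Fin m => t < j), toMu v j
          = ∑ j ∈ univ.filter (fun j : Fin m => (t:ℕ) < (j:ℕ)), multV v ((j:ℕ)+1) from
        Finset.sum_congr (Finset.filter_congr fun j _ => Fin.lt_def) (fun _ _ => rfl)]
      rw [sum_filter_lt_val (fun b => multV v (b+1)) (t:ℕ)]
      rw [show ((t:ℕ)+2) = ((t:ℕ)+1)+1 from rfl,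
        sum_Icc_shift (fun b => multV v b) ((t:ℕ)+1) m]
    rw [h1]
    rfl
  unfold cMu cV
  rw [Finset.prod_congr rfl (fun t _ => hstep t)]
  exact (Fin.prod_univ_eq_prod_range (fun idx => Nat.choose
    (m - idx - ∑ jj ∈ Icc (idx+2) m, multV v jj) (multV v (idx+1))) m).symm

end Rev

/-- Lemma `l s exp`:
`∏_{i=1}^{m} (d - i + 1 + ∑_{j=1}^{i} s_j)
  = ∑_{i=0}^{m} (d)_i ∑_{λ ∈ L(m,i)} c_m(λ) ∏_{j=1}^{m} (s_j)_{mult_j(λ)}`. -/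
theorem prod_d_shift_eq_sum_multisets {R : Type*} [CommRing R] (m : ℕ)
    (d : R) (s : Fin m → R) :
    ∏ i : Fin m, (d - ((i : ℕ) : R) + ∑ j ∈ Finset.univ.filter (fun j => j ≤ i), s j)
      = ∑ i ∈ Finset.range (m + 1), fallR d i *
          ∑ v ∈ LSet m i,
            (cV v : R) * ∏ j : Fin m, fallR (s j) (multV v ((j : ℕ) + 1)) := by
  classical
  rw [core_identity m (m+1) (Nat.lt_succ_self m) d s]
  set box := Fintype.piFinset (fun _ : Fin m => range (m+1)) with hbox
  set F : (Fin m → ℕ) → R :=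
    fun μ => fallR d (m - ∑ t, μ t) * (cMu m μ : R) * ∏ t, fallR (s t) (μ t) with hF
  have h1 : ∑ μ ∈ box, F μ = ∑ μ ∈ box.filter OKp, F μ := by
    rw [← Finset.sum_filter_add_sum_filter_not box OKp F]
    have hz : ∑ μ ∈ box.filter (fun μ => ¬ OKp μ), F μ = 0 := by
      apply Finset.sum_eq_zero
      intro μ hμ
      rw [Finset.mem_filter] at hμ
      have h0 : cMu m μ = 0 := cMu_eq_zero (OKp_of_not hμ.2)
      simp [hF, h0]
    rw [hz, add_zero]
  rw [h1, ← Finset.sum_fiberwise_of_maps_to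
    (g := fun μ : Fin m → ℕ => m - ∑ t, μ t) (t := range (m+1))
    (fun μ _ => Finset.mem_range.mpr (Nat.lt_succ_of_le (Nat.sub_le m _))) F]
  apply Finset.sum_congr rfl
  intro i hi
  rw [Finset.mem_range] at hi
  have him : i ≤ m := by omega
  have hfib : ∀ μ ∈ (box.filter OKp).filter (fun μ : Fin m → ℕ => m - ∑ t, μ t = i),
      (∑ t, μ t = m - i) ∧ OKp μ := by
    intro μ hμ
    simp only [Finset.mem_filter] at hμ
    obtain ⟨⟨hμbox, hμOK⟩, hμeq⟩ := hμ
    refine ⟨?_, hμOK⟩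
    have hle : ∑ t, μ t ≤ m := by
      rcases Nat.eq_zero_or_pos m with h0 | h0
      · subst h0
        simp
      · have hOK0 := hμOK ⟨0, h0⟩
        have hfe : univ.filter (fun j : Fin m => (⟨0, h0⟩ : Fin m) ≤ j) = univ := by
          ext j
          simp [Fin.le_def]
        rw [hfe] at hOK0
        omega
    omega
  rw [Finset.mul_sum]
  apply Finset.sum_nbij' (i := fun μ : Fin m → ℕ => vOf i μ)
    (j := fun v : Fin (m - i) → Fin (m+1) => toMu v)
  · intro μ hμ
    exact vOf_mem him (hfib μ hμ).1 (hfib μ hμ).2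
  · intro v hv
    obtain ⟨hmono, hbd⟩ := LSet_mem_iff.mp hv
    simp only [Finset.mem_filter]
    have hsum := sum_toMu him hbd
    refine ⟨⟨?_, OK_toMu him hmono hbd⟩, by omega⟩
    rw [hbox, Fintype.mem_piFinset]
    intro t
    rw [Finset.mem_range]
    have : toMu v t ≤ m - i := by
      rw [← hsum]
      exact Finset.single_le_sum (fun _ _ => Nat.zero_le _) (Finset.mem_univ t)
    omega
  · intro μ hμ
    funext t
    exact multV_vOf him (hfib μ hμ).1 t
  · intro v hv
    exact vOf_toMu him hv
  · intro μ hμ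
    have hsum := (hfib μ hμ).1
    have hmv : ∀ t : Fin m, multV (vOf i μ) ((t:ℕ)+1) = μ t := multV_vOf him hsum
    have hcv : (cV (vOf i μ) : ℕ) = cMu m μ := by
      rw [cV_eq_cMu]
      congr 1
      funext t
      exact hmv t
    rw [hF]
    simp only
    rw [hsum, show m - (m - i) = i from by omega, hcv,
      show (∏ j : Fin m, fallR (s j) (multV (vOf i μ) ((j:ℕ)+1)))
          = ∏ t, fallR (s t) (μ t) from
        Finset.prod_congr rfl (fun t _ => by rw [hmv t])]
    ring
end

section
/- Let d ≥ 2 and let z_1,...,z_d be the zeros of f(z) = ∑_{i=0}^{d} a_i z^i ∈ ℂ[z], with a_1 ≠ 0 and a_2 ≠ 0. If (α_0, α_1) is a common zero of the system f_{0,2}(x_0,x_1) - x_0 = 0 and f_{1,2}(x_0,x_1) - x_1 = 0 (i.e., a fixed point of NRS(2)), then α_0 = z_i + z_j for some pair of indices 1 ≤ i < j ≤ d. -/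
open Finset

/-- `f_{0,2}(x_0, x_1) - x_0`, the first auxiliary polynomial of the NRS(2) method:
`∑_{i} ∑_{j=0}^{⌊i/2⌋} -(a_{i+1}/a_2) ((-a_0/a_2)(-a_1/a_2)⁻¹ x_1)^j x_0^{i-2j} C(i-j, j)`. -/
noncomputable def F0 (a : ℕ → ℂ) (d : ℕ) (x0 x1 : ℂ) : ℂ :=
  ∑ i ∈ Finset.range d, ∑ j ∈ Finset.range (i / 2 + 1),
    -(a (i + 1) / a 2) * ((-a 0 / a 2) * (-a 1 / a 2)⁻¹ * x1) ^ j * x0 ^ (i - 2 * j) *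
      ((i - j).choose j : ℂ)

/-- `f_{1,2}(x_0, x_1) - x_1`, the second auxiliary polynomial of the NRS(2) method;
the `j = -1` part of the double sum contributes exactly the constant `-(a_1/a_2)`
(from `i = -2`, using the convention `C(-1,-1) = 1`). -/
noncomputable def F1 (a : ℕ → ℂ) (d : ℕ) (x0 x1 : ℂ) : ℂ :=
  -(a 1 / a 2) +
    ∑ i ∈ Finset.range (d - 1), ∑ j ∈ Finset.range (i / 2 + 1),
      -(a (i + 2) / a 2) * ((-a 0 / a 2) * (-a 1 / a 2)⁻¹ * x1) ^ j * x0 ^ (i - 2 * j) *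
        x1 * ((i - j).choose j : ℂ)


noncomputable def Bf (p s : ℂ) (i : ℕ) : ℂ :=
  ∑ j ∈ range (i+1), ((i-j).choose j : ℂ) * p^j * s^(i - 2*j)

noncomputable def Hf (u v : ℂ) (i : ℕ) : ℂ :=
  ∑ m ∈ range (i+1), u^m * v^(i-m)

lemma Bf_eq_half (p s : ℂ) (i : ℕ) :
    ∑ j ∈ range (i/2+1), ((i-j).choose j : ℂ) * p^j * s^(i - 2*j) = Bf p s i := by
  apply Finset.sum_subset
  · intro j hj; simp only [mem_range] at *; omega
  · intro j hj hj2
    simp only [mem_range] at hj hj2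
    have h : i - j < j := by omega
    rw [Nat.choose_eq_zero_of_lt h]
    simp

lemma Bf_rec (p s : ℂ) (i : ℕ) : Bf p s (i+2) = s * Bf p s (i+1) + p * Bf p s i := by
  have h1 : Bf p s (i+2) = s^(i+2)
      + ∑ j ∈ range (i+2), ((i-j).choose (j+1) : ℂ) * p^(j+1) * s^(i - 2*j)
      + ∑ j ∈ range (i+2), ((i-j).choose j : ℂ) * p^(j+1) * s^(i - 2*j) := by
    rw [Bf, Finset.sum_range_succ']
    have : ∀ j ∈ range (i+2),
        ((i+2-(j+1)).choose (j+1) : ℂ) * p^(j+1) * s^(i+2 - 2*(j+1))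
        = ((i-j).choose (j+1) : ℂ) * p^(j+1) * s^(i - 2*j)
          + ((i-j).choose j : ℂ) * p^(j+1) * s^(i - 2*j) := by
      intro j hj
      simp only [mem_range] at hj
      have e1 : i+2-(j+1) = (i-j)+1 ∨ (j = i+1) := by omega
      rcases e1 with e1 | e1
      · rw [e1]
        have e2 : i+2-2*(j+1) = i - 2*j := by omega
        rw [e2, Nat.choose_succ_succ]
        push_cast
        ring
      · subst e1
        have h1 : i+2-(i+1+1) = 0 := by omega
        have h0 : i - (i+1) = 0 := by omega
        rw [h1, h0]
        rw [Nat.choose_eq_zero_of_lt (by omega : (0:ℕ) < i+2),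
            Nat.choose_eq_zero_of_lt (by omega : (0:ℕ) < i+1)]
        simp
    rw [Finset.sum_congr rfl this, Finset.sum_add_distrib]
    simp
    ring
  have hext : ∑ j ∈ range (i+2), ((i-j).choose (j+1) : ℂ) * p^(j+1) * s^(i - 2*j)
      = ∑ j ∈ range (i+1), ((i-j).choose (j+1) : ℂ) * p^(j+1) * s^(i - 2*j) := by
    rw [Finset.sum_range_succ]
    have h0 : i - (i+1) = 0 := by omega
    rw [h0, Nat.choose_eq_zero_of_lt (by omega : (0:ℕ) < i+2)]
    simp
  have hext2 : ∑ j ∈ range (i+2), ((i-j).choose j : ℂ) * p^(j+1) * s^(i - 2*j)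
      = ∑ j ∈ range (i+1), ((i-j).choose j : ℂ) * p^(j+1) * s^(i - 2*j) := by
    rw [Finset.sum_range_succ]
    have h0 : i - (i+1) = 0 := by omega
    rw [h0, Nat.choose_eq_zero_of_lt (by omega : (0:ℕ) < i+1)]
    simp
  have h2 : s * Bf p s (i+1) = s^(i+2)
      + ∑ j ∈ range (i+1), ((i-j).choose (j+1) : ℂ) * p^(j+1) * s^(i - 2*j) := by
    rw [Bf, Finset.mul_sum, Finset.sum_range_succ']
    have : ∀ j ∈ range (i+1),
        s * (((i+1-(j+1)).choose (j+1) : ℂ) * p^(j+1) * s^(i+1 - 2*(j+1)))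
        = ((i-j).choose (j+1) : ℂ) * p^(j+1) * s^(i - 2*j) := by
      intro j hj
      have e1 : i+1-(j+1) = i - j := by omega
      rw [e1]
      by_cases hle : 2*j + 1 ≤ i
      · have e2 : i - 2*j = (i+1-2*(j+1)) + 1 := by omega
        rw [e2, pow_succ]
        ring
      · have : i - j < j + 1 := by omega
        rw [Nat.choose_eq_zero_of_lt this]
        simp
    rw [Finset.sum_congr rfl this]
    simp
    ring
  have h3 : p * Bf p s i
      = ∑ j ∈ range (i+1), ((i-j).choose j : ℂ) * p^(j+1) * s^(i - 2*j) := by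
    rw [Bf, Finset.mul_sum]
    apply Finset.sum_congr rfl
    intro j hj
    ring
  rw [h1, hext, hext2, h2, h3]

lemma Hf_rec (u v : ℂ) (i : ℕ) :
    Hf u v (i+2) = (u+v) * Hf u v (i+1) + (-(u*v)) * Hf u v i := by
  have e1 : (u+v) * Hf u v (i+1) = ∑ m ∈ range (i+2), u^(m+1) * v^(i+1-m)
      + ∑ m ∈ range (i+2), u^m * v^(i+2-m) := by
    rw [Hf, Finset.mul_sum, ← Finset.sum_add_distrib]
    apply Finset.sum_congr rfl
    intro m hm
    simp only [mem_range] at hm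
    have h : i+2-m = (i+1-m)+1 := by omega
    rw [h, pow_succ, pow_succ]
    ring
  have e2 : (u*v) * Hf u v i = ∑ m ∈ range (i+1), u^(m+1) * v^(i+1-m) := by
    rw [Hf, Finset.mul_sum]
    apply Finset.sum_congr rfl
    intro m hm
    simp only [mem_range] at hm
    have h : i+1-m = (i-m)+1 := by omega
    rw [h, pow_succ, pow_succ]
    ring
  have e3 : ∑ m ∈ range (i+2), u^(m+1) * v^(i+1-m)
      = ∑ m ∈ range (i+1), u^(m+1) * v^(i+1-m) + u^(i+2) := by
    rw [Finset.sum_range_succ]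
    have h : i+1-(i+1) = 0 := by omega
    rw [h]
    simp [pow_succ]
  have e4 : Hf u v (i+2) = ∑ m ∈ range (i+2), u^m * v^(i+2-m) + u^(i+2) := by
    rw [Hf, Finset.sum_range_succ]
    have h : i+2-(i+2) = 0 := by omega
    rw [h]
    simp [pow_succ]
  rw [e4, e1, e3, neg_mul, e2]
  ring

lemma Bf_eq_Hf (u v : ℂ) (i : ℕ) : Bf (-(u*v)) (u+v) i = Hf u v i := by
  induction i using Nat.strong_induction_on with
  | _ i ih =>
    match i, ih with
    | 0, _ => simp [Bf, Hf]
    | 1, _ =>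
      rw [Bf, Hf]
      rw [Finset.sum_range_succ, Finset.sum_range_succ, Finset.sum_range_succ,
        Finset.sum_range_succ]
      norm_num
      ring
    | (n+2), ih =>
      rw [Bf_rec, Hf_rec, ih n (by omega), ih (n+1) (by omega)]

lemma Hf_mul_sub (u v : ℂ) (i : ℕ) : Hf u v i * (u - v) = u^(i+1) - v^(i+1) := by
  have h := geom_sum₂_mul u v (i+1)
  simp only [Nat.add_sub_cancel] at h
  rw [Hf]
  exact h

-- Lemma I
lemma lemI (a : ℕ → ℂ) (d : ℕ) (u v : ℂ) :
    (∑ i ∈ range d, a (i+1) * Hf u v i) * (u - v)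
    = (∑ i ∈ range (d+1), a i * u^i) - (∑ i ∈ range (d+1), a i * v^i) := by
  rw [Finset.sum_mul]
  rw [Finset.sum_range_succ' (fun i => a i * u^i) d, Finset.sum_range_succ' (fun i => a i * v^i) d]
  simp only [pow_zero]
  have : ∀ i ∈ range d, a (i+1) * Hf u v i * (u - v)
      = a (i+1) * u^(i+1) - a (i+1) * v^(i+1) := by
    intro i _
    rw [mul_assoc, Hf_mul_sub]
    ring
  rw [Finset.sum_congr rfl this, Finset.sum_sub_distrib]
  ring

-- Lemma II
lemma lemII (a : ℕ → ℂ) (e : ℕ) (u v : ℂ) :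
    (u*v) * (∑ i ∈ range (e+1), a (i+2) * Hf u v i) * (u - v)
    = v * (∑ i ∈ range (e+3), a i * u^i) - u * (∑ i ∈ range (e+3), a i * v^i)
      + a 0 * (u - v) := by
  have hu : ∑ i ∈ range (e+3), a i * u^i
      = ∑ i ∈ range (e+1), a (i+2) * u^(i+2) + a 1 * u + a 0 := by
    rw [Finset.sum_range_succ' (fun i => a i * u^i) (e+2),
      Finset.sum_range_succ' (fun i => a (i+1) * u^(i+1)) (e+1)]
    simp [pow_succ]
  have hv : ∑ i ∈ range (e+3), a i * v^i
      = ∑ i ∈ range (e+1), a (i+2) * v^(i+2) + a 1 * v + a 0 := by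
    rw [Finset.sum_range_succ' (fun i => a i * v^i) (e+2),
      Finset.sum_range_succ' (fun i => a (i+1) * v^(i+1)) (e+1)]
    simp [pow_succ]
  rw [hu, hv, mul_assoc, Finset.sum_mul, Finset.mul_sum]
  have : ∀ i ∈ range (e+1), u * v * (a (i+2) * Hf u v i * (u - v))
      = v * (a (i+2) * u^(i+2)) - u * (a (i+2) * v^(i+2)) := by
    intro i _
    rw [mul_assoc (a (i+2)), Hf_mul_sub]
    ring
  rw [Finset.sum_congr rfl this, Finset.sum_sub_distrib, ← Finset.mul_sum, ← Finset.mul_sum]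
  ring

lemma Hf_diag (u : ℂ) (i : ℕ) : Hf u u i = ((i:ℂ)+1) * u^i := by
  rw [Hf]
  have : ∀ m ∈ range (i+1), u^m * u^(i-m) = u^i := by
    intro m hm
    simp only [mem_range] at hm
    rw [← pow_add]
    congr 1
    omega
  rw [Finset.sum_congr rfl this, Finset.sum_const, Finset.card_range]
  push_cast
  ring

-- Lemma IV
lemma lemIV (a : ℕ → ℂ) (e : ℕ) (u : ℂ) :
    u^2 * (∑ i ∈ range (e+1), a (i+2) * Hf u u i)
    = u * (∑ i ∈ range (e+2), a (i+1) * ((i:ℂ)+1) * u^i)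
      - (∑ i ∈ range (e+3), a i * u^i) + a 0 := by
  have hu : ∑ i ∈ range (e+3), a i * u^i
      = ∑ i ∈ range (e+1), a (i+2) * u^(i+2) + a 1 * u + a 0 := by
    rw [Finset.sum_range_succ' (fun i => a i * u^i) (e+2),
      Finset.sum_range_succ' (fun i => a (i+1) * u^(i+1)) (e+1)]
    simp [pow_succ]
  have hd : u * (∑ i ∈ range (e+2), a (i+1) * ((i:ℂ)+1) * u^i)
      = ∑ i ∈ range (e+1), a (i+2) * ((i:ℂ)+2) * u^(i+2) + a 1 * u := by
    rw [Finset.mul_sum, Finset.sum_range_succ'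
      (fun i => u * (a (i+1) * ((i:ℂ)+1) * u^i)) (e+1)]
    simp only [pow_succ]
    push_cast
    congr 1
    · apply Finset.sum_congr rfl
      intro i _
      ring
    · ring
  rw [hu, hd, Finset.mul_sum]
  have : ∀ i ∈ range (e+1), u^2 * (a (i+2) * Hf u u i)
      = a (i+2) * ((i:ℂ)+2) * u^(i+2) - a (i+2) * u^(i+2) := by
    intro i _
    rw [Hf_diag]
    ring
  rw [Finset.sum_congr rfl this, Finset.sum_sub_distrib]
  ring

lemma derivative_finset_prod {ι : Type*} [DecidableEq ι] (s : Finset ι) (f : ι → Polynomial ℂ) :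
    Polynomial.derivative (∏ i ∈ s, f i)
      = ∑ i ∈ s, (∏ j ∈ s.erase i, f j) * Polynomial.derivative (f i) := by
  induction s using Finset.induction_on with
  | empty => simp
  | @insert b s hb ih =>
    rw [Finset.sum_insert hb, Finset.erase_insert hb]
    have hc : ∀ i ∈ s, (∏ j ∈ (insert b s).erase i, f j) * Polynomial.derivative (f i)
        = f b * ((∏ j ∈ s.erase i, f j) * Polynomial.derivative (f i)) := by
      intro i hi
      have hib : b ≠ i := fun h => hb (h ▸ hi)
      rw [Finset.erase_insert_of_ne hib,
        Finset.prod_insert (fun h => hb (Finset.mem_of_mem_erase h))]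
      ring
    rw [Finset.sum_congr rfl hc, ← Finset.mul_sum, ← ih, Finset.prod_insert hb,
      Polynomial.derivative_mul]
    ring

lemma deriv_formula (d : ℕ) (a : ℕ → ℂ) (z : Fin d → ℂ)
    (hf : ∀ w : ℂ, ∑ i ∈ Finset.range (d+1), a i * w^i = a d * ∏ i : Fin d, (w - z i))
    (w : ℂ) :
    ∑ i ∈ Finset.range d, a (i+1) * ((i:ℂ)+1) * w^i
      = a d * ∑ m : Fin d, ∏ k ∈ Finset.univ.erase m, (w - z k) := by
  set P : Polynomial ℂ := ∑ i ∈ Finset.range (d+1), Polynomial.C (a i) * Polynomial.X^i with hP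
  set Q : Polynomial ℂ := Polynomial.C (a d) * ∏ i : Fin d, (Polynomial.X - Polynomial.C (z i)) with hQ
  have hPQ : P = Q := by
    apply Polynomial.funext
    intro r
    simp only [hP, hQ, Polynomial.eval_finset_sum, Polynomial.eval_mul, Polynomial.eval_pow,
      Polynomial.eval_C, Polynomial.eval_X, Polynomial.eval_prod, Polynomial.eval_sub]
    exact hf r
  have hdP : Polynomial.eval w (Polynomial.derivative P)
      = ∑ i ∈ Finset.range d, a (i+1) * ((i:ℂ)+1) * w^i := by
    rw [hP, Polynomial.derivative_sum]
    simp only [Polynomial.derivative_C_mul, Polynomial.derivative_X_pow]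
    rw [Polynomial.eval_finset_sum]
    simp only [Polynomial.eval_mul, Polynomial.eval_C, Polynomial.eval_natCast,
      Polynomial.eval_pow, Polynomial.eval_X]
    rw [Finset.sum_range_succ' (fun i => a i * ((i:ℂ) * w^(i-1))) d]
    simp only [Nat.cast_zero, zero_mul, mul_zero, add_zero, Nat.add_sub_cancel]
    apply Finset.sum_congr rfl
    intro i _
    push_cast
    ring
  have hdQ : Polynomial.eval w (Polynomial.derivative Q)
      = a d * ∑ m : Fin d, ∏ k ∈ Finset.univ.erase m, (w - z k) := by
    rw [hQ, Polynomial.derivative_mul, Polynomial.derivative_C, zero_mul, zero_add]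
    rw [derivative_finset_prod]
    simp only [Polynomial.derivative_sub, Polynomial.derivative_X, Polynomial.derivative_C,
      sub_zero, mul_one]
    rw [Polynomial.eval_mul, Polynomial.eval_C, Polynomial.eval_finset_sum]
    congr 1
    apply Finset.sum_congr rfl
    intro m _
    rw [Polynomial.eval_prod]
    apply Finset.prod_congr rfl
    intro k _
    simp
  rw [← hdP, ← hdQ, hPQ]

lemma nrs2_aux (e : ℕ) (a : ℕ → ℂ) (z : Fin (e+2) → ℂ)
    (had : a (e+2) ≠ 0)
    (hf : ∀ w : ℂ, ∑ i ∈ Finset.range (e+3), a i * w ^ i = a (e+2) * ∏ i : Fin (e+2), (w - z i))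
    (α0 α1 : ℂ) (u v : ℂ)
    (hsum : u + v = α0)
    (hS1 : ∑ i ∈ range (e+2), a (i+1) * Hf u v i = 0)
    (hS2 : a 1 + α1 * ∑ i ∈ range (e+1), a (i+2) * Hf u v i = 0)
    (huv : a 1 * (u*v) = -(a 0 * α1)) (hα1 : α1 ≠ 0) :
    ∃ i j : Fin (e+2), i < j ∧ α0 = z i + z j := by
  have deriv_formula := deriv_formula (e+2) a z (by
    intro w
    have h3 : e + 2 + 1 = e + 3 := by omega
    rw [h3]
    exact hf w)
  have lemI := lemI a (e+2)
  have h3 : e + 2 + 1 = e + 3 := by omega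
  rw [h3] at lemI
  have lemII := lemII a e
  have lemIV := lemIV a e
  -- step: (u*v) * S2 = a 0
  have hQ : (u*v) * (∑ i ∈ range (e+1), a (i+2) * Hf u v i) = a 0 := by
    have h2 : α1 * ((u*v) * (∑ i ∈ range (e+1), a (i+2) * Hf u v i) - a 0) = 0 := by
      linear_combination (u*v) * hS2 - huv
    rcases mul_eq_zero.mp h2 with h3 | h3
    · exact absurd h3 hα1
    · exact sub_eq_zero.mp h3
  have hfe : (∑ i ∈ range (e+3), a i * u^i) = (∑ i ∈ range (e+3), a i * v^i) := by
    have h := lemI u v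
    rw [hS1, zero_mul] at h
    exact (sub_eq_zero.mp h.symm)
  have hVU : v * (∑ i ∈ range (e+3), a i * u^i) - u * (∑ i ∈ range (e+3), a i * v^i) = 0 := by
    have h2 := lemII u v
    rw [hQ] at h2
    linear_combination -h2
  -- root extraction helper
  have root_of : ∀ x : ℂ, (∑ i ∈ range (e+3), a i * x^i) = 0 → ∃ i : Fin (e+2), x = z i := by
    intro x hx
    rw [hf x] at hx
    rcases mul_eq_zero.mp hx with h | h
    · exact absurd h had
    · obtain ⟨i, -, hi⟩ := Finset.prod_eq_zero_iff.mp h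
      exact ⟨i, sub_eq_zero.mp hi⟩
  by_cases hcase : u = v
  · -- double root case
    subst hcase
    have hfd : ∑ i ∈ range (e+2), a (i+1) * ((i:ℂ)+1) * u^i = 0 := by
      rw [← hS1]
      apply Finset.sum_congr rfl
      intro i _
      rw [Hf_diag]
      ring
    have hfu : (∑ i ∈ range (e+3), a i * u^i) = 0 := by
      have h4 := lemIV u
      rw [hfd, mul_zero, zero_sub] at h4
      have : u^2 * (∑ i ∈ range (e+1), a (i+2) * Hf u u i) = a 0 := by
        rw [sq]; exact hQ
      rw [this] at h4
      linear_combination h4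
    obtain ⟨i, hi⟩ := root_of u hfu
    have hsum0 : a (e+2) * ∑ m : Fin (e+2), ∏ k ∈ Finset.univ.erase m, (u - z k) = 0 := by
      rw [← deriv_formula u, hfd]
    have hsum1 : ∑ m : Fin (e+2), ∏ k ∈ Finset.univ.erase m, (u - z k) = 0 := by
      rcases mul_eq_zero.mp hsum0 with h | h
      · exact absurd h had
      · exact h
    have hcollapse : ∑ m : Fin (e+2), ∏ k ∈ Finset.univ.erase m, (u - z k)
        = ∏ k ∈ Finset.univ.erase i, (u - z k) := by
      apply Finset.sum_eq_single_of_mem i (Finset.mem_univ i)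
      intro m _ hmi
      apply Finset.prod_eq_zero (Finset.mem_erase.mpr ⟨Ne.symm hmi, Finset.mem_univ i⟩)
      rw [hi]; ring
    rw [hcollapse] at hsum1
    obtain ⟨j, hj, hj2⟩ := Finset.prod_eq_zero_iff.mp hsum1
    have hji : j ≠ i := (Finset.mem_erase.mp hj).1
    have hzj : u = z j := sub_eq_zero.mp hj2
    have hα : α0 = z i + z j := by rw [← hsum, ← hi, ← hzj]
    rcases lt_or_gt_of_ne hji with h | h
    · exact ⟨j, i, h, by rw [hα]; ring⟩
    · exact ⟨i, j, h, hα⟩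
  · -- distinct roots case
    have hfu : (∑ i ∈ range (e+3), a i * u^i) = 0 := by
      have h5 : (v - u) * (∑ i ∈ range (e+3), a i * u^i) = 0 := by
        linear_combination hVU - u * hfe
      rcases mul_eq_zero.mp h5 with h | h
      · exact absurd (by linear_combination -h : u = v) hcase
      · exact h
    have hfv : (∑ i ∈ range (e+3), a i * v^i) = 0 := by rw [← hfe]; exact hfu
    obtain ⟨i, hi⟩ := root_of u hfu
    obtain ⟨j, hj⟩ := root_of v hfv
    have hij : i ≠ j := by
      intro h
      apply hcase
      rw [hi, hj, h]
    have hα : α0 = z i + z j := by rw [← hsum, ← hi, ← hj]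
    rcases lt_or_gt_of_ne hij with h | h
    · exact ⟨i, j, h, hα⟩
    · exact ⟨j, i, h, by rw [hα]; ring⟩

/-- Theorem `t v02`: if `(α_0, α_1)` is a common zero of the NRS(2) system attached to a
degree-`d` polynomial `f` with zeros `z_1, …, z_d` and `a_1, a_2 ≠ 0`, then
`α_0 = z_i + z_j` for some `i < j`. -/
theorem nrs2_fixed_point_first_coordinate (d : ℕ) (hd : 2 ≤ d) (a : ℕ → ℂ)
    (z : Fin d → ℂ) (ha1 : a 1 ≠ 0) (ha2 : a 2 ≠ 0) (had : a d ≠ 0)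
    (hf : ∀ w : ℂ, ∑ i ∈ Finset.range (d + 1), a i * w ^ i = a d * ∏ i : Fin d, (w - z i))
    (α0 α1 : ℂ) (h0 : F0 a d α0 α1 = 0) (h1 : F1 a d α0 α1 = 0) :
    ∃ i j : Fin d, i < j ∧ α0 = z i + z j := by
  obtain ⟨e, rfl⟩ : ∃ e, d = e + 2 := ⟨d - 2, by omega⟩
  simp only [show e + 2 + 1 = e + 3 from by omega] at hf
  simp only [F0] at h0
  simp only [F1, show e + 2 - 1 = e + 1 from by omega] at h1
  set p : ℂ := (-a 0 / a 2) * (-a 1 / a 2)⁻¹ * α1 with hp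
  obtain ⟨w, hw⟩ : ∃ w : ℂ, w ^ 2 = α0^2 + 4*p :=
    IsAlgClosed.exists_pow_nat_eq (α0^2 + 4*p) (by norm_num)
  set u : ℂ := (α0 + w)/2 with hu
  set v : ℂ := (α0 - w)/2 with hv
  have hsum : u + v = α0 := by rw [hu, hv]; ring
  have huv0 : u * v = -p := by
    rw [hu, hv]
    field_simp
    linear_combination -hw
  have hpe : p = -(u*v) := by rw [huv0]; ring
  have hS1 : ∑ i ∈ range (e+2), a (i+1) * Hf u v i = 0 := by
    have hterm : ∀ i ∈ range (e+2),
        (∑ j ∈ range (i/2+1), -(a (i+1)/a 2) * p ^ j * α0^(i-2*j) * ((i-j).choose j : ℂ))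
        = -(a (i+1)/a 2) * Hf u v i := by
      intro i _
      have h1' : ∀ j ∈ range (i/2+1), -(a (i+1)/a 2) * p ^ j * α0^(i-2*j) * ((i-j).choose j : ℂ)
          = -(a (i+1)/a 2) * (((i-j).choose j : ℂ) * p^j * α0^(i-2*j)) := by
        intro j _; ring
      rw [Finset.sum_congr rfl h1', ← Finset.mul_sum, Bf_eq_half, hpe, ← hsum, Bf_eq_Hf]
    rw [Finset.sum_congr rfl hterm] at h0
    have heq : ∑ i ∈ range (e+2), a (i+1) * Hf u v i
        = (-(a 2)) * ∑ i ∈ range (e+2), (-(a (i+1)/a 2) * Hf u v i) := by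
      rw [Finset.mul_sum]
      apply Finset.sum_congr rfl
      intro i _
      field_simp
    rw [heq, h0, mul_zero]
  have hS2 : a 1 + α1 * ∑ i ∈ range (e+1), a (i+2) * Hf u v i = 0 := by
    have hterm : ∀ i ∈ range (e+1),
        (∑ j ∈ range (i/2+1),
          -(a (i+2)/a 2) * p ^ j * α0^(i-2*j) * α1 * ((i-j).choose j : ℂ))
        = -(a (i+2)/a 2) * α1 * Hf u v i := by
      intro i _
      have h1' : ∀ j ∈ range (i/2+1),
          -(a (i+2)/a 2) * p ^ j * α0^(i-2*j) * α1 * ((i-j).choose j : ℂ)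
          = (-(a (i+2)/a 2) * α1) * (((i-j).choose j : ℂ) * p^j * α0^(i-2*j)) := by
        intro j _; ring
      rw [Finset.sum_congr rfl h1', ← Finset.mul_sum, Bf_eq_half, hpe, ← hsum, Bf_eq_Hf]
    rw [Finset.sum_congr rfl hterm] at h1
    have heq : a 1 + α1 * ∑ i ∈ range (e+1), a (i+2) * Hf u v i
        = (-(a 2)) * (-(a 1/a 2) + ∑ i ∈ range (e+1), (-(a (i+2)/a 2) * α1 * Hf u v i)) := by
      rw [mul_add, Finset.mul_sum, Finset.mul_sum]
      congr 1
      · field_simp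
      · apply Finset.sum_congr rfl
        intro i _
        field_simp
    rw [heq, h1, mul_zero]
  have hα1 : α1 ≠ 0 := by
    intro h
    rw [h, zero_mul, add_zero] at hS2
    exact ha1 hS2
  have hkey : a 1 * (u*v) = -(a 0 * α1) := by
    rw [huv0, hp, inv_div]
    field_simp
  exact nrs2_aux e a z had hf α0 α1 u v hsum hS1 hS2 hkey hα1
end

section
/- For every integer r ≥ 1, there is a bijection f from A(r), the set of adjacency matrices of directed graphs on r vertices with no multiple edges, no loops, and no 2-cycles, to B(r-1, r), the set of 'recursively size-bounded' sequences of length r-1 of subsets of [r]; moreover this bijection preserves column sums, i.e., the in-degree sequence of the graph M equals the multiplicity vector ρ_1(f(M)), where ρ_1(σ)(j) = #{i : j ∈ σ(i)}. -/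
/-- The reduction map `R_j`: remove the first set containing `j` and delete `j`
from all later sets; if `j` occurs in no set, drop the last set. -/
def Rred {r : ℕ} (j : Fin r) (σ : List (Finset (Fin r))) : List (Finset (Fin r)) :=
  match σ.findIdx? (fun s => decide (j ∈ s)) with
  | none => σ.dropLast
  | some l => σ.take l ++ (σ.drop (l + 1)).map fun s => s.erase j

/-- A sequence `σ = (σ(1), …, σ(k))` of subsets is size-bounded if `|σ(i)| ≤ i`
for all `i` (1-based). -/
def SizeBounded {r : ℕ} (σ : List (Finset (Fin r))) : Prop :=
  ∀ i (h : i < σ.length), (σ.get ⟨i, h⟩).card ≤ i + 1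

/-- `σ ∈ B(r-1, r)`: `σ` is a size-bounded sequence of length `r - 1` such that
`R_i ∘ R_{i+1} ∘ ⋯ ∘ R_r (σ)` is size-bounded for each `1 ≤ i ≤ r`
(elements `1, …, r` are encoded by `Fin r`). -/
def MemB (r : ℕ) (σ : List (Finset (Fin r))) : Prop :=
  σ.length = r - 1 ∧ SizeBounded σ ∧
    ∀ i ∈ Finset.Icc 1 r,
      SizeBounded (List.foldl (fun τ t => Rred t τ) σ
        (((List.finRange r).drop (i - 1)).reverse))

/-- Multiplicity vector of a sequence of subsets: `ρ₁(σ)(j) = #{i : j ∈ σ(i)}`. -/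
def rho1 {r : ℕ} (σ : List (Finset (Fin r))) (j : Fin r) : ℕ :=
  σ.countP fun s => decide (j ∈ s)

/-- In-degree vector of an adjacency matrix: `ρ₂(M)(j) = ∑_i M_{i,j}`. -/
def rho2 {r : ℕ} (M : Fin r → Fin r → Bool) (j : Fin r) : ℕ :=
  (Finset.univ.filter fun i => M i j = true).card

set_option linter.unusedVariables false

namespace DSG


/-- spec for findIdx? -/
lemma findIdx?_spec {A : Type*} (p : A → Bool) :
    ∀ (l : List A) (i j : ℕ), List.findIdx?.go p l i = some j →
      ∃ n, j = i + n ∧ ∃ h : n < l.length, p (l.get ⟨n, h⟩) = true ∧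
        ∀ m (hm : m < n), p (l.get ⟨m, Nat.lt_trans hm h⟩) = false := by
  intro l
  induction l with
  | nil => intro i j h; simp [List.findIdx?.go] at h
  | cons a l ih =>
    intro i j h
    unfold List.findIdx?.go at h
    by_cases hp : p a = true
    · simp [hp] at h
      exact ⟨0, by omega, by simp, by simpa [← h] using hp, fun m hm => by omega⟩
    · simp [hp] at h
      obtain ⟨n, hn, hlt, hpn, hall⟩ := ih (i+1) j h
      refine ⟨n+1, by omega, by simpa using hlt, by simpa using hpn, ?_⟩
      intro m hm
      match m with
      | 0 => simpa using hp
      | (m+1) => simpa using hall m (by omega)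

lemma findIdx?_first {A : Type*} (p : A → Bool) :
    ∀ (α : List A) (s : A) (β : List A) (i : ℕ), (∀ a ∈ α, p a = false) → p s = true →
      List.findIdx?.go p (α ++ s :: β) i = some (i + α.length) := by
  intro α
  induction α with
  | nil => intro s β i _ hs; simp [List.findIdx?.go, hs]
  | cons a α ih =>
    intro s β i hα hs
    simp only [List.cons_append, List.findIdx?.go]
    have ha : p a = false := hα a (by simp)
    simp only [ha]
    rw [if_neg (by simp)]
    rw [ih s β (i+1) (fun x hx => hα x (by simp [hx])) hs]
    congr 1
    simp; omega

/-- Structure theorem for Rred. -/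
lemma Rred_structure {r : ℕ} (j : Fin r) (σ : List (Finset (Fin r))) :
    ((∀ s ∈ σ, j ∉ s) ∧ Rred j σ = σ.dropLast) ∨
    (∃ l, ∃ h : l < σ.length, j ∈ σ.get ⟨l, h⟩ ∧
      (∀ m (hm : m < l), j ∉ σ.get ⟨m, Nat.lt_trans hm h⟩) ∧
      Rred j σ = σ.take l ++ (σ.drop (l + 1)).map fun s => s.erase j) := by
  rcases heq : σ.findIdx? (fun s => decide (j ∈ s)) with _ | l
  · left
    constructor
    · intro s hs
      have := List.findIdx?_eq_none_iff.mp heq s hs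
      simpa using this
    · unfold Rred; rw [heq]
  · right
    obtain ⟨n, hn, hlt, hpn, hall⟩ := findIdx?_spec (fun s => decide (j ∈ s)) σ 0 l heq
    have : l = n := by omega
    subst this
    refine ⟨l, hlt, by simpa using hpn, fun m hm => by simpa using hall m hm, ?_⟩
    unfold Rred; rw [heq]

lemma Rred_of_first {r : ℕ} (j : Fin r) (α : List (Finset (Fin r))) (s : Finset (Fin r))
    (β : List (Finset (Fin r))) (hα : ∀ a ∈ α, j ∉ a) (hs : j ∈ s) :
    Rred j (α ++ s :: β) = α ++ β.map (fun t => t.erase j) := by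
  have h : List.findIdx? (fun s => decide (j ∈ s)) (α ++ s :: β) = some (0 + α.length) := findIdx?_first (fun s => decide (j ∈ s)) α s β 0 (fun a ha => by simpa using hα a ha)
    (by simpa using hs)
  unfold Rred
  rw [h]
  simp only [Nat.zero_add]
  congr 1
  · rw [List.take_left']; rfl
  · congr 1
    rw [show α.length + 1 = (α ++ [s]).length by simp]
    rw [show α ++ s :: β = (α ++ [s]) ++ β by simp]
    rw [List.drop_left]

lemma Rred_of_not_mem {r : ℕ} (j : Fin r) (σ : List (Finset (Fin r)))
    (h : ∀ s ∈ σ, j ∉ s) : Rred j σ = σ.dropLast := by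
  unfold Rred
  rw [List.findIdx?_eq_none_iff.mpr (fun s hs => by simpa using h s hs)]

lemma length_Rred {r : ℕ} (j : Fin r) (σ : List (Finset (Fin r))) :
    (Rred j σ).length = σ.length - 1 := by
  rcases Rred_structure j σ with ⟨_, h⟩ | ⟨l, hl, _, _, h⟩ <;> rw [h]
  · simp
  · simp; omega

lemma Rred_nil {r : ℕ} (j : Fin r) : Rred j ([] : List (Finset (Fin r))) = [] := by
  simp [Rred, List.findIdx?_nil]

lemma not_mem_Rred {r : ℕ} (j : Fin r) (σ : List (Finset (Fin r))) :
    ∀ s ∈ Rred j σ, j ∉ s := by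
  rcases Rred_structure j σ with ⟨hnone, h⟩ | ⟨l, hl, hmem, hbefore, h⟩ <;> rw [h]
  · exact fun s hs => hnone s (List.dropLast_subset σ hs)
  · intro s hs
    rcases List.mem_append.mp hs with hs | hs
    · obtain ⟨m, hm, rfl⟩ := List.mem_iff_get.mp hs
      have hmlt : (m : ℕ) < l := by
        have := m.isLt; simp at this; omega
      rw [show (List.take l σ).get m = σ.get ⟨m, Nat.lt_trans hmlt hl⟩ by simp]
      exact hbefore _ hmlt
    · obtain ⟨t, _, rfl⟩ := List.mem_map.mp hs
      exact Finset.notMem_erase j t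



lemma mem_of_mem_Rred {r : ℕ} (j : Fin r) (σ : List (Finset (Fin r)))
    (s : Finset (Fin r)) (hs : s ∈ Rred j σ) (x : Fin r) (hx : x ∈ s) :
    ∃ t ∈ σ, x ∈ t := by
  rcases Rred_structure j σ with ⟨_, h⟩ | ⟨l, hl, _, _, h⟩ <;> rw [h] at hs
  · exact ⟨s, List.dropLast_subset σ hs, hx⟩
  · rcases List.mem_append.mp hs with hs | hs
    · exact ⟨s, List.take_subset l σ hs, hx⟩
    · obtain ⟨t, ht, rfl⟩ := List.mem_map.mp hs
      exact ⟨t, List.drop_subset _ σ ht, Finset.mem_of_mem_erase hx⟩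

/-- Recursive characterization of membership in B. -/
def Good {r : ℕ} : ℕ → List (Finset (Fin r)) → Prop
  | 0, σ => σ = []
  | (L+1), σ => σ.length = L+1 ∧ SizeBounded σ ∧ (∀ s ∈ σ, ∀ x ∈ s, (x:ℕ) ≤ L+1) ∧
      ∀ h : L+1 < r, Good L (Rred ⟨L+1, h⟩ σ)

def F {r : ℕ} (js : List (Fin r)) (σ : List (Finset (Fin r))) : List (Finset (Fin r)) :=
  js.foldr (fun j τ => Rred j τ) σ

lemma F_nil {r : ℕ} (js : List (Fin r)) : F js ([] : List (Finset (Fin r))) = [] := by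
  induction js with
  | nil => rfl
  | cons j js ih => show Rred j (F js []) = []; rw [ih, Rred_nil]

def seg {r : ℕ} (k c : ℕ) : List (Fin r) := ((List.finRange r).drop k).take c

lemma seg_zero {r : ℕ} (k : ℕ) : (seg k 0 : List (Fin r)) = [] := rfl

lemma seg_succ {r : ℕ} (k c : ℕ) (h : k + c < r) :
    (seg k (c+1) : List (Fin r)) = seg k c ++ [⟨k+c, h⟩] := by
  unfold seg
  rw [List.take_succ]
  congr 1
  rw [List.getElem?_drop]
  rw [List.getElem?_eq_getElem (by simpa using h)]
  simp [List.getElem_finRange, Fin.cast]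

lemma F_seg_step' {r : ℕ} (k c m : ℕ) (h : m < r) (hm : k + c = m) (σ : List (Finset (Fin r))) :
    F (seg k (c+1)) σ = F (seg k c) (Rred ⟨m, h⟩ σ) := by
  subst hm
  rw [seg_succ k c h]
  unfold F
  rw [List.foldr_append]
  rfl

lemma F_seg_step {r : ℕ} (k c : ℕ) (h : k + c < r) (σ : List (Finset (Fin r))) :
    F (seg k (c+1)) σ = F (seg k c) (Rred ⟨k+c, h⟩ σ) := by
  rw [seg_succ k c h]
  unfold F
  rw [List.foldr_append]
  rfl

lemma supp_Rred {r L : ℕ} (h : L + 1 < r) (σ : List (Finset (Fin r)))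
    (hsupp : ∀ s ∈ σ, ∀ x ∈ s, (x:ℕ) ≤ L+1) :
    ∀ s ∈ Rred (⟨L+1, h⟩ : Fin r) σ, ∀ x ∈ s, (x:ℕ) ≤ L := by
  intro s hs x hx
  obtain ⟨t, ht, hxt⟩ := mem_of_mem_Rred _ σ s hs x hx
  have h1 : (x:ℕ) ≤ L + 1 := hsupp t ht x hxt
  have h2 : x ≠ ⟨L+1, h⟩ := fun he => not_mem_Rred _ σ s hs (he ▸ hx)
  have : (x:ℕ) ≠ L + 1 := fun hc => h2 (Fin.ext hc)
  omega

lemma good_iff {r : ℕ} : ∀ (L : ℕ), L < r → ∀ (σ : List (Finset (Fin r))),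
    Good L σ ↔ (σ.length = L ∧ (∀ s ∈ σ, ∀ x ∈ s, (x:ℕ) ≤ L) ∧
      ∀ k ≤ L+1, SizeBounded (F (seg k (L+1-k)) σ)) := by
  intro L
  induction L with
  | zero =>
    intro hL σ
    constructor
    · rintro rfl
      refine ⟨rfl, by simp, ?_⟩
      intro k hk
      rw [F_nil]
      intro i h; simp at h
    · rintro ⟨hlen, -, -⟩
      exact List.length_eq_zero_iff.mp hlen
  | succ L ih =>
    intro hL1 σ
    have hL : L < r := by omega
    show (σ.length = L+1 ∧ SizeBounded σ ∧ (∀ s ∈ σ, ∀ x ∈ s, (x:ℕ) ≤ L+1) ∧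
      ∀ h : L+1 < r, Good L (Rred ⟨L+1, h⟩ σ)) ↔ _
    constructor
    · rintro ⟨hlen, hSB, hsupp, hGood⟩
      refine ⟨hlen, hsupp, ?_⟩
      intro k hk
      rcases Nat.eq_or_lt_of_le hk with rfl | hklt
      · rw [show L+1+1-(L+1+1) = 0 from by omega, seg_zero]
        exact hSB
      · have hkL : k ≤ L+1 := by omega
        have hstep : F (seg k (L+2-k)) σ = F (seg k (L+1-k)) (Rred ⟨L+1, hL1⟩ σ) := by
          have h1 : L+2-k = (L+1-k)+1 := by omega
          rw [h1, F_seg_step' k (L+1-k) (L+1) hL1 (by omega)]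
        rw [show L+1+1 = L+2 from rfl, hstep]
        have := (ih hL (Rred ⟨L+1, hL1⟩ σ)).mp (hGood hL1)
        exact this.2.2 k hkL
    · rintro ⟨hlen, hsupp, hSB⟩
      have hSBσ : SizeBounded σ := by
        have := hSB (L+2) le_rfl
        rwa [show L+2-(L+2) = 0 from by omega, seg_zero] at this
      refine ⟨hlen, hSBσ, hsupp, ?_⟩
      intro h
      rw [ih hL (Rred ⟨L+1, h⟩ σ)]
      refine ⟨by rw [length_Rred, hlen]; omega, supp_Rred h σ hsupp, ?_⟩
      intro k hk
      have hstep : F (seg k (L+2-k)) σ = F (seg k (L+1-k)) (Rred ⟨L+1, h⟩ σ) := by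
        have h1 : L+2-k = (L+1-k)+1 := by omega
        rw [h1, F_seg_step' k (L+1-k) (L+1) h (by omega)]
      rw [← hstep]
      exact hSB k (by omega)

lemma memB_iff_good {r : ℕ} (hr : 1 ≤ r) (σ : List (Finset (Fin r))) :
    MemB r σ ↔ Good (r-1) σ := by
  rw [good_iff (r-1) (by omega) σ]
  unfold MemB
  have hfold : ∀ i : ℕ, (List.foldl (fun τ t => Rred t τ) σ
      (((List.finRange r).drop (i - 1)).reverse)) = F ((List.finRange r).drop (i-1)) σ := by
    intro i
    rw [List.foldl_reverse]
    rfl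
  have hdrop : ∀ k : ℕ, (List.finRange r).drop k = (seg k (r - k) : List (Fin r)) := by
    intro k
    unfold seg
    rw [List.take_of_length_le]
    simp
  constructor
  · rintro ⟨hlen, hSB, hred⟩
    refine ⟨hlen, fun s _ x _ => by have := x.isLt; omega, ?_⟩
    intro k hk
    rcases Nat.eq_or_lt_of_le hk with rfl | hklt
    · rw [show r-1+1-(r-1+1) = 0 from by omega, seg_zero]
      exact hSB
    · have hik : k + 1 ∈ Finset.Icc 1 r := by
        simp; omega
      have := hred (k+1) hik
      rw [hfold, hdrop] at this
      have he : r - 1 + 1 - k = r - k := by omega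
      rw [he]
      simpa using this
  · rintro ⟨hlen, _, hSB⟩
    have hSBσ : SizeBounded σ := by
      have := hSB (r-1+1) le_rfl
      rwa [show r-1+1-(r-1+1) = 0 from by omega, seg_zero] at this
    refine ⟨hlen, hSBσ, ?_⟩
    intro i hi
    simp only [Finset.mem_Icc] at hi
    rw [hfold, hdrop]
    have := hSB (i-1) (by omega)
    have he : r - 1 + 1 - (i-1) = r - (i-1) := by omega
    rwa [he] at this



variable {r : ℕ}

lemma map_erase_mapIdx (v : Fin r) (ρ : List (Finset (Fin r))) (c : ℕ → Prop)
    [DecidablePred c] (hρ : ∀ s ∈ ρ, v ∉ s) :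
    ((ρ.mapIdx fun i s => if c i then insert v s else s).map fun s => s.erase v) = ρ := by
  induction ρ generalizing c with
  | nil => rfl
  | cons a ρ ih =>
    rw [List.mapIdx_cons, List.map_cons]
    congr 1
    · by_cases h : c 0 <;> simp [h, Finset.erase_insert, Finset.erase_eq_of_notMem,
        hρ a (by simp)]
    · exact ih (fun i => c (i+1)) (fun s hs => hρ s (by simp [hs]))

lemma mem_mapIdx_insert (v : Fin r) (ρ : List (Finset (Fin r))) (c : ℕ → Prop)
    [DecidablePred c]
    (s : Finset (Fin r)) (hs : s ∈ ρ.mapIdx fun i t => if c i then insert v t else t) :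
    ∃ t ∈ ρ, s = t ∨ s = insert v t := by
  induction ρ generalizing c with
  | nil => simp [List.mapIdx_nil] at hs
  | cons a ρ ih =>
    rw [List.mapIdx_cons] at hs
    rcases List.mem_cons.mp hs with h | h
    · by_cases hc : c 0
      · exact ⟨a, by simp, Or.inr (by simpa [hc] using h)⟩
      · exact ⟨a, by simp, Or.inl (by simpa [hc] using h)⟩
    · obtain ⟨t, ht, hst⟩ := ih (fun i => c (i+1)) h
      exact ⟨t, by simp [ht], hst⟩

lemma countP_mapIdx_congr {A : Type*} (ρ : List A) (f : ℕ → A → A) (p : A → Bool)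
    (h : ∀ i s, p (f i s) = p s) :
    (ρ.mapIdx f).countP p = ρ.countP p := by
  induction ρ generalizing f with
  | nil => rfl
  | cons a ρ ih =>
    rw [List.mapIdx_cons, List.countP_cons, List.countP_cons, h 0 a,
      ih (fun i => f (i+1)) (fun i s => h (i+1) s)]

lemma countP_mapIdx_insert (v : Fin r) (ρ : List (Finset (Fin r))) (c : ℕ → Prop)
    [DecidablePred c] (hρ : ∀ s ∈ ρ, v ∉ s) :
    (ρ.mapIdx fun i s => if c i then insert v s else s).countP (fun s => decide (v ∈ s)) =
      (List.range ρ.length).countP (fun i => decide (c i)) := by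
  induction ρ generalizing c with
  | nil => rfl
  | cons a ρ ih =>
    rw [List.mapIdx_cons, List.countP_cons, show (a :: ρ).length = ρ.length + 1 from rfl,
      List.range_succ_eq_map, List.countP_cons,
      ih (fun i => c (i+1)) (fun s hs => hρ s (by simp [hs])), List.countP_map]
    have hva : v ∉ a := hρ a (by simp)
    by_cases hc : c 0 <;> simp [hc, hva, Function.comp] <;> rfl

lemma countP_range_eq_card (n : ℕ) (c : ℕ → Prop) [DecidablePred c] :
    (List.range n).countP (fun i => decide (c i)) = ((Finset.range n).filter c).card := by
  induction n with
  | zero => rfl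
  | succ n ih =>
    rw [List.range_succ, List.countP_append, Finset.range_add_one, Finset.filter_insert]
    by_cases hc : c n <;>
      simp [hc, ih, Finset.card_insert_of_notMem, List.countP_cons]

/-! ### The construction map -/

def consB (v : Fin r) (S : Finset (Fin r)) (W : Finset ℕ) (τ : List (Finset (Fin r))) :
    List (Finset (Fin r)) :=
  if hW : W.Nonempty then
    τ.take (W.min' hW) ++ insert v S ::
      ((τ.drop (W.min' hW)).mapIdx fun i s => if W.min' hW + 1 + i ∈ W then insert v s else s)
  else τ ++ [S]

def deconW (v : Fin r) (σ : List (Finset (Fin r))) : Finset ℕ :=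
  (Finset.range σ.length).filter fun p => v ∈ σ.getD p ∅

def deconS (v : Fin r) (σ : List (Finset (Fin r))) : Finset (Fin r) :=
  if hn : (deconW v σ).Nonempty then (σ.getD ((deconW v σ).min' hn) ∅).erase v
  else σ.getD (σ.length - 1) ∅

section Step

variable {L : ℕ} (v : Fin r) (τ : List (Finset (Fin r))) (S : Finset (Fin r)) (W : Finset ℕ)

lemma sizeBounded_getElem {σ : List (Finset (Fin r))} (h : SizeBounded σ) (i : ℕ)
    (hi : i < σ.length) : σ[i].card ≤ i + 1 := by simpa using h i hi

lemma sizeBounded_of_getElem {σ : List (Finset (Fin r))}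
    (h : ∀ i (hi : i < σ.length), σ[i].card ≤ i + 1) : SizeBounded σ :=
  fun i hi => by simpa using h i hi

lemma min'_bounds (hn : W.Nonempty) (hWIcc : W ⊆ Finset.Icc S.card L) :
    S.card ≤ W.min' hn ∧ W.min' hn ≤ L := by
  have := hWIcc (W.min'_mem hn)
  simpa using this

lemma consB_length (hτlen : τ.length = L) (hWIcc : W ⊆ Finset.Icc S.card L) :
    (consB v S W τ).length = L + 1 := by
  unfold consB
  split
  · rename_i hn
    obtain ⟨-, h2⟩ := min'_bounds S W hn hWIcc
    simp only [List.length_append, List.length_take, List.length_cons, List.length_mapIdx,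
      List.length_drop, hτlen]
    omega
  · simp [hτlen]

lemma consB_getElem_lt (hn : W.Nonempty) (p : ℕ) (hp : p < W.min' hn)
    (h1 : p < (consB v S W τ).length) (h2 : p < τ.length) :
    (consB v S W τ)[p] = τ[p] := by
  simp only [consB, dif_pos hn] at h1 ⊢
  rw [List.getElem_append_left (by rw [List.length_take]; omega)]
  exact List.getElem_take

lemma consB_getElem_min (hn : W.Nonempty) (hlτ : W.min' hn ≤ τ.length) (p : ℕ)
    (hp : p = W.min' hn) (h1 : p < (consB v S W τ).length) :
    (consB v S W τ)[p] = insert v S := by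
  subst hp
  simp only [consB, dif_pos hn] at h1 ⊢
  have hlen : (τ.take (W.min' hn)).length = W.min' hn := by
    simp [List.length_take]; omega
  rw [List.getElem_append_right (by omega)]
  simp [hlen]

lemma consB_getElem_gt (hn : W.Nonempty) (hlτ : W.min' hn ≤ τ.length) (p : ℕ)
    (hpl : W.min' hn < p) (h1 : p < (consB v S W τ).length) (h2 : p - 1 < τ.length) :
    (consB v S W τ)[p] = if p ∈ W then insert v (τ[p-1]) else τ[p-1] := by
  set l := W.min' hn with hl
  have hc : consB v S W τ = τ.take l ++ insert v S ::
      ((τ.drop l).mapIdx fun i s => if l + 1 + i ∈ W then insert v s else s) := by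
    simp only [consB, dif_pos hn, hl]
  simp only [hc] at h1 ⊢
  have hlen : (τ.take l).length = l := by rw [List.length_take]; omega
  rw [List.getElem_append_right (by rw [hlen]; omega)]
  have hidx : p - (τ.take l).length = (p - l - 1) + 1 := by omega
  simp only [hidx, List.getElem_cons_succ, List.getElem_mapIdx]
  have hidx2 : l + 1 + (p - l - 1) = p := by omega
  simp only [hidx2]
  have : (τ.drop l)[p - l - 1]'(by simp [List.length_drop]; omega) = τ[p-1] := by
    rw [List.getElem_drop]
    have : l + (p - l - 1) = p - 1 := by omega
    simp [this]
  rw [this]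

lemma card_le_of_supp (hLr : L + 1 ≤ r) (hS : ∀ x ∈ S, (x:ℕ) ≤ L) : S.card ≤ L + 1 := by
  classical
  have hsub : S ⊆ (Finset.range (L+1)).image
      (fun n => if h : n < r then (⟨n, h⟩ : Fin r) else ⟨0, by omega⟩) := by
    intro x hx
    simp only [Finset.mem_image, Finset.mem_range]
    exact ⟨x.1, by have := hS x hx; omega, by simp [x.isLt]⟩
  calc S.card ≤ _ := Finset.card_le_card hsub
    _ ≤ (Finset.range (L+1)).card := Finset.card_image_le
    _ = L + 1 := by simp

lemma consB_sizeBounded (hτlen : τ.length = L) (hWIcc : W ⊆ Finset.Icc S.card L)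
    (hLr : L + 1 ≤ r) (hτSB : SizeBounded τ) (hS : ∀ x ∈ S, (x:ℕ) ≤ L) :
    SizeBounded (consB v S W τ) := by
  apply sizeBounded_of_getElem
  intro i h
  have hlen : (consB v S W τ).length = L + 1 := consB_length v τ S W hτlen hWIcc
  have hiL : i < L + 1 := by rw [← hlen]; exact h
  by_cases hn : W.Nonempty
  · obtain ⟨hc1, hc2⟩ := min'_bounds S W hn hWIcc
    rcases Nat.lt_trichotomy i (W.min' hn) with hi | hi | hi
    · rw [consB_getElem_lt v τ S W hn i hi h (by omega)]
      exact sizeBounded_getElem hτSB i (by omega)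
    · rw [consB_getElem_min v τ S W hn (by omega) i hi h]
      have : (insert v S).card ≤ S.card + 1 := Finset.card_insert_le v S
      omega
    · rw [consB_getElem_gt v τ S W hn (by omega) i hi h (by omega)]
      have hb := sizeBounded_getElem hτSB (i-1) (by omega)
      have hci : (insert v (τ[i-1]'(by omega))).card ≤ (τ[i-1]'(by omega)).card + 1 :=
        Finset.card_insert_le _ _
      split
      · omega
      · omega
  · simp only [consB, dif_neg hn] at h ⊢
    rcases Nat.lt_or_ge i τ.length with hi | hi
    · rw [List.getElem_append_left hi]
      exact sizeBounded_getElem hτSB i hi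
    · rw [List.getElem_append_right hi]
      simp only [List.length_append, List.length_singleton] at h
      have hieq : i = τ.length := by omega
      simp only [hieq, Nat.sub_self, List.getElem_singleton]
      have := card_le_of_supp S hLr hS
      omega

lemma consB_supp (hv : (v:ℕ) = L + 1) (hτsupp : ∀ s ∈ τ, ∀ x ∈ s, (x:ℕ) ≤ L)
    (hS : ∀ x ∈ S, (x:ℕ) ≤ L) :
    ∀ s ∈ consB v S W τ, ∀ x ∈ s, (x:ℕ) ≤ L + 1 := by
  intro s hs x hx
  unfold consB at hs
  split at hs
  · rcases List.mem_append.mp hs with h | h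
    · exact le_trans (hτsupp s (List.take_subset _ τ h) x hx) (by omega)
    · rcases List.mem_cons.mp h with rfl | h
      · rcases Finset.mem_insert.mp hx with rfl | hx
        · omega
        · exact le_trans (hS x hx) (by omega)
      · obtain ⟨t, ht, hst⟩ := mem_mapIdx_insert v _ _ s h
        have htsupp := hτsupp t (List.drop_subset _ τ ht)
        rcases hst with rfl | rfl
        · exact le_trans (htsupp x hx) (by omega)
        · rcases Finset.mem_insert.mp hx with rfl | hx
          · omega
          · exact le_trans (htsupp x hx) (by omega)
  · rcases List.mem_append.mp hs with h | h
    · exact le_trans (hτsupp s h x hx) (by omega)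
    · rw [List.mem_singleton] at h
      subst h
      exact le_trans (hS x hx) (by omega)

lemma not_mem_of_supp (hv : (v:ℕ) = L + 1) (hτsupp : ∀ s ∈ τ, ∀ x ∈ s, (x:ℕ) ≤ L) :
    ∀ s ∈ τ, v ∉ s :=
  fun s hs hmem => by have := hτsupp s hs v hmem; omega

lemma Rred_consB (hv : (v:ℕ) = L + 1) (hτsupp : ∀ s ∈ τ, ∀ x ∈ s, (x:ℕ) ≤ L)
    (hSv : v ∉ S) :
    Rred v (consB v S W τ) = τ := by
  have hvτ := not_mem_of_supp v τ hv hτsupp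
  unfold consB
  split
  · rename_i hn
    rw [Rred_of_first v _ _ _ (fun a ha => hvτ a (List.take_subset _ τ ha))
      (Finset.mem_insert_self v S)]
    rw [map_erase_mapIdx v _ _ (fun s hs => hvτ s (List.drop_subset _ τ hs))]
    exact List.take_append_drop _ τ
  · rw [Rred_of_not_mem v _ ?_, List.dropLast_concat]
    intro s hs
    rcases List.mem_append.mp hs with h | h
    · exact hvτ s h
    · rw [List.mem_singleton] at h; subst h; exact hSv

lemma deconW_consB (hv : (v:ℕ) = L + 1) (hτlen : τ.length = L)
    (hWIcc : W ⊆ Finset.Icc S.card L) (hτsupp : ∀ s ∈ τ, ∀ x ∈ s, (x:ℕ) ≤ L)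
    (hS : ∀ x ∈ S, (x:ℕ) ≤ L) :
    deconW v (consB v S W τ) = W := by
  have hvτ := not_mem_of_supp v τ hv hτsupp
  have hlen := consB_length v τ S W hτlen hWIcc
  ext p
  simp only [deconW, Finset.mem_filter, Finset.mem_range, hlen]
  constructor
  · rintro ⟨hp, hmem⟩
    rw [List.getD_eq_getElem _ _ (by omega)] at hmem
    by_cases hn : W.Nonempty
    · obtain ⟨hc1, hc2⟩ := min'_bounds S W hn hWIcc
      rcases Nat.lt_trichotomy p (W.min' hn) with hi | hi | hi
      · rw [consB_getElem_lt v τ S W hn p hi (by omega) (by omega)] at hmem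
        exact absurd hmem (hvτ _ (List.getElem_mem _))
      · exact hi ▸ W.min'_mem hn
      · rw [consB_getElem_gt v τ S W hn (by omega) p hi (by omega) (by omega)] at hmem
        split at hmem
        · assumption
        · exact absurd hmem (hvτ _ (List.getElem_mem _))
    · exfalso
      simp only [consB, dif_neg hn] at hmem
      rcases Nat.lt_or_ge p τ.length with hi | hi
      · rw [List.getElem_append_left hi] at hmem
        exact hvτ _ (List.getElem_mem _) hmem
      · rw [List.getElem_append_right hi] at hmem
        simp only [List.getElem_singleton] at hmem
        have := hS v hmem
        omega
  · intro hp
    have hn : W.Nonempty := ⟨p, hp⟩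
    obtain ⟨hc1, hc2⟩ := min'_bounds S W hn hWIcc
    have hpL : p ≤ L := by have := hWIcc hp; simp at this; omega
    refine ⟨by omega, ?_⟩
    rw [List.getD_eq_getElem _ _ (by omega)]
    rcases Nat.lt_trichotomy p (W.min' hn) with hi | hi | hi
    · exact absurd (W.min'_le p hp) (by omega)
    · rw [consB_getElem_min v τ S W hn (by omega) p hi (by omega)]
      exact Finset.mem_insert_self v S
    · rw [consB_getElem_gt v τ S W hn (by omega) p hi (by omega) (by omega)]
      rw [if_pos hp]
      exact Finset.mem_insert_self v _

lemma deconS_consB (hv : (v:ℕ) = L + 1) (hτlen : τ.length = L)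
    (hWIcc : W ⊆ Finset.Icc S.card L) (hτsupp : ∀ s ∈ τ, ∀ x ∈ s, (x:ℕ) ≤ L)
    (hS : ∀ x ∈ S, (x:ℕ) ≤ L) :
    deconS v (consB v S W τ) = S := by
  have hvS : v ∉ S := fun hc => by have := hS v hc; omega
  have hlen := consB_length v τ S W hτlen hWIcc
  unfold deconS
  rw [deconW_consB v τ S W hv hτlen hWIcc hτsupp hS]
  split
  · rename_i hn
    obtain ⟨hc1, hc2⟩ := min'_bounds S W hn hWIcc
    rw [List.getD_eq_getElem _ _ (by omega)]
    rw [consB_getElem_min v τ S W hn (by omega) _ rfl (by omega)]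
    exact Finset.erase_insert hvS
  · rename_i hn
    have hWe : W = ∅ := Finset.not_nonempty_iff_eq_empty.mp hn
    simp only [consB, dif_neg hn, hlen]
    rw [List.getD_eq_getElem _ _ (by simp [List.length_append, hτlen])]
    rw [List.getElem_append_right (by simp [hτlen])]
    simp [hτlen]

lemma rho1_consB_ne (hv : (v:ℕ) = L + 1) (j : Fin r) (hj : j ≠ v) :
    (consB v S W τ).countP (fun s => decide (j ∈ s)) =
      τ.countP (fun s => decide (j ∈ s)) + (if j ∈ S then 1 else 0) := by
  unfold consB
  split
  · rename_i hn
    rw [List.countP_append, List.countP_cons]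
    rw [countP_mapIdx_congr _ _ _ (fun i s => by
      by_cases h : W.min' hn + 1 + i ∈ W <;> simp [h, Finset.mem_insert, hj])]
    conv_rhs => rw [← List.take_append_drop (W.min' hn) τ]
    rw [List.countP_append]
    have : (decide (j ∈ insert v S) = true) = (j ∈ S) := by
      simp [Finset.mem_insert, hj]
    simp only [this]
    by_cases hjS : j ∈ S <;> simp [hjS] <;> omega
  · rw [List.countP_append]
    simp only [List.countP_singleton]
    by_cases hjS : j ∈ S <;> simp [hjS]

lemma rho1_consB_v (hv : (v:ℕ) = L + 1) (hτlen : τ.length = L)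
    (hWIcc : W ⊆ Finset.Icc S.card L) (hτsupp : ∀ s ∈ τ, ∀ x ∈ s, (x:ℕ) ≤ L)
    (hS : ∀ x ∈ S, (x:ℕ) ≤ L) :
    (consB v S W τ).countP (fun s => decide (v ∈ s)) = W.card := by
  have hvτ := not_mem_of_supp v τ hv hτsupp
  have hvS : v ∉ S := fun hc => by have := hS v hc; omega
  unfold consB
  split
  · rename_i hn
    obtain ⟨hc1, hc2⟩ := min'_bounds S W hn hWIcc
    rw [List.countP_append, List.countP_cons]
    rw [List.countP_eq_zero.mpr (fun a ha => by
      simp [hvτ a (List.take_subset _ τ ha)])]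
    rw [countP_mapIdx_insert v _ _ (fun s hs => hvτ s (List.drop_subset _ τ hs))]
    rw [countP_range_eq_card]
    have hcard : ((Finset.range (τ.drop (W.min' hn)).length).filter
        (fun i => W.min' hn + 1 + i ∈ W)).card = (W.erase (W.min' hn)).card := by
      apply Finset.card_bij' (fun i _ => W.min' hn + 1 + i)
        (fun p _ => p - W.min' hn - 1)
      · intro a ha
        simp only [Finset.mem_filter, Finset.mem_range] at ha
        simp only [Finset.mem_erase]
        exact ⟨by omega, ha.2⟩
      · intro p hp
        simp only [Finset.mem_erase] at hp
        have h1 : W.min' hn ≤ p := W.min'_le p hp.2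
        have h2 : p ≤ L := by have := hWIcc hp.2; simp at this; omega
        simp only [Finset.mem_filter, Finset.mem_range, List.length_drop, hτlen]
        constructor
        · omega
        · have : W.min' hn + 1 + (p - W.min' hn - 1) = p := by
            rcases Nat.eq_or_lt_of_le h1 with rfl | h
            · exact absurd rfl hp.1
            · omega
          rw [this]; exact hp.2
      · intro a ha; omega
      · intro p hp
        simp only [Finset.mem_erase] at hp
        have h1 : W.min' hn ≤ p := W.min'_le p hp.2
        rcases Nat.eq_or_lt_of_le h1 with rfl | h
        · exact absurd rfl hp.1
        · omega
    rw [hcard, Finset.card_erase_of_mem (W.min'_mem hn)]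
    have hpos : 0 < W.card := Finset.card_pos.mpr hn
    simp [hvS, Finset.mem_insert]
    omega
  · rename_i hn
    have hWe : W = ∅ := Finset.not_nonempty_iff_eq_empty.mp hn
    rw [List.countP_append]
    rw [List.countP_eq_zero.mpr (fun a ha => by simp [hvτ a ha])]
    simp [hWe, hvS]

lemma mem_deconW (σ : List (Finset (Fin r))) (p : ℕ) :
    p ∈ deconW v σ ↔ ∃ h : p < σ.length, v ∈ σ[p] := by
  simp only [deconW, Finset.mem_filter, Finset.mem_range]
  constructor
  · rintro ⟨h1, h2⟩
    rw [List.getD_eq_getElem _ _ h1] at h2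
    exact ⟨h1, h2⟩
  · rintro ⟨h1, h2⟩
    exact ⟨h1, by rwa [List.getD_eq_getElem _ _ h1]⟩

lemma no_v_take (σ : List (Finset (Fin r))) (l : ℕ)
    (hfirst : ∀ p (hp : p < σ.length), p < l → v ∉ σ[p]) :
    ∀ a ∈ σ.take l, v ∉ a := by
  intro a ha
  obtain ⟨m, hm⟩ := List.mem_iff_get.mp ha
  have hmlt : (m : ℕ) < l ∧ (m : ℕ) < σ.length := by
    have := m.isLt; simp [List.length_take] at this; omega
  rw [← hm, List.get_eq_getElem, List.getElem_take]
  exact hfirst m hmlt.2 hmlt.1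

lemma cons_decon (σ : List (Finset (Fin r))) (hσlen : σ.length = L + 1)
    (hSB : SizeBounded σ) :
    consB v (deconS v σ) (deconW v σ) (Rred v σ) = σ := by
  by_cases hn : (deconW v σ).Nonempty
  · set l := (deconW v σ).min' hn with hldef
    have hlmem := (deconW v σ).min'_mem hn
    rw [mem_deconW] at hlmem
    obtain ⟨hl, hvl⟩ := hlmem
    have hfirst : ∀ p (hp : p < σ.length), p < l → v ∉ σ[p] := by
      intro p hp hpl hvp
      have : p ∈ deconW v σ := (mem_deconW v σ p).mpr ⟨hp, hvp⟩
      have := (deconW v σ).min'_le p this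
      omega
    have hdecomp : σ.take l ++ σ[l] :: σ.drop (l+1) = σ := by
      rw [← List.drop_eq_getElem_cons hl, List.take_append_drop]
    have hRred : Rred v σ = σ.take l ++ (σ.drop (l+1)).map (fun t => t.erase v) := by
      conv_lhs => rw [← hdecomp]
      exact Rred_of_first v _ _ _ (no_v_take v σ l hfirst) hvl
    have hS : deconS v σ = σ[l].erase v := by
      unfold deconS
      rw [dif_pos hn, List.getD_eq_getElem _ _ (by omega)]
    have hWmin : (deconW v σ).min' hn = l := rfl
    unfold consB
    rw [dif_pos hn]
    have htake : (Rred v σ).take l = σ.take l := by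
      rw [hRred]
      exact List.take_left' (by rw [List.length_take]; omega)
    have hdrop : (Rred v σ).drop l = (σ.drop (l+1)).map (fun t => t.erase v) := by
      rw [hRred]
      exact List.drop_left' (by rw [List.length_take]; omega)
    rw [hWmin, htake, hdrop, hS, Finset.insert_erase hvl]
    rw [show ((σ.drop (l+1)).map (fun t => t.erase v)).mapIdx
        (fun i s => if l + 1 + i ∈ deconW v σ then insert v s else s) = σ.drop (l+1) from ?_]
    · exact hdecomp
    · apply List.ext_getElem (by simp)
      intro n h1 h2
      simp only [List.getElem_mapIdx, List.getElem_map, List.getElem_drop]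
      have hn2 : l + 1 + n < σ.length := by
        simp [List.length_drop] at h2
        omega
      by_cases hmem : l + 1 + n ∈ deconW v σ
      · rw [if_pos hmem]
        have hv2 : v ∈ σ[l+1+n] := by
          obtain ⟨_, h⟩ := (mem_deconW v σ (l+1+n)).mp hmem
          exact h
        exact Finset.insert_erase hv2
      · rw [if_neg hmem]
        apply Finset.erase_eq_of_notMem
        intro hv2
        exact hmem ((mem_deconW v σ (l+1+n)).mpr ⟨hn2, hv2⟩)
  · have hWe : deconW v σ = ∅ := Finset.not_nonempty_iff_eq_empty.mp hn
    have hno : ∀ s ∈ σ, v ∉ s := by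
      intro s hs hvs
      obtain ⟨m, hm⟩ := List.mem_iff_get.mp hs
      apply hn
      exact ⟨m, (mem_deconW v σ m).mpr ⟨m.isLt, by rw [← List.get_eq_getElem] at *; rwa [hm]⟩⟩
    have hne : σ ≠ [] := by
      intro hc; rw [hc] at hσlen; simp at hσlen
    have hRred : Rred v σ = σ.dropLast := Rred_of_not_mem v σ hno
    unfold consB deconS
    rw [dif_neg hn, dif_neg hn, hRred, List.getD_eq_getElem _ _ (by omega)]
    rw [← List.getLast_eq_getElem hne]
    exact List.dropLast_concat_getLast hne

lemma decon_mem (σ : List (Finset (Fin r))) (hv : (v:ℕ) = L + 1)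
    (hσlen : σ.length = L + 1) (hSB : SizeBounded σ)
    (hsupp : ∀ s ∈ σ, ∀ x ∈ s, (x:ℕ) ≤ L + 1) :
    (∀ x ∈ deconS v σ, (x:ℕ) ≤ L) ∧ deconW v σ ⊆ Finset.Icc (deconS v σ).card L := by
  have hne : σ ≠ [] := by intro hc; rw [hc] at hσlen; simp at hσlen
  constructor
  · intro x hx
    unfold deconS at hx
    split at hx
    · rename_i hn
      have hxv : x ≠ v := Finset.ne_of_mem_erase hx
      have hx2 := Finset.mem_of_mem_erase hx
      have hlmem := (deconW v σ).min'_mem hn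
      rw [mem_deconW] at hlmem
      obtain ⟨hl, -⟩ := hlmem
      rw [List.getD_eq_getElem _ _ hl] at hx2
      have := hsupp _ (List.getElem_mem _) x hx2
      have : (x:ℕ) ≠ L + 1 := fun hc => hxv (Fin.ext (by omega))
      omega
    · rename_i hn
      rw [List.getD_eq_getElem _ _ (by omega)] at hx
      have h1 := hsupp _ (List.getElem_mem _) x hx
      have hxv : x ≠ v := by
        intro rfl'
        subst rfl'
        exact hn ⟨σ.length - 1, (mem_deconW x σ _).mpr ⟨by omega, hx⟩⟩
      have : (x:ℕ) ≠ L + 1 := fun hc => hxv (Fin.ext (by omega))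
      omega
  · intro p hp
    have hn : (deconW v σ).Nonempty := ⟨p, hp⟩
    obtain ⟨hpσ, -⟩ := (mem_deconW v σ p).mp hp
    set l := (deconW v σ).min' hn with hldef
    have hlmem : l ∈ deconW v σ := (deconW v σ).min'_mem hn
    rw [mem_deconW] at hlmem
    obtain ⟨hl, hvl⟩ := hlmem
    have hc1 : (σ[l].erase v).card ≤ l := by
      rw [Finset.card_erase_of_mem hvl]
      have := sizeBounded_getElem hSB l hl
      omega
    have hScard : (deconS v σ).card ≤ l := by
      unfold deconS
      rw [dif_pos hn, List.getD_eq_getElem _ _ hl]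
      exact hc1
    have hlp : l ≤ p := (deconW v σ).min'_le p hp
    simp only [Finset.mem_Icc]
    omega

end Step


variable {r : ℕ}

def GA (L : ℕ) (M : Fin r → Fin r → Bool) : Prop :=
  (∀ i, M i i = false) ∧ (∀ i j, M i j = true → M j i = false) ∧
    (∀ i j, M i j = true → (i:ℕ) ≤ L ∧ (j:ℕ) ≤ L)

def consA (v : Fin r) (S T : Finset (Fin r)) (M : Fin r → Fin r → Bool) :
    Fin r → Fin r → Bool :=
  fun i j => if i = v then decide (j ∈ S) else if j = v then decide (i ∈ T) else M i j

def deconA (v : Fin r) (M : Fin r → Fin r → Bool) : Fin r → Fin r → Bool :=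
  fun i j => if i = v ∨ j = v then false else M i j

def deconSA (v : Fin r) (M : Fin r → Fin r → Bool) : Finset (Fin r) :=
  Finset.univ.filter fun j => M v j = true

def deconTA (v : Fin r) (M : Fin r → Fin r → Bool) : Finset (Fin r) :=
  Finset.univ.filter fun j => M j v = true

section StepA
variable {L : ℕ} (v : Fin r) (hv : (v:ℕ) = L + 1) (M : Fin r → Fin r → Bool)
  (S T : Finset (Fin r))
include hv

lemma decon_GA (hM : GA (L+1) M) : GA L (deconA v M) := by
  obtain ⟨h1, h2, h3⟩ := hM
  refine ⟨fun i => by simp [deconA, h1 i], fun i j hij => ?_, fun i j hij => ?_⟩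
  · simp only [deconA] at *
    split at hij
    · exact absurd hij (by simp)
    · rename_i h
      push_neg at h
      rw [if_neg (by tauto), h2 i j hij]
  · simp only [deconA] at hij
    split at hij
    · exact absurd hij (by simp)
    · rename_i h
      push_neg at h
      have h4 := h3 i j hij
      have hi : i ≠ v := h.1
      have hj : j ≠ v := h.2
      constructor
      · have : (i:ℕ) ≠ L + 1 := fun hc => hi (Fin.ext (by omega))
        omega
      · have : (j:ℕ) ≠ L + 1 := fun hc => hj (Fin.ext (by omega))
        omega

lemma deconSA_supp (hM : GA (L+1) M) : ∀ x ∈ deconSA v M, (x:ℕ) ≤ L := by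
  intro x hx
  simp only [deconSA, Finset.mem_filter] at hx
  have h4 := hM.2.2 v x hx.2
  have hxv : x ≠ v := fun hc => by
    have := hM.1 v; rw [hc] at hx; simp [this] at hx
  have : (x:ℕ) ≠ L + 1 := fun hc => hxv (Fin.ext (by omega))
  omega

lemma deconTA_supp (hM : GA (L+1) M) : ∀ x ∈ deconTA v M, (x:ℕ) ≤ L := by
  intro x hx
  simp only [deconTA, Finset.mem_filter] at hx
  have h4 := hM.2.2 x v hx.2
  have hxv : x ≠ v := fun hc => by
    have := hM.1 v; rw [hc] at hx; simp [this] at hx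
  have : (x:ℕ) ≠ L + 1 := fun hc => hxv (Fin.ext (by omega))
  omega

lemma decon_disj (hM : GA (L+1) M) : Disjoint (deconSA v M) (deconTA v M) := by
  rw [Finset.disjoint_left]
  intro x hxS hxT
  simp only [deconSA, deconTA, Finset.mem_filter] at hxS hxT
  have := hM.2.1 v x hxS.2
  rw [hxT.2] at this
  exact Bool.true_eq_false.mp this

lemma cons_GA (hM : GA L M) (hS : ∀ x ∈ S, (x:ℕ) ≤ L) (hT : ∀ x ∈ T, (x:ℕ) ≤ L)
    (hD : Disjoint S T) : GA (L+1) (consA v S T M) := by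
  have hvS : v ∉ S := fun hc => by have := hS v hc; omega
  have hvT : v ∉ T := fun hc => by have := hT v hc; omega
  have hMv : ∀ i j, i = v ∨ j = v → M i j = false := by
    intro i j hij
    rcases Bool.eq_false_or_eq_true (M i j) with h | h
    · have h4 := hM.2.2 i j h
      exfalso
      rcases hij with rfl | rfl <;> omega
    · exact h
  refine ⟨fun i => ?_, fun i j hij => ?_, fun i j hij => ?_⟩
  · simp only [consA]
    by_cases h : i = v
    · subst h; simp [hvS]
    · simp [h, hM.1 i]
  · simp only [consA] at hij ⊢
    by_cases hiv : i = v
    · rw [if_pos hiv] at hij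
      have hjS : j ∈ S := by simpa using hij
      have hjv : j ≠ v := fun hc => hvS (hc ▸ hjS)
      rw [if_neg hjv, if_pos hiv]
      simp only [decide_eq_false_iff_not]
      exact fun hjT => Finset.disjoint_left.mp hD hjS hjT
    · rw [if_neg hiv] at hij
      by_cases hjv : j = v
      · rw [if_pos hjv] at hij
        have hiT : i ∈ T := by simpa using hij
        rw [if_pos hjv]
        simp only [decide_eq_false_iff_not]
        exact fun hiS => Finset.disjoint_right.mp hD hiT hiS
      · rw [if_neg hjv] at hij
        rw [if_neg hjv, if_neg hiv]
        exact hM.2.1 i j hij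
  · simp only [consA] at hij
    by_cases hiv : i = v
    · rw [if_pos hiv] at hij
      have hjS : j ∈ S := by simpa using hij
      have : (i:ℕ) = L + 1 := by rw [hiv, hv]
      exact ⟨by omega, le_trans (hS j hjS) (by omega)⟩
    · rw [if_neg hiv] at hij
      by_cases hjv : j = v
      · rw [if_pos hjv] at hij
        have hiT : i ∈ T := by simpa using hij
        have : (j:ℕ) = L + 1 := by rw [hjv, hv]
        exact ⟨le_trans (hT i hiT) (by omega), by omega⟩
      · rw [if_neg hjv] at hij
        have := hM.2.2 i j hij
        omega

lemma cons_decon_A (hM : GA (L+1) M) :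
    consA v (deconSA v M) (deconTA v M) (deconA v M) = M := by
  funext i j
  simp only [consA, deconA, deconSA, deconTA]
  by_cases hiv : i = v
  · subst hiv
    rw [if_pos rfl]
    simp
  · rw [if_neg hiv]
    by_cases hjv : j = v
    · subst hjv
      rw [if_pos rfl]
      simp
    · rw [if_neg hjv, if_neg (by tauto)]

lemma decon_cons_A (hM : GA L M) (hS : ∀ x ∈ S, (x:ℕ) ≤ L) (hT : ∀ x ∈ T, (x:ℕ) ≤ L) :
    deconA v (consA v S T M) = M ∧ deconSA v (consA v S T M) = S ∧
      deconTA v (consA v S T M) = T := by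
  have hvS : v ∉ S := fun hc => by have := hS v hc; omega
  have hvT : v ∉ T := fun hc => by have := hT v hc; omega
  have hMv : ∀ i j, i = v ∨ j = v → M i j = false := by
    intro i j hij
    rcases Bool.eq_false_or_eq_true (M i j) with h | h
    · have h4 := hM.2.2 i j h
      exfalso
      rcases hij with rfl | rfl <;> omega
    · exact h
  refine ⟨?_, ?_, ?_⟩
  · funext i j
    simp only [deconA, consA]
    by_cases h : i = v ∨ j = v
    · rw [if_pos h]
      exact (hMv i j h).symm
    · push_neg at h
      rw [if_neg (by tauto), if_neg h.1, if_neg h.2]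
  · ext j
    simp only [deconSA, consA, Finset.mem_filter, if_pos rfl]
    simp
  · ext j
    simp only [deconTA, consA, Finset.mem_filter]
    constructor
    · rintro ⟨-, h⟩
      split at h
      · rename_i hjv; subst hjv; exact absurd (by simpa using h) hvS
      · simpa using h
    · intro hj
      refine ⟨Finset.mem_univ j, ?_⟩
      rw [if_neg (fun hc => by subst hc; exact hvT hj)]
      simpa using hj

lemma rho2_consA_ne (hM : GA L M) (j : Fin r) (hj : j ≠ v) :
    rho2 (consA v S T M) j = rho2 M j + (if j ∈ S then 1 else 0) := by
  have hMvj : M v j = false := by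
    rcases Bool.eq_false_or_eq_true (M v j) with h | h
    · have := hM.2.2 v j h; omega
    · exact h
  unfold rho2
  have hset : Finset.univ.filter (fun i => consA v S T M i j = true) =
      if j ∈ S then insert v (Finset.univ.filter (fun i => M i j = true))
        else Finset.univ.filter (fun i => M i j = true) := by
    ext i
    simp only [Finset.mem_filter, Finset.mem_univ, true_and]
    simp only [consA]
    by_cases hiv : i = v
    · subst hiv
      rw [if_pos rfl]
      by_cases hjS : j ∈ S <;> simp [hjS, hMvj, Finset.mem_insert]
    · rw [if_neg hiv, if_neg hj]
      by_cases hjS : j ∈ S <;> simp [hjS, Finset.mem_insert, hiv]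
  rw [hset]
  by_cases hjS : j ∈ S
  · rw [if_pos hjS, if_pos hjS, Finset.card_insert_of_notMem (by simp [hMvj])]
  · rw [if_neg hjS, if_neg hjS, Nat.add_zero]

lemma rho2_consA_v (hM : GA L M) (hS : ∀ x ∈ S, (x:ℕ) ≤ L) (hT : ∀ x ∈ T, (x:ℕ) ≤ L) :
    rho2 (consA v S T M) v = T.card := by
  have hvS : v ∉ S := fun hc => by have := hS v hc; omega
  have hvT : v ∉ T := fun hc => by have := hT v hc; omega
  unfold rho2
  congr 1
  ext i
  simp only [consA, Finset.mem_filter, Finset.mem_univ, true_and]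
  by_cases hiv : i = v
  · subst hiv
    simp [hvS, hvT]
  · rw [if_neg hiv]
    simp

lemma rho2_zero_of_supp {L' : ℕ} (hM : GA L' M) (j : Fin r) (hj : L' < (j:ℕ)) :
    rho2 M j = 0 := by
  unfold rho2
  rw [Finset.card_eq_zero]
  rw [Finset.filter_eq_empty_iff]
  intro i _
  intro hc
  have := hM.2.2 i j hc
  omega

end StepA

variable {r : ℕ}

def low (L : ℕ) : Finset (Fin r) := Finset.univ.filter (fun x => (x:ℕ) ≤ L)

lemma mem_low {L : ℕ} (x : Fin r) : x ∈ low L ↔ (x:ℕ) ≤ L := by simp [low]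

lemma card_low {L : ℕ} (hLr : L + 1 ≤ r) : (low L : Finset (Fin r)).card = L + 1 := by
  have himg : (low L : Finset (Fin r)) = (Finset.range (L+1)).image
      (fun n => if h : n < r then (⟨n, h⟩ : Fin r) else ⟨0, by omega⟩) := by
    ext x
    rw [mem_low]
    simp only [Finset.mem_image, Finset.mem_range]
    constructor
    · intro hx
      exact ⟨(x:ℕ), by omega, by simp [x.isLt]⟩
    · rintro ⟨n, hn, rfl⟩
      split
      · simpa using by omega
      · simpa using by omega
  rw [himg, Finset.card_image_of_injOn, Finset.card_range]
  intro a ha b hb he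
  simp only [Finset.mem_coe, Finset.mem_range] at ha hb
  have ha' : a < r := by omega
  have hb' : b < r := by omega
  simp only [dif_pos ha', dif_pos hb'] at he
  exact congrArg Fin.val he

lemma card_eq_trans {L : ℕ} (hLr : L + 1 ≤ r) {S : Finset (Fin r)} (hS : S ⊆ low L) :
    ((low L \ S : Finset (Fin r))).card = (Finset.Icc S.card L).card := by
  rw [Finset.card_sdiff_of_subset hS, card_low hLr, Nat.card_Icc]

noncomputable def transST (L : ℕ) (S T : Finset (Fin r)) : Finset ℕ :=
  if h : ((low L \ S : Finset (Fin r))).card = (Finset.Icc S.card L).card then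
    T.image (fun t => if ht : t ∈ low L \ S then
      ((Finset.equivOfCardEq h ⟨t, ht⟩ : {x // x ∈ Finset.Icc S.card L}) : ℕ) else 0)
  else ∅

noncomputable def transWS (L : ℕ) (S : Finset (Fin r)) (W : Finset ℕ) : Finset (Fin r) :=
  if h : 0 < r ∧ ((low L \ S : Finset (Fin r))).card = (Finset.Icc S.card L).card then
    W.image (fun w => if hw : w ∈ Finset.Icc S.card L then
      ((Finset.equivOfCardEq h.2).symm ⟨w, hw⟩ : {x // x ∈ (low L \ S : Finset (Fin r))})
      else (⟨0, h.1⟩ : Fin r))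
  else ∅

section Trans
variable {L : ℕ} (hLr : L + 1 ≤ r) {S T : Finset (Fin r)} {W : Finset ℕ}
  (hS : S ⊆ low L)
include hLr hS

lemma transST_subset (hT : T ⊆ low L \ S) : transST L S T ⊆ Finset.Icc S.card L := by
  rw [transST, dif_pos (card_eq_trans hLr hS)]
  intro w hw
  simp only [Finset.mem_image] at hw
  obtain ⟨t, ht, rfl⟩ := hw
  rw [dif_pos (hT ht)]
  exact (Finset.equivOfCardEq (card_eq_trans hLr hS) ⟨t, hT ht⟩).2

lemma transST_card (hT : T ⊆ low L \ S) : (transST L S T).card = T.card := by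
  rw [transST, dif_pos (card_eq_trans hLr hS)]
  apply Finset.card_image_of_injOn
  intro t1 h1 t2 h2 he
  simp only [Finset.mem_coe] at h1 h2
  simp only [dif_pos (hT h1), dif_pos (hT h2)] at he
  have := (Finset.equivOfCardEq (card_eq_trans hLr hS)).injective (Subtype.ext he)
  exact congrArg Subtype.val this

lemma transWS_transST (hT : T ⊆ low L \ S) : transWS L S (transST L S T) = T := by
  have hcard := card_eq_trans hLr hS
  have hr : 0 < r := by omega
  rw [transST, dif_pos hcard, transWS, dif_pos ⟨hr, hcard⟩, Finset.image_image]
  rw [show T.image _ = T.image id from Finset.image_congr ?_, Finset.image_id]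
  intro t ht
  simp only [Function.comp_apply]
  rw [dif_pos (hT ht)]
  rw [dif_pos (Finset.equivOfCardEq hcard ⟨t, hT ht⟩).2]
  have : (⟨((Finset.equivOfCardEq hcard ⟨t, hT ht⟩) : {x // x ∈ Finset.Icc S.card L}).1,
      (Finset.equivOfCardEq hcard ⟨t, hT ht⟩).2⟩ : {x // x ∈ Finset.Icc S.card L}) =
      Finset.equivOfCardEq hcard ⟨t, hT ht⟩ := Subtype.ext rfl
  rw [this, Equiv.symm_apply_apply]
  rfl

lemma transWS_subset (hW : W ⊆ Finset.Icc S.card L) : transWS L S W ⊆ low L \ S := by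
  have hcard := card_eq_trans hLr hS
  have hr : 0 < r := by omega
  rw [transWS, dif_pos ⟨hr, hcard⟩]
  intro t ht
  simp only [Finset.mem_image] at ht
  obtain ⟨w, hw, rfl⟩ := ht
  rw [dif_pos (hW hw)]
  exact ((Finset.equivOfCardEq hcard).symm ⟨w, hW hw⟩).2

lemma transWS_card (hW : W ⊆ Finset.Icc S.card L) : (transWS L S W).card = W.card := by
  have hcard := card_eq_trans hLr hS
  have hr : 0 < r := by omega
  rw [transWS, dif_pos ⟨hr, hcard⟩]
  apply Finset.card_image_of_injOn
  intro w1 h1 w2 h2 he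
  simp only [Finset.mem_coe] at h1 h2
  simp only [dif_pos (hW h1), dif_pos (hW h2)] at he
  have := (Finset.equivOfCardEq hcard).symm.injective (Subtype.ext he)
  exact congrArg Subtype.val this

lemma transST_transWS (hW : W ⊆ Finset.Icc S.card L) : transST L S (transWS L S W) = W := by
  have hcard := card_eq_trans hLr hS
  have hr : 0 < r := by omega
  rw [transWS, dif_pos ⟨hr, hcard⟩, transST, dif_pos hcard, Finset.image_image]
  rw [show W.image _ = W.image id from Finset.image_congr ?_, Finset.image_id]
  intro w hw
  simp only [Function.comp_apply]
  rw [dif_pos (hW hw)]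
  rw [dif_pos ((Finset.equivOfCardEq hcard).symm ⟨w, hW hw⟩).2]
  have : (⟨((Finset.equivOfCardEq hcard).symm ⟨w, hW hw⟩).1,
      ((Finset.equivOfCardEq hcard).symm ⟨w, hW hw⟩).2⟩ :
        {x // x ∈ (low L \ S : Finset (Fin r))}) =
      (Finset.equivOfCardEq hcard).symm ⟨w, hW hw⟩ := Subtype.ext rfl
  rw [this, Equiv.apply_symm_apply]
  rfl

end Trans

variable {r : ℕ}

lemma good_succ {L : ℕ} (σ : List (Finset (Fin r))) :
    Good (L+1) σ ↔ σ.length = L+1 ∧ SizeBounded σ ∧ (∀ s ∈ σ, ∀ x ∈ s, (x:ℕ) ≤ L+1) ∧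
      ∀ h : L+1 < r, Good L (Rred ⟨L+1, h⟩ σ) := Iff.rfl

lemma good_length {L : ℕ} {σ : List (Finset (Fin r))} (h : Good L σ) : σ.length = L := by
  cases L with
  | zero => rw [show σ = [] from h]; rfl
  | succ L => exact h.1

lemma good_SB {L : ℕ} {σ : List (Finset (Fin r))} (h : Good L σ) : SizeBounded σ := by
  cases L with
  | zero => rw [show σ = [] from h]; intro i hi; simp at hi
  | succ L => exact h.2.1

lemma good_supp {L : ℕ} {σ : List (Finset (Fin r))} (h : Good L σ) :
    ∀ s ∈ σ, ∀ x ∈ s, (x:ℕ) ≤ L := by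
  cases L with
  | zero => rw [show σ = [] from h]; intro s hs; simp at hs
  | succ L => exact h.2.2.1

lemma rho1_zero {L : ℕ} {σ : List (Finset (Fin r))}
    (hsupp : ∀ s ∈ σ, ∀ x ∈ s, (x:ℕ) ≤ L) (j : Fin r) (hj : L < (j:ℕ)) :
    rho1 σ j = 0 := by
  apply List.countP_eq_zero.mpr
  intro s hs
  simp only [decide_eq_true_eq]
  intro hmem
  have := hsupp s hs j hmem
  omega

set_option maxHeartbeats 2000000 in
lemma main_step : ∀ L, L < r →
    ∃ f : {M : Fin r → Fin r → Bool // GA L M} ≃ {σ : List (Finset (Fin r)) // Good L σ},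
      ∀ M (j : Fin r), rho2 M.1 j = rho1 (f M).1 j := by
  intro L
  induction L with
  | zero =>
    intro hr
    refine ⟨{
      toFun := fun _ => ⟨[], rfl⟩
      invFun := fun _ => ⟨fun _ _ => false,
        ⟨fun i => rfl, fun i j h => by simp at h, fun i j h => by simp at h⟩⟩
      left_inv := ?_
      right_inv := ?_ }, ?_⟩
    · rintro ⟨M, hM⟩
      apply Subtype.ext
      funext i j
      show false = M i j
      rcases Bool.eq_false_or_eq_true (M i j) with h | h
      · obtain ⟨hi, hj⟩ := hM.2.2 i j h
        have hij : i = j := Fin.ext (by omega)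
        rw [hij] at h
        rw [hM.1 j] at h
        exact absurd h (by simp)
      · exact h.symm
    · rintro ⟨σ, hσ⟩
      exact Subtype.ext (show σ = [] from hσ).symm
    · intro M j
      show rho2 M.1 j = rho1 [] j
      rw [show rho1 ([] : List (Finset (Fin r))) j = 0 from rfl]
      unfold rho2
      rw [Finset.card_eq_zero, Finset.filter_eq_empty_iff]
      intro i _ hc
      obtain ⟨hi, hj2⟩ := M.2.2.2 i j hc
      have hij : i = j := Fin.ext (by omega)
      rw [hij] at hc
      have := M.2.1 j
      rw [hc] at this
      exact absurd this (by simp)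
  | succ L ih =>
    intro hL1
    obtain ⟨f, hf⟩ := ih (by omega)
    have hLr : L + 1 ≤ r := by omega
    set v : Fin r := ⟨L+1, hL1⟩ with hvdef
    have hv : (v:ℕ) = L + 1 := rfl
    -- forward membership
    have fwd_mem : ∀ (M : Fin r → Fin r → Bool), GA (L+1) M →
        ∀ (τ : List (Finset (Fin r))), Good L τ →
        Good (L+1) (consB v (deconSA v M) (transST L (deconSA v M) (deconTA v M)) τ) := by
      intro M hM τ hτ
      have hSsupp := deconSA_supp v hv M hM
      have hSlow : deconSA v M ⊆ low L := fun x hx => (mem_low x).mpr (hSsupp x hx)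
      have hTsub : deconTA v M ⊆ low L \ deconSA v M := by
        intro t ht
        rw [Finset.mem_sdiff, mem_low]
        exact ⟨deconTA_supp v hv M hM t ht, Finset.disjoint_right.mp (decon_disj v hv M hM) ht⟩
      have hWsub := transST_subset hLr hSlow hTsub
      rw [good_succ]
      refine ⟨consB_length v τ _ _ (good_length hτ) hWsub,
        consB_sizeBounded v τ _ _ (good_length hτ) hWsub hLr (good_SB hτ) hSsupp,
        consB_supp v τ _ _ hv (good_supp hτ) hSsupp, ?_⟩
      intro h
      rw [show (⟨L+1, h⟩ : Fin r) = v from rfl]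
      rw [Rred_consB v τ _ _ hv (good_supp hτ) (fun hc => by have := hSsupp v hc; omega)]
      exact hτ
    -- backward membership
    have bwd_mem : ∀ (σ : List (Finset (Fin r))), Good (L+1) σ →
        ∀ (M' : Fin r → Fin r → Bool), GA L M' →
        GA (L+1) (consA v (deconS v σ) (transWS L (deconS v σ) (deconW v σ)) M') := by
      intro σ hσ M' hM'
      obtain ⟨hσlen, hσSB, hσsupp, -⟩ := (good_succ σ).mp hσ
      obtain ⟨hSsupp, hWsub⟩ := decon_mem v σ hv hσlen hσSB hσsupp
      have hSlow : deconS v σ ⊆ low L := fun x hx => (mem_low x).mpr (hSsupp x hx)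
      have hTsub := transWS_subset hLr hSlow hWsub
      apply cons_GA v hv M' _ _ hM' hSsupp
      · intro x hx
        have := hTsub hx
        rw [Finset.mem_sdiff, mem_low] at this
        exact this.1
      · rw [Finset.disjoint_right]
        intro a ha
        have := hTsub ha
        rw [Finset.mem_sdiff] at this
        exact this.2
    refine ⟨{
      toFun := fun M => ⟨consB v (deconSA v M.1)
        (transST L (deconSA v M.1) (deconTA v M.1))
        (f ⟨deconA v M.1, decon_GA v hv M.1 M.2⟩).1,
        fwd_mem M.1 M.2 _ (f ⟨deconA v M.1, decon_GA v hv M.1 M.2⟩).2⟩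
      invFun := fun σ => ⟨consA v (deconS v σ.1)
        (transWS L (deconS v σ.1) (deconW v σ.1))
        (f.symm ⟨Rred v σ.1, ((good_succ σ.1).mp σ.2).2.2.2 hL1⟩).1,
        bwd_mem σ.1 σ.2 _ (f.symm ⟨Rred v σ.1, ((good_succ σ.1).mp σ.2).2.2.2 hL1⟩).2⟩
      left_inv := ?_
      right_inv := ?_ }, ?_⟩
    · -- left inverse
      rintro ⟨M, hM⟩
      apply Subtype.ext
      dsimp only
      set S := deconSA v M with hSdef
      set T := deconTA v M with hTdef
      set τ := f ⟨deconA v M, decon_GA v hv M hM⟩ with hτdef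
      set W := transST L S T with hWdef
      set σ := consB v S W τ.1 with hσdef
      have hSsupp := deconSA_supp v hv M hM
      have hSlow : S ⊆ low L := fun x hx => (mem_low x).mpr (hSsupp x hx)
      have hTsub : T ⊆ low L \ S := by
        intro t ht
        rw [Finset.mem_sdiff, mem_low]
        exact ⟨deconTA_supp v hv M hM t ht, Finset.disjoint_right.mp (decon_disj v hv M hM) ht⟩
      have hWsub := transST_subset hLr hSlow hTsub
      have hτlen := good_length τ.2
      have hτsupp := good_supp τ.2
      have hSeq : deconS v σ = S :=
        deconS_consB v τ.1 S W hv hτlen hWsub hτsupp hSsupp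
      have hWeq : deconW v σ = W :=
        deconW_consB v τ.1 S W hv hτlen hWsub hτsupp hSsupp
      have hReq : Rred v σ = τ.1 :=
        Rred_consB v τ.1 S W hv hτsupp (fun hc => by have := hSsupp v hc; omega)
      rw [hSeq, hWeq]
      have hMAeq : ∀ (pf : Good L (Rred v σ)), (f.symm ⟨Rred v σ, pf⟩).1 = deconA v M := by
        intro pf
        have hsub : (⟨Rred v σ, pf⟩ : {τ' : List (Finset (Fin r)) // Good L τ'}) = τ :=
          Subtype.ext hReq
        rw [hsub, hτdef, Equiv.symm_apply_apply]
      rw [hMAeq, transWS_transST hLr hSlow hTsub]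
      exact (cons_decon_A v hv M hM)
    · -- right inverse
      rintro ⟨σ, hσ⟩
      apply Subtype.ext
      dsimp only
      obtain ⟨hσlen, hσSB, hσsupp, -⟩ := (good_succ σ).mp hσ
      set S := deconS v σ with hSdef
      set W := deconW v σ with hWdef
      set M' := f.symm ⟨Rred v σ, ((good_succ σ).mp hσ).2.2.2 hL1⟩ with hM'def
      set T := transWS L S W with hTdef
      set M := consA v S T M'.1 with hMdef
      obtain ⟨hSsupp, hWsub⟩ := decon_mem v σ hv hσlen hσSB hσsupp
      have hSlow : S ⊆ low L := fun x hx => (mem_low x).mpr (hSsupp x hx)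
      have hTsub := transWS_subset hLr hSlow hWsub
      have hTsupp : ∀ x ∈ T, (x:ℕ) ≤ L := by
        intro x hx
        have := hTsub hx
        rw [Finset.mem_sdiff, mem_low] at this
        exact this.1
      obtain ⟨hdA, hdS, hdT⟩ := decon_cons_A v hv M'.1 S T M'.2 hSsupp hTsupp
      rw [hdS, hdT]
      have hfeq : ∀ (pf : GA L (deconA v M)), (f ⟨deconA v M, pf⟩).1 = Rred v σ := by
        intro pf
        have hsub : (⟨deconA v M, pf⟩ :
            {M'' : Fin r → Fin r → Bool // GA L M''}) = M' := Subtype.ext hdA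
        rw [hsub, hM'def, Equiv.apply_symm_apply]
      rw [hfeq, transST_transWS hLr hSlow hWsub]
      exact cons_decon v σ hσlen hσSB
    · -- degrees
      rintro ⟨M, hM⟩ j
      dsimp only
      set S := deconSA v M with hSdef
      set T := deconTA v M with hTdef
      set τ := f ⟨deconA v M, decon_GA v hv M hM⟩ with hτdef
      set W := transST L S T with hWdef
      have hSsupp := deconSA_supp v hv M hM
      have hTsupp := deconTA_supp v hv M hM
      have hSlow : S ⊆ low L := fun x hx => (mem_low x).mpr (hSsupp x hx)
      have hTsub : T ⊆ low L \ S := by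
        intro t ht
        rw [Finset.mem_sdiff, mem_low]
        exact ⟨hTsupp t ht, Finset.disjoint_right.mp (decon_disj v hv M hM) ht⟩
      have hWsub := transST_subset hLr hSlow hTsub
      have hτlen := good_length τ.2
      have hτsupp := good_supp τ.2
      have hMeq : M = consA v S T (deconA v M) := (cons_decon_A v hv M hM).symm
      have hIH : rho2 (deconA v M) j = rho1 τ.1 j :=
        hf ⟨deconA v M, decon_GA v hv M hM⟩ j
      rcases Nat.lt_trichotomy (j:ℕ) (L+1) with hj | hj | hj
      · have hjv : j ≠ v := fun hc => by rw [hc] at hj; omega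
        rw [show rho2 M j = rho2 (consA v S T (deconA v M)) j from by rw [← hMeq]]
        rw [rho2_consA_ne v hv (deconA v M) S T (decon_GA v hv M hM) j hjv]
        show _ = rho1 (consB v S W τ.1) j
        unfold rho1
        rw [rho1_consB_ne v τ.1 S W hv j hjv]
        have hIH' : rho2 (deconA v M) j = τ.1.countP (fun s => decide (j ∈ s)) := hIH
        rw [hIH']
      · have hjv : j = v := Fin.ext (by omega)
        rw [hjv]
        rw [show rho2 M v = rho2 (consA v S T (deconA v M)) v from by rw [← hMeq]]
        rw [rho2_consA_v v hv (deconA v M) S T (decon_GA v hv M hM) hSsupp hTsupp]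
        show T.card = rho1 (consB v S W τ.1) v
        unfold rho1
        rw [rho1_consB_v v τ.1 S W hv hτlen hWsub hτsupp hSsupp]
        have : W.card = T.card := by
          rw [hWdef]
          exact transST_card hLr hSlow hTsub
        omega
      · rw [rho2_zero_of_supp v hv M hM j (by omega)]
        exact (rho1_zero (consB_supp v τ.1 S W hv hτsupp hSsupp) j (by omega)).symm
end DSG

/-- There is a bijection from adjacency matrices of directed graphs on `r` vertices
with no loops and no 2-cycles to `B(r-1, r)`, preserving in-degree sequences. -/
theorem dsg_encoding_bijection (r : ℕ) (hr : 1 ≤ r) :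
    ∃ f : {M : Fin r → Fin r → Bool //
            (∀ i, M i i = false) ∧ ∀ i j, M i j = true → M j i = false} ≃
          {σ : List (Finset (Fin r)) // MemB r σ},
      ∀ M, ∀ j : Fin r, rho2 M.1 j = rho1 (f M).1 j := by
  obtain ⟨f0, hf0⟩ := DSG.main_step (r := r) (r-1) (by omega)
  have hiffM : ∀ M : Fin r → Fin r → Bool,
      ((∀ i, M i i = false) ∧ ∀ i j, M i j = true → M j i = false) ↔ DSG.GA (r-1) M := by
    intro M
    constructor
    · rintro ⟨h1, h2⟩
      exact ⟨h1, h2, fun i j _ => ⟨by have := i.isLt; omega, by have := j.isLt; omega⟩⟩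
    · rintro ⟨h1, h2, -⟩
      exact ⟨h1, h2⟩
  refine ⟨(Equiv.subtypeEquivRight hiffM).trans
    (f0.trans (Equiv.subtypeEquivRight (fun σ => (DSG.memB_iff_good hr σ).symm))), ?_⟩
  intro M j
  calc rho2 M.1 j = rho1 (f0 (Equiv.subtypeEquivRight hiffM M)).1 j :=
        hf0 (Equiv.subtypeEquivRight hiffM M) j
    _ = _ := rfl
end
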